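/- arXiv:2102.08342 — 7 statements merged into one kernel-verified Lean document; each statement's English description precedes it below -/
import Mathlib

section
/- Let G = (V,E) be a graph with maximum degree at most Δ. For any vertex v ∈ V and any integer ℓ ≥ 2, the number of 2-trees in G which contain v and have size exactly ℓ is at most (e·Δ²)^{ℓ−1}/2. -/
open Finset

/-- The auxiliary graph of a set `T` of vertices of `G`: two distinct vertices of `T` are
joined whenever they are at distance at most 2 in `G` (i.e. adjacent or having a common
neighbour). -/
def auxTwoGraph {V : Type*} (G : SimpleGraph V) (T : Finset V) : SimpleGraph T where
  Adj a b := a ≠ b ∧ (G.Adj a b ∨ ∃ w : V, G.Adj a w ∧ G.Adj w b)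
  symm := by
    refine ⟨?_⟩
    rintro a b ⟨hab, h⟩
    refine ⟨hab.symm, ?_⟩
    rcases h with h | ⟨w, h1, h2⟩
    · exact Or.inl h.symm
    · exact Or.inr ⟨w, h2.symm, h1.symm⟩
  loopless := by refine ⟨?_⟩; rintro a ⟨h, -⟩; exact h rfl

/-- `T` is a 2-tree of `G`: distinct vertices of `T` are at distance ≥ 2 in `G`
(equivalently, `T` is an independent set of `G`), and the auxiliary graph on `T` joining
vertices at distance ≤ 2 is connected. -/
def IsTwoTree {V : Type*} (G : SimpleGraph V) (T : Finset V) : Prop :=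
  (∀ u ∈ T, ∀ v ∈ T, u ≠ v → ¬ G.Adj u v) ∧ (auxTwoGraph G T).Connected


open Nat List in
section
private lemma binom_bound (d k : ℕ) (hk : 1 ≤ k) :
    (((k*d).choose k : ℝ)) ≤ (Real.exp 1 * d)^k / 2 := by
  have h1 : (((k*d).choose k : ℝ)) ≤ ((k*d : ℕ) : ℝ)^k / (k)! :=
    Nat.choose_le_pow_div k (k*d)
  have hfac : 2 * ((k:ℝ)^k / (k)!) ≤ Real.exp k := by
    have hS := Real.sum_le_exp_of_nonneg (x := (k:ℝ)) (by positivity) (k+1)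
    refine le_trans ?_ hS
    have hsub : ({k-1, k} : Finset ℕ) ⊆ range (k+1) := by
      intro i hi; simp at hi; rcases hi with h|h <;> simp [h] <;> omega
    have h2 : ∑ i ∈ ({k-1, k} : Finset ℕ), (k:ℝ)^i / i ! ≤ ∑ i ∈ range (k+1), (k:ℝ)^i / i ! := by
      apply Finset.sum_le_sum_of_subset_of_nonneg hsub
      intro i _ _; positivity
    refine le_trans ?_ h2
    rw [Finset.sum_pair (by omega)]
    have hkeq : (k:ℝ)^(k-1)/(k-1)! = (k:ℝ)^k/(k)! := by
      obtain ⟨m, rfl⟩ : ∃ m, k = m + 1 := ⟨k-1, by omega⟩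
      rw [Nat.factorial_succ]
      simp only [Nat.add_sub_cancel]
      push_cast
      rw [pow_succ]
      have h5 : ((m:ℝ)+1) ≠ 0 := by positivity
      have h6 : ((m)! : ℝ) ≠ 0 := by positivity
      field_simp
    rw [hkeq]; ring_nf; rfl
  have hfpos : (0:ℝ) < ((k)! : ℝ) := by positivity
  have hd0 : (0:ℝ) ≤ (d:ℝ)^k := by positivity
  refine h1.trans ?_
  rw [mul_pow, Real.exp_one_pow]
  push_cast
  rw [mul_pow]
  have h4 : (k:ℝ)^k / (k)! * (d:ℝ)^k ≤ Real.exp k * (d:ℝ)^k / 2 := by nlinarith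
  calc (k:ℝ)^k * (d:ℝ)^k / (k)! = (k:ℝ)^k / (k)! * (d:ℝ)^k := by ring
    _ ≤ Real.exp k * (d:ℝ)^k / 2 := h4



section TwoTreeProof
open List

noncomputable section
namespace TwoTreeAux
variable {V : Type*} [Fintype V] [DecidableEq V]

/-- enumeration of (a superset of) the neighbours of `u` -/
def nbV (H : SimpleGraph V) [DecidableRel H.Adj] (u : V) (k : ℕ) : V :=
  ((H.neighborFinset u).toList).getD k u

lemma exists_nbV {H : SimpleGraph V} [DecidableRel H.Adj] {u w : V} (h : H.Adj u w) :
    ∃ k, k < H.degree u ∧ nbV H u k = w := by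
  have hw : w ∈ (H.neighborFinset u).toList := by
    rw [Finset.mem_toList, SimpleGraph.mem_neighborFinset]; exact h
  obtain ⟨i, hi, hget⟩ := List.mem_iff_getElem.mp hw
  refine ⟨i, ?_, ?_⟩
  · rwa [Finset.length_toList] at hi
  · rw [nbV, List.getD_eq_getElem _ _ hi, hget]

def kmin (s : Finset ℕ) : ℕ := if h : s.Nonempty then s.min' h else 0

lemma kmin_mem {s : Finset ℕ} (h : s.Nonempty) : kmin s ∈ s := by
  rw [kmin, dif_pos h]; exact Finset.min'_mem s h

lemma kmin_le {s : Finset ℕ} {a : ℕ} (h : a ∈ s) : kmin s ≤ a := by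
  rw [kmin, dif_pos ⟨a, h⟩]; exact Finset.min'_le s a h

variable (H : SimpleGraph V) [DecidableRel H.Adj] (d : ℕ) (v : V) (T : Finset V)

def cand (l : List V) : Finset ℕ :=
  (Finset.range (l.length * d)).filter fun m =>
    H.Adj (l.getD (m / d) v) (nbV H (l.getD (m / d) v) (m % d)) ∧
    nbV H (l.getD (m / d) v) (m % d) ∈ T ∧ nbV H (l.getD (m / d) v) (m % d) ∉ l

lemma mem_cand {l : List V} {m : ℕ} :
    m ∈ cand H d v T l ↔ m < l.length * d ∧
      H.Adj (l.getD (m / d) v) (nbV H (l.getD (m / d) v) (m % d)) ∧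
      nbV H (l.getD (m / d) v) (m % d) ∈ T ∧ nbV H (l.getD (m / d) v) (m % d) ∉ l := by
  simp [cand]

/-- the vertex that candidate `m` points to -/
def tgt (l : List V) (m : ℕ) : V := nbV H (l.getD (m / d) v) (m % d)

def step (l : List V) : List V :=
  if h : (cand H d v T l).Nonempty then l ++ [tgt H d v l (kmin (cand H d v T l))] else l

def bfs (n : ℕ) : List V := (step H d v T)^[n] [v]

def key (n : ℕ) : ℕ := kmin (cand H d v T (bfs H d v T n))

def code (k : ℕ) : Finset ℕ := (Finset.range k).image (key H d v T)

lemma bfs_succ (n : ℕ) : bfs H d v T (n+1) = step H d v T (bfs H d v T n) :=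
  Function.iterate_succ_apply' _ _ _

lemma bfs_zero : bfs H d v T 0 = [v] := rfl


variable {H d v T}

lemma tgt_mem_T {l : List V} (h : (cand H d v T l).Nonempty) :
    tgt H d v l (kmin (cand H d v T l)) ∈ T :=
  ((mem_cand H d v T).mp (kmin_mem h)).2.2.1

lemma tgt_not_mem {l : List V} (h : (cand H d v T l).Nonempty) :
    tgt H d v l (kmin (cand H d v T l)) ∉ l :=
  ((mem_cand H d v T).mp (kmin_mem h)).2.2.2

lemma mem_T_of_mem_bfs (hv : v ∈ T) (n : ℕ) : ∀ x ∈ bfs H d v T n, x ∈ T := by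
  induction n with
  | zero => intro x hx; rw [bfs_zero, List.mem_singleton] at hx; exact hx ▸ hv
  | succ n ih =>
    intro x hx
    rw [bfs_succ, step] at hx
    split at hx
    · rcases List.mem_append.mp hx with h | h
      · exact ih x h
      · simp only [List.mem_singleton] at h
        exact h ▸ tgt_mem_T ‹_›
    · exact ih x hx

lemma nodup_bfs (n : ℕ) : (bfs H d v T n).Nodup := by
  induction n with
  | zero => simp [bfs_zero]
  | succ n ih =>
    rw [bfs_succ, step]
    split
    · exact List.Nodup.append ih (List.nodup_singleton _)
        (by intro a ha hb; simp only [List.mem_singleton] at hb; exact tgt_not_mem ‹_› (hb ▸ ha))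
    · exact ih

lemma v_mem_bfs (n : ℕ) : v ∈ bfs H d v T n := by
  induction n with
  | zero => simp [bfs_zero]
  | succ n ih =>
    rw [bfs_succ, step]
    split
    · exact List.mem_append.mpr (Or.inl ih)
    · exact ih


lemma crossing {α : Type*} {R : α → α → Prop} {s : Set α} {a b : α}
    (h : Relation.ReflTransGen R a b) (ha : a ∈ s) (hb : b ∉ s) :
    ∃ x y, x ∈ s ∧ y ∉ s ∧ R x y := by
  induction h with
  | refl => exact absurd ha hb
  | tail _ hbc ih =>
    rename_i b c _
    by_cases hbs : b ∈ s
    · exact ⟨b, c, hbs, hb, hbc⟩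
    · exact ih hbs

lemma cand_nonempty (hd : ∀ u, H.degree u ≤ d)
    (hvl : v ∈ T)
    (hconn : ∀ u ∈ T, Relation.ReflTransGen (fun a b => a ∈ T ∧ b ∈ T ∧ H.Adj a b) v u)
    {l : List V} (hvml : v ∈ l) {u : V} (huT : u ∈ T) (hul : u ∉ l) :
    (cand H d v T l).Nonempty := by
  obtain ⟨a, b, hal, hbl, haT, hbT, hab⟩ :
      ∃ a b, a ∈ l ∧ b ∉ l ∧ a ∈ T ∧ b ∈ T ∧ H.Adj a b := by
    obtain ⟨a, b, hal, hbl, hR⟩ := crossing (s := {x | x ∈ l}) (hconn u huT) hvml hul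
    exact ⟨a, b, hal, hbl, hR.1, hR.2.1, hR.2.2⟩
  obtain ⟨i, hi, hget⟩ := List.mem_iff_getElem.mp hal
  obtain ⟨kk, hkd, hnb⟩ := exists_nbV hab
  have hkd' : kk < d := lt_of_lt_of_le hkd (hd a)
  have hd0 : 0 < d := by omega
  refine ⟨d * i + kk, (mem_cand H d v T).mpr ?_⟩
  have hdiv : (d * i + kk) / d = i := by
    rw [Nat.mul_add_div hd0, Nat.div_eq_of_lt hkd', Nat.add_zero]
  have hmod : (d * i + kk) % d = kk := by
    rw [Nat.mul_add_mod, Nat.mod_eq_of_lt hkd']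
  have hgetD : l.getD ((d * i + kk) / d) v = a := by
    rw [hdiv, List.getD_eq_getElem _ _ hi, hget]
  refine ⟨?_, ?_, ?_, ?_⟩
  · calc d * i + kk < d * i + d := by omega
      _ = d * (i + 1) := by ring
      _ ≤ d * l.length := Nat.mul_le_mul_left d hi
      _ = l.length * d := Nat.mul_comm _ _
  · rw [hgetD, hmod, hnb]; exact hab
  · rw [hgetD, hmod, hnb]; exact hbT
  · rw [hgetD, hmod, hnb]; exact hbl


lemma exists_missing {l : List V} (hsub : ∀ x ∈ l, x ∈ T) (hnd : l.Nodup)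
    (hlt : l.length < T.card) : ∃ u ∈ T, u ∉ l := by
  have hsub' : l.toFinset ⊆ T := fun x hx => hsub x (List.mem_toFinset.mp hx)
  have hcard : l.toFinset.card < T.card := by
    rwa [List.toFinset_card_of_nodup hnd]
  have hne : (T \ l.toFinset).Nonempty := by
    rw [← Finset.card_pos, Finset.card_sdiff_of_subset hsub']
    omega
  obtain ⟨u, hu⟩ := hne
  rw [Finset.mem_sdiff, List.mem_toFinset] at hu
  exact ⟨u, hu.1, hu.2⟩

section hyps
variable (hd : ∀ u, H.degree u ≤ d) (hv : v ∈ T) {k : ℕ} (hcard : T.card = k + 1)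
  (hconn : ∀ u ∈ T, Relation.ReflTransGen (fun a b => a ∈ T ∧ b ∈ T ∧ H.Adj a b) v u)

include hd hv hcard hconn

lemma length_bfs : ∀ n, n ≤ k → (bfs H d v T n).length = n + 1 := by
  intro n
  induction n with
  | zero => intro _; rw [bfs_zero]; rfl
  | succ n ih =>
    intro hn
    have hlen : (bfs H d v T n).length = n + 1 := ih (by omega)
    obtain ⟨u, huT, hul⟩ := exists_missing (T := T) (l := bfs H d v T n)
      (mem_T_of_mem_bfs hv n) (nodup_bfs n) (by omega)
    have hne := cand_nonempty hd hv hconn (v_mem_bfs n) huT hul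
    rw [bfs_succ, step, dif_pos hne, List.length_append, hlen]
    rfl

lemma cand_bfs_nonempty {n : ℕ} (hn : n < k) : (cand H d v T (bfs H d v T n)).Nonempty := by
  have hlen := length_bfs hd hv hcard hconn n (by omega)
  obtain ⟨u, huT, hul⟩ := exists_missing (T := T) (l := bfs H d v T n)
    (mem_T_of_mem_bfs hv n) (nodup_bfs n) (by omega)
  exact cand_nonempty hd hv hconn (v_mem_bfs n) huT hul

lemma bfs_toFinset : (bfs H d v T k).toFinset = T := by
  apply Finset.eq_of_subset_of_card_le
  · intro x hx; exact mem_T_of_mem_bfs hv k x (List.mem_toFinset.mp hx)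
  · rw [List.toFinset_card_of_nodup (nodup_bfs k), length_bfs hd hv hcard hconn k le_rfl, hcard]

end hyps

lemma cand_step_gt {l : List V} (h : (cand H d v T l).Nonempty) {m : ℕ}
    (hm : m ∈ cand H d v T (step H d v T l)) : kmin (cand H d v T l) < m := by
  set κ := kmin (cand H d v T l) with hκ
  have hκmem := (mem_cand H d v T).mp (kmin_mem h)
  have hκlt : κ < l.length * d := hκmem.1
  rw [step, dif_pos h] at hm
  set w := tgt H d v l κ with hw
  rw [mem_cand] at hm
  obtain ⟨hm1, hm2, hm3, hm4⟩ := hm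
  have hd0 : 0 < d := by
    rcases Nat.eq_zero_or_pos d with h0 | h0
    · rw [h0] at hm1; omega
    · exact h0
  by_cases hcase : m / d < l.length
  · have hgetD : (l ++ [w]).getD (m / d) v = l.getD (m / d) v :=
      List.getD_append _ _ _ _ hcase
    rw [hgetD] at hm2 hm3 hm4
    have hml : m < l.length * d := by
      have h1 : m % d < d := Nat.mod_lt _ hd0
      have h2 : d * (m / d) + m % d = m := Nat.div_add_mod m d
      have : d * (m / d + 1) ≤ d * l.length := Nat.mul_le_mul_left d hcase
      calc m = d * (m / d) + m % d := h2.symm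
        _ < d * (m / d + 1) := by rw [Nat.mul_add, Nat.mul_one]; omega
        _ ≤ d * l.length := this
        _ = l.length * d := Nat.mul_comm _ _
    have hmem_old : m ∈ cand H d v T l := by
      rw [mem_cand]
      exact ⟨hml, hm2, hm3, fun hc => hm4 (List.mem_append.mpr (Or.inl hc))⟩
    have hle : κ ≤ m := kmin_le hmem_old
    rcases Nat.lt_or_ge κ m with h' | h'
    · exact h'
    · exfalso
      have hmκ : m = κ := by omega
      apply hm4
      rw [hmκ]
      exact List.mem_append.mpr (Or.inr (List.mem_singleton.mpr rfl))
  · have : l.length * d ≤ (m / d) * d := Nat.mul_le_mul_right d (by omega)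
    have h2 : (m / d) * d ≤ m := Nat.div_mul_le_self m d
    omega


section hyps2
variable (hd : ∀ u, H.degree u ≤ d) (hv : v ∈ T) {k : ℕ} (hcard : T.card = k + 1)
  (hconn : ∀ u ∈ T, Relation.ReflTransGen (fun a b => a ∈ T ∧ b ∈ T ∧ H.Adj a b) v u)

include hd hv hcard hconn

lemma key_succ_gt {n : ℕ} (hn : n + 1 < k) : key H d v T n < key H d v T (n+1) := by
  have h1 := cand_bfs_nonempty hd hv hcard hconn (show n < k by omega)
  have h2 := cand_bfs_nonempty hd hv hcard hconn hn
  have h3 : key H d v T (n+1) ∈ cand H d v T (step H d v T (bfs H d v T n)) := by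
    rw [← bfs_succ]; exact kmin_mem h2
  exact cand_step_gt h1 h3

lemma key_mono {i j : ℕ} (hij : i < j) (hj : j < k) : key H d v T i < key H d v T j := by
  induction j with
  | zero => omega
  | succ n ih =>
    rcases Nat.lt_or_ge i n with h' | h'
    · exact lt_trans (ih h' (by omega)) (key_succ_gt hd hv hcard hconn hj)
    · have : i = n := by omega
      subst this
      exact key_succ_gt hd hv hcard hconn hj

lemma key_lt {n : ℕ} (hn : n < k) : key H d v T n < k * d := by
  have h1 := cand_bfs_nonempty hd hv hcard hconn hn
  have h2 := (mem_cand H d v T).mp (kmin_mem h1)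
  have h3 := length_bfs hd hv hcard hconn n (by omega)
  calc key H d v T n < (bfs H d v T n).length * d := h2.1
    _ = (n+1) * d := by rw [h3]
    _ ≤ k * d := Nat.mul_le_mul_right d (by omega)

lemma code_subset : code H d v T k ⊆ Finset.range (k * d) := by
  intro x hx
  rw [code, Finset.mem_image] at hx
  obtain ⟨n, hn, rfl⟩ := hx
  rw [Finset.mem_range] at hn ⊢
  exact key_lt hd hv hcard hconn hn

lemma code_card : (code H d v T k).card = k := by
  rw [code, Finset.card_image_of_injOn, Finset.card_range]
  intro i hi j hj hij
  rw [Finset.mem_coe, Finset.mem_range] at hi hj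
  by_contra hne
  rcases Nat.lt_or_ge i j with h' | h'
  · exact absurd hij (Nat.ne_of_lt (key_mono hd hv hcard hconn h' hj))
  · have : j < i := by omega
    exact absurd hij.symm (Nat.ne_of_lt (key_mono hd hv hcard hconn this hi))

lemma key_eq_kmin_sdiff {n : ℕ} (hn : n < k) :
    key H d v T n =
      kmin (code H d v T k \ (Finset.range n).image (key H d v T)) := by
  set s := code H d v T k \ (Finset.range n).image (key H d v T) with hs
  have hmem : key H d v T n ∈ s := by
    rw [hs, Finset.mem_sdiff]
    constructor
    · rw [code, Finset.mem_image]; exact ⟨n, Finset.mem_range.mpr hn, rfl⟩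
    · rw [Finset.mem_image]
      rintro ⟨i, hi, hik⟩
      rw [Finset.mem_range] at hi
      exact absurd hik (Nat.ne_of_lt (key_mono hd hv hcard hconn hi hn))
  have hminle : ∀ x ∈ s, key H d v T n ≤ x := by
    intro x hx
    rw [hs, Finset.mem_sdiff, code, Finset.mem_image] at hx
    obtain ⟨⟨j, hj, rfl⟩, hx2⟩ := hx
    rw [Finset.mem_range] at hj
    rcases Nat.lt_or_ge j n with h' | h'
    · exact absurd (Finset.mem_image.mpr ⟨j, Finset.mem_range.mpr h', rfl⟩) hx2
    · rcases Nat.eq_or_lt_of_le h' with h'' | h''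
      · rw [h'']
      · exact le_of_lt (key_mono hd hv hcard hconn h'' hj)
  exact le_antisymm (hminle _ (kmin_mem ⟨_, hmem⟩)) (kmin_le hmem)

end hyps2

lemma step_eq {n : ℕ} (h : (cand H d v T (bfs H d v T n)).Nonempty) :
    bfs H d v T (n+1) =
      bfs H d v T n ++ [tgt H d v (bfs H d v T n) (key H d v T n)] := by
  rw [bfs_succ, step, dif_pos h]; rfl

variable {T' : Finset V}

lemma bfs_eq_of_code_eq
    (hd : ∀ u, H.degree u ≤ d) {k : ℕ}
    (hv : v ∈ T) (hcard : T.card = k + 1)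
    (hconn : ∀ u ∈ T, Relation.ReflTransGen (fun a b => a ∈ T ∧ b ∈ T ∧ H.Adj a b) v u)
    (hv' : v ∈ T') (hcard' : T'.card = k + 1)
    (hconn' : ∀ u ∈ T', Relation.ReflTransGen (fun a b => a ∈ T' ∧ b ∈ T' ∧ H.Adj a b) v u)
    (hcode : code H d v T k = code H d v T' k) :
    ∀ n, n ≤ k → bfs H d v T n = bfs H d v T' n ∧
      ∀ i, i < n → key H d v T i = key H d v T' i := by
  intro n
  induction n with
  | zero => intro _; exact ⟨rfl, fun i hi => absurd hi (Nat.not_lt_zero i)⟩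
  | succ n ih =>
    intro hn
    obtain ⟨hl, hk⟩ := ih (by omega)
    have hnk : n < k := by omega
    have himg : (Finset.range n).image (key H d v T) =
        (Finset.range n).image (key H d v T') :=
      Finset.image_congr (fun i hi => hk i (Finset.mem_range.mp (Finset.mem_coe.mp hi)))
    have hkey : key H d v T n = key H d v T' n := by
      rw [key_eq_kmin_sdiff hd hv hcard hconn hnk,
          key_eq_kmin_sdiff hd hv' hcard' hconn' hnk, hcode, himg]
    refine ⟨?_, ?_⟩
    · rw [step_eq (cand_bfs_nonempty hd hv hcard hconn hnk),
          step_eq (cand_bfs_nonempty hd hv' hcard' hconn' hnk), hl, hkey]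
    · intro i hi
      rcases Nat.lt_or_ge i n with h' | h'
      · exact hk i h'
      · have : i = n := by omega
        exact this ▸ hkey

lemma eq_of_code_eq
    (hd : ∀ u, H.degree u ≤ d) {k : ℕ}
    (hv : v ∈ T) (hcard : T.card = k + 1)
    (hconn : ∀ u ∈ T, Relation.ReflTransGen (fun a b => a ∈ T ∧ b ∈ T ∧ H.Adj a b) v u)
    (hv' : v ∈ T') (hcard' : T'.card = k + 1)
    (hconn' : ∀ u ∈ T', Relation.ReflTransGen (fun a b => a ∈ T' ∧ b ∈ T' ∧ H.Adj a b) v u)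
    (hcode : code H d v T k = code H d v T' k) : T = T' := by
  have h := (bfs_eq_of_code_eq hd hv hcard hconn hv' hcard' hconn' hcode k le_rfl).1
  rw [← bfs_toFinset hd hv hcard hconn, ← bfs_toFinset hd hv' hcard' hconn', h]

lemma main_count (H : SimpleGraph V) [DecidableRel H.Adj] (d : ℕ)
    (hd : ∀ u, H.degree u ≤ d) (v : V) (k : ℕ) :
    Set.ncard {T : Finset V | v ∈ T ∧ T.card = k + 1 ∧
      ∀ u ∈ T, Relation.ReflTransGen (fun a b => a ∈ T ∧ b ∈ T ∧ H.Adj a b) v u}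
      ≤ (k * d).choose k := by
  classical
  set S := {T : Finset V | v ∈ T ∧ T.card = k + 1 ∧
      ∀ u ∈ T, Relation.ReflTransGen (fun a b => a ∈ T ∧ b ∈ T ∧ H.Adj a b) v u} with hS
  have hinj : Set.InjOn (fun T => code H d v T k) S := by
    rintro T1 h1 T2 h2 heq
    exact eq_of_code_eq hd h1.1 h1.2.1 h1.2.2 h2.1 h2.2.1 h2.2.2 heq
  have himg : (fun T => code H d v T k) '' S ⊆
      ↑((Finset.range (k * d)).powersetCard k) := by
    rintro x ⟨T, hT, rfl⟩
    rw [Finset.mem_coe, Finset.mem_powersetCard]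
    exact ⟨code_subset hd hT.1 hT.2.1 hT.2.2, code_card hd hT.1 hT.2.1 hT.2.2⟩
  calc S.ncard = ((fun T => code H d v T k) '' S).ncard :=
        (Set.ncard_image_of_injOn hinj).symm
    _ ≤ (↑((Finset.range (k * d)).powersetCard k) : Set (Finset ℕ)).ncard :=
        Set.ncard_le_ncard himg (Finset.finite_toSet _)
    _ = ((Finset.range (k * d)).powersetCard k).card := Set.ncard_coe_finset _
    _ = (k * d).choose k := by rw [Finset.card_powersetCard, Finset.card_range]

end TwoTreeAux

/-- the distance-≤2 auxiliary graph on the whole vertex set -/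
def globalAux {V : Type*} (G : SimpleGraph V) : SimpleGraph V where
  Adj a b := a ≠ b ∧ (G.Adj a b ∨ ∃ w : V, G.Adj a w ∧ G.Adj w b)
  symm := by
    refine ⟨?_⟩
    rintro a b ⟨hab, h⟩
    refine ⟨hab.symm, ?_⟩
    rcases h with h | ⟨w, h1, h2⟩
    · exact Or.inl h.symm
    · exact Or.inr ⟨w, h2.symm, h1.symm⟩
  loopless := by refine ⟨?_⟩; rintro a ⟨h, -⟩; exact h rfl

instance globalAuxDecidable {V : Type*} [Fintype V] [DecidableEq V] (G : SimpleGraph V)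
    [DecidableRel G.Adj] : DecidableRel (globalAux G).Adj := fun a b =>
  inferInstanceAs (Decidable (a ≠ b ∧ (G.Adj a b ∨ ∃ w : V, G.Adj a w ∧ G.Adj w b)))

lemma globalAux_degree_le {V : Type*} [Fintype V] [DecidableEq V] (G : SimpleGraph V)
    [DecidableRel G.Adj] (Δ : ℕ) (hΔ : ∀ u, G.degree u ≤ Δ) (u : V) :
    (globalAux G).degree u ≤ Δ ^ 2 := by
  classical
  have hsub : (globalAux G).neighborFinset u ⊆
      G.neighborFinset u ∪
        (G.neighborFinset u).biUnion (fun w => (G.neighborFinset w).erase u) := by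
    intro b hb
    rw [SimpleGraph.mem_neighborFinset] at hb
    obtain ⟨hne, h | ⟨w, h1, h2⟩⟩ := hb
    · refine Finset.mem_union_left _ ?_
      rw [SimpleGraph.mem_neighborFinset]; exact h
    · have hw1 : w ∈ G.neighborFinset u := by
        rw [SimpleGraph.mem_neighborFinset]; exact h1
      refine Finset.mem_union_right _ (Finset.mem_biUnion.mpr ⟨w, hw1, ?_⟩)
      refine Finset.mem_erase.mpr ⟨hne.symm, ?_⟩
      rw [SimpleGraph.mem_neighborFinset]; exact h2
  have h1 : (globalAux G).degree u ≤
      (G.neighborFinset u).card +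
        ((G.neighborFinset u).biUnion (fun w => (G.neighborFinset w).erase u)).card := by
    rw [SimpleGraph.degree]
    exact le_trans (Finset.card_le_card hsub) (Finset.card_union_le _ _)
  have h2 : ((G.neighborFinset u).biUnion (fun w => (G.neighborFinset w).erase u)).card ≤
      Δ * (Δ - 1) := by
    refine le_trans (Finset.card_biUnion_le) ?_
    have hterm : ∀ w ∈ G.neighborFinset u, ((G.neighborFinset w).erase u).card ≤ Δ - 1 := by
      intro w hw
      rw [SimpleGraph.mem_neighborFinset] at hw
      have hmem : u ∈ G.neighborFinset w := by
        rw [SimpleGraph.mem_neighborFinset]; exact hw.symm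
      rw [Finset.card_erase_of_mem hmem]
      have := hΔ w
      rw [← SimpleGraph.card_neighborFinset_eq_degree] at this
      omega
    calc ∑ w ∈ G.neighborFinset u, ((G.neighborFinset w).erase u).card
        ≤ ∑ _w ∈ G.neighborFinset u, (Δ - 1) := Finset.sum_le_sum hterm
      _ = (G.neighborFinset u).card * (Δ - 1) := by rw [Finset.sum_const, smul_eq_mul]
      _ ≤ Δ * (Δ - 1) := by
          have := hΔ u
          rw [← SimpleGraph.card_neighborFinset_eq_degree] at this
          exact Nat.mul_le_mul_right _ this
  have h3 : (G.neighborFinset u).card ≤ Δ := by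
    have := hΔ u
    rwa [← SimpleGraph.card_neighborFinset_eq_degree] at this
  have h4 : Δ + Δ * (Δ - 1) ≤ Δ ^ 2 := by
    rcases Δ with _ | n
    · simp
    · have h : (n+1) + (n+1) * ((n+1) - 1) = (n+1)^2 := by
        simp only [Nat.succ_sub_one]; ring
      omega
  omega

/-- **Counting 2-trees.** In a graph `G` of maximum degree at most `Δ`, for any vertex `v` and
any integer `ℓ ≥ 2`, the number of 2-trees of `G` containing `v` of size exactly `ℓ` is at most
`(e·Δ²)^{ℓ-1}/2`. -/
theorem stmt_2 {V : Type*} [Fintype V] [DecidableEq V] (G : SimpleGraph V)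
    [DecidableRel G.Adj] (Δ : ℕ) (hΔ : ∀ u, G.degree u ≤ Δ)
    (v : V) (ℓ : ℕ) (hℓ : 2 ≤ ℓ) :
    ((Set.ncard {T : Finset V | v ∈ T ∧ T.card = ℓ ∧ IsTwoTree G T} : ℝ)) ≤
      (Real.exp 1 * (Δ : ℝ) ^ 2) ^ (ℓ - 1) / 2 := by
  classical
  set k := ℓ - 1 with hk
  have hk1 : 1 ≤ k := by omega
  have hℓk : ℓ = k + 1 := by omega
  set H := globalAux G with hH
  have hd : ∀ u, H.degree u ≤ Δ ^ 2 := globalAux_degree_le G Δ hΔ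
  -- inclusion into the set counted by `main_count`
  have hsub : {T : Finset V | v ∈ T ∧ T.card = ℓ ∧ IsTwoTree G T} ⊆
      {T : Finset V | v ∈ T ∧ T.card = k + 1 ∧
        ∀ u ∈ T, Relation.ReflTransGen (fun a b => a ∈ T ∧ b ∈ T ∧ H.Adj a b) v u} := by
    rintro T ⟨hvT, hcard, hind, hconn⟩
    refine ⟨hvT, by omega, ?_⟩
    intro u huT
    have hreach : (auxTwoGraph G T).Reachable ⟨v, hvT⟩ ⟨u, huT⟩ :=
      hconn.preconnected _ _
    have hrtg := (SimpleGraph.reachable_iff_reflTransGen _ _).mp hreach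
    exact Relation.ReflTransGen.lift
      (p := fun a b => a ∈ T ∧ b ∈ T ∧ H.Adj a b)
      (Subtype.val : {x // x ∈ T} → V)
      (fun a b hab => ⟨a.2, b.2, Subtype.coe_ne_coe.mpr hab.1, hab.2⟩) _ _ hrtg
  have hcount := TwoTreeAux.main_count H (Δ ^ 2) hd v k
  have hle : Set.ncard {T : Finset V | v ∈ T ∧ T.card = ℓ ∧ IsTwoTree G T} ≤
      (k * Δ ^ 2).choose k :=
    le_trans (Set.ncard_le_ncard hsub (Set.toFinite _)) hcount
  have hbin := binom_bound (Δ ^ 2) k hk1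
  calc ((Set.ncard {T : Finset V | v ∈ T ∧ T.card = ℓ ∧ IsTwoTree G T} : ℝ))
      ≤ ((k * Δ ^ 2).choose k : ℝ) := by exact_mod_cast hle
    _ ≤ (Real.exp 1 * ((Δ ^ 2 : ℕ) : ℝ)) ^ k / 2 := hbin
    _ = (Real.exp 1 * (Δ : ℝ) ^ 2) ^ (ℓ - 1) / 2 := by push_cast; rfl
end

end TwoTreeProof
end
end

section
/- Let G = (V,E) be a graph with maximum degree at most Δ, let H be a connected subgraph of G with vertex set V(H), and let v ∈ V(H). Then there exists a 2-tree T of G with v ∈ T ⊆ V(H) and |T| ≥ |V(H)|/(Δ+1). -/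
open Finset

/-- Adding to a 2-tree a vertex within distance 2 of a member keeps the auxiliary
graph connected. -/
lemma auxTwoGraph_insert_connected {V : Type*} [DecidableEq V] (G : SimpleGraph V)
    (T : Finset V) (y t : V) (hy : y ∉ T) (ht : t ∈ T)
    (hadj : G.Adj y t ∨ ∃ w : V, G.Adj y w ∧ G.Adj w t)
    (hc : (auxTwoGraph G T).Connected) :
    (auxTwoGraph G (insert y T)).Connected := by
  classical
  let f : auxTwoGraph G T →g auxTwoGraph G (insert y T) :=
    { toFun := fun a => ⟨a.1, Finset.mem_insert_of_mem a.2⟩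
      map_rel' := by
        rintro a b ⟨hne, h⟩
        refine ⟨fun h' => hne ?_, h⟩
        exact Subtype.ext (by simpa using congrArg Subtype.val h') }
  have hY : (y : V) ∈ insert y T := Finset.mem_insert_self y T
  set Y : (insert y T : Finset V) := ⟨y, hY⟩ with hYdef
  have hyt : Y ≠ (⟨t, Finset.mem_insert_of_mem ht⟩ : (insert y T : Finset V)) := by
    intro h
    apply hy
    have := congrArg Subtype.val h
    simp only [hYdef] at this
    rw [this]; exact ht
  have hedge : (auxTwoGraph G (insert y T)).Adj Y ⟨t, Finset.mem_insert_of_mem ht⟩ :=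
    ⟨hyt, hadj⟩
  have hreach : ∀ b : (insert y T : Finset V), (auxTwoGraph G (insert y T)).Reachable Y b := by
    intro b
    rcases Finset.mem_insert.mp b.2 with hb | hb
    · have : b = Y := Subtype.ext hb
      rw [this]
    · refine hedge.reachable.trans ?_
      have hr : (auxTwoGraph G T).Reachable ⟨t, ht⟩ ⟨b.1, hb⟩ := hc.preconnected _ _
      have := hr.map f
      have hfb : f ⟨b.1, hb⟩ = b := Subtype.ext rfl
      rwa [hfb] at this
  haveI : Nonempty (insert y T : Finset V) := ⟨Y⟩
  exact SimpleGraph.Connected.mk fun a b => (hreach a).symm.trans (hreach b)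

/-- Along a walk in a subgraph from a vertex outside `S` to a vertex in `S`, there is an
edge crossing into `S`. -/
lemma walk_crossing {V : Type*} {G : SimpleGraph V} (H : G.Subgraph) (S : V → Prop) :
    ∀ {a b : H.verts}, H.coe.Walk a b → ¬ S a.1 → S b.1 →
      ∃ p q : V, p ∈ H.verts ∧ ¬ S p ∧ S q ∧ G.Adj p q := by
  intro a b w
  induction w with
  | nil => intro h1 h2; exact absurd h2 h1
  | @cons x c d h w ih =>
    intro h1 h2
    by_cases hc : S c.1
    · exact ⟨x.1, c.1, x.2, h1, hc, H.adj_sub h⟩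
    · exact ih hc h2

/-- **Existence of large 2-trees.** If `G` has maximum degree at most `Δ`, `H` is a connected
subgraph of `G` and `v` is a vertex of `H`, then there is a 2-tree `T` of `G` with
`v ∈ T ⊆ V(H)` and `|T| ≥ |V(H)|/(Δ+1)`. -/
theorem stmt_3 {V : Type*} [Fintype V] [DecidableEq V] (G : SimpleGraph V)
    [DecidableRel G.Adj] (Δ : ℕ) (hΔ : ∀ u, G.degree u ≤ Δ)
    (H : G.Subgraph) (hH : H.Connected) (v : V) (hv : v ∈ H.verts) :
    ∃ T : Finset V, v ∈ T ∧ ↑T ⊆ H.verts ∧ IsTwoTree G T ∧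
      (H.verts.ncard : ℝ) / ((Δ : ℝ) + 1) ≤ (T.card : ℝ) := by
  classical
  set P : Finset V → Prop := fun T => v ∈ T ∧ ↑T ⊆ H.verts ∧ IsTwoTree G T with hP
  have hPsingle : P {v} := by
    refine ⟨Finset.mem_singleton_self v, ?_, ?_, ?_⟩
    · intro x hx
      rw [Finset.coe_singleton, Set.mem_singleton_iff] at hx
      rw [hx]; exact hv
    · intro u hu w hw hne
      rw [Finset.mem_singleton] at hu hw
      exact absurd (hu.trans hw.symm) hne
    · haveI : Nonempty ({v} : Finset V) := ⟨⟨v, Finset.mem_singleton_self v⟩⟩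
      refine SimpleGraph.Connected.mk fun a b => ?_
      have : a = b := Subtype.ext
        ((Finset.mem_singleton.mp a.2).trans (Finset.mem_singleton.mp b.2).symm)
      rw [this]
  obtain ⟨T, hTmem, hTmax⟩ := (Finset.univ.filter P).exists_max_image Finset.card
    ⟨{v}, Finset.mem_filter.mpr ⟨Finset.mem_univ _, hPsingle⟩⟩
  obtain ⟨hvT, hTsub, hTtree⟩ := (Finset.mem_filter.mp hTmem).2
  -- the closed neighbourhood of T covers H.verts
  set S : V → Prop := fun x => ∃ t ∈ T, x = t ∨ G.Adj t x with hS
  have hcov : ∀ x ∈ H.verts, S x := by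
    by_contra hcon
    push_neg at hcon
    obtain ⟨u, huH, huS⟩ := hcon
    have hvS : S v := ⟨v, hvT, Or.inl rfl⟩
    obtain ⟨w⟩ := hH.coe ⟨u, huH⟩ ⟨v, hv⟩
    obtain ⟨p, q, hpH, hpS, hqS, hpq⟩ := walk_crossing H S w huS hvS
    have hpT : p ∉ T := fun h => hpS ⟨p, h, Or.inl rfl⟩
    -- q ∉ T (else p ∈ S), so q is adjacent to some t ∈ T
    obtain ⟨t, htT, hqt⟩ := hqS
    have hadj2 : G.Adj p t ∨ ∃ w : V, G.Adj p w ∧ G.Adj w t := by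
      rcases hqt with rfl | hqt
      · exact Or.inl hpq
      · exact Or.inr ⟨q, hpq, hqt.symm⟩
    have hP' : P (insert p T) := by
      refine ⟨Finset.mem_insert_of_mem hvT, ?_, ?_, ?_⟩
      · intro x hx
        rw [Finset.coe_insert, Set.mem_insert_iff] at hx
        rcases hx with rfl | hx
        · exact hpH
        · exact hTsub hx
      · intro a ha b hb hne hadj
        rcases Finset.mem_insert.mp ha with ha' | ha'
        · rcases Finset.mem_insert.mp hb with hb' | hb'
          · exact hne (ha'.trans hb'.symm)
          · subst ha'; exact hpS ⟨b, hb', Or.inr hadj.symm⟩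
        · rcases Finset.mem_insert.mp hb with hb' | hb'
          · subst hb'; exact hpS ⟨a, ha', Or.inr hadj⟩
          · exact hTtree.1 a ha' b hb' hne hadj
      · exact auxTwoGraph_insert_connected G T p t hpT htT hadj2 hTtree.2
    have hle := hTmax (insert p T) (Finset.mem_filter.mpr ⟨Finset.mem_univ _, hP'⟩)
    rw [Finset.card_insert_of_notMem hpT] at hle
    omega
  -- counting
  have hfin : H.verts.Finite := Set.toFinite _
  have hsubF : hfin.toFinset ⊆ T.biUnion (fun t => insert t (G.neighborFinset t)) := by
    intro x hx
    obtain ⟨t, htT, hxt⟩ := hcov x (hfin.mem_toFinset.mp hx)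
    refine Finset.mem_biUnion.mpr ⟨t, htT, ?_⟩
    rcases hxt with rfl | hxt
    · exact Finset.mem_insert_self _ _
    · exact Finset.mem_insert_of_mem (by rw [SimpleGraph.mem_neighborFinset]; exact hxt)
  have hcount : H.verts.ncard ≤ T.card * (Δ + 1) := by
    rw [Set.ncard_eq_toFinset_card _ hfin]
    calc hfin.toFinset.card ≤ (T.biUnion (fun t => insert t (G.neighborFinset t))).card :=
          Finset.card_le_card hsubF
      _ ≤ ∑ t ∈ T, (insert t (G.neighborFinset t)).card := Finset.card_biUnion_le
      _ ≤ ∑ _t ∈ T, (Δ + 1) := by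
          refine Finset.sum_le_sum fun t _ => ?_
          calc (insert t (G.neighborFinset t)).card ≤ (G.neighborFinset t).card + 1 :=
                Finset.card_insert_le _ _
            _ ≤ Δ + 1 := by
                have := hΔ t
                rw [← G.card_neighborFinset_eq_degree t] at this
                omega
      _ = T.card * (Δ + 1) := by rw [Finset.sum_const, smul_eq_mul]
  refine ⟨T, hvT, hTsub, hTtree, ?_⟩
  rw [div_le_iff₀ (by positivity)]
  calc (H.verts.ncard : ℝ) ≤ (T.card * (Δ + 1) : ℕ) := by exact_mod_cast hcount
    _ = (T.card : ℝ) * ((Δ : ℝ) + 1) := by push_cast; ring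
end

section
/- Let Φ be an atomic CSP with degree Δ, let η ∈ (0,1/2), and let π be a projection scheme with b ≤ η/(300Δ). Let V' ⊆ V, let Y ∈ ∏_{v∈V'} Q_v be a partial assignment with π_v^{-1}(Y(v)) ≠ ∅ for each v ∈ V', let H' be a connected component of H(Y), let M > 1 be a real number, and suppose |𝒞(H')| ≤ 20·Δ·log M. Let X be a random assignment whose coordinates are independent, with X(v) uniform on π_v^{-1}(Y(v)) for each v ∈ H' ∩ V' and X(v) uniform on Ω_v for each v ∈ H' ∖ V'. Then the probability that X satisfies every constraint C ∈ 𝒞(H') is at least (1 − 3b)^{|𝒞(H')|}, and hence at least M^{-η}. -/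
open Finset
open scoped Classical

section LLL
variable {V ι : Type*} [Fintype V] [DecidableEq V] {Ω : V → Type*} [∀ v, Fintype (Ω v)]
  [Fintype ι]

variable (g : ∀ v, Ω v → ℝ) (vbl : ι → Finset V) (forb : ι → ∀ v, Ω v)

/-- probability that all constraints in `S` are satisfied -/
noncomputable def fprob (S : Finset ι) : ℝ :=
  ∑ σ : ∀ v, Ω v, if ∀ c ∈ S, ∃ v ∈ vbl c, σ v ≠ forb c v then ∏ v, g v (σ v) else 0

variable (hg0 : ∀ v x, 0 ≤ g v x) (hg1 : ∀ v, ∑ x, g v x = 1)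

include hg0 in
lemma fprob_nonneg (S : Finset ι) : 0 ≤ fprob g vbl forb S := by
  refine Finset.sum_nonneg fun σ _ => ?_
  split
  · exact Finset.prod_nonneg fun v _ => hg0 v _
  · exact le_rfl

include hg1 in
lemma fprob_empty : fprob g vbl forb ∅ = 1 := by
  simp only [fprob, Finset.notMem_empty, false_implies, implies_true, if_true]
  rw [← Fintype.prod_sum fun v x => g v x]
  simp [hg1]

include hg0 in
lemma fprob_anti {S T : Finset ι} (h : S ⊆ T) : fprob g vbl forb T ≤ fprob g vbl forb S := by
  refine Finset.sum_le_sum fun σ _ => ?_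
  by_cases hT : ∀ c ∈ T, ∃ v ∈ vbl c, σ v ≠ forb c v
  · rw [if_pos hT, if_pos fun c hc => hT c (h hc)]
  · rw [if_neg hT]
    split
    · exact Finset.prod_nonneg fun v _ => hg0 v _
    · exact le_rfl

end LLL
section LLL2
variable {V ι : Type*} [Fintype V] [DecidableEq V] {Ω : V → Type*} [∀ v, Fintype (Ω v)]
  [Fintype ι]
variable (g : ∀ v, Ω v → ℝ) (vbl : ι → Finset V) (forb : ι → ∀ v, Ω v)

/-- key independence lemma: if `F` only depends on coordinates outside `A`,
the probability of (σ = a₀ on A) ∧ F factors. -/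
lemma ite_irrel {c : Prop} {i1 i2 : Decidable c} (x y : ℝ) :
    @ite ℝ c i1 x y = @ite ℝ c i2 x y := by congr

lemma key_split (hg1 : ∀ v, ∑ x, g v x = 1) (A : Finset V) (a₀ : ∀ v, Ω v)
    (F : (∀ v, Ω v) → Prop)
    (hF : ∀ σ τ : ∀ v, Ω v, (∀ v, v ∉ A → σ v = τ v) → F σ → F τ) :
    ∑ σ : ∀ v, Ω v, (if (∀ v ∈ A, σ v = a₀ v) ∧ F σ then ∏ v, g v (σ v) else 0)
      = (∏ v ∈ A, g v (a₀ v)) *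
        ∑ σ : ∀ v, Ω v, (if F σ then ∏ v, g v (σ v) else 0) := by
  classical
  set p : V → Prop := fun v => v ∈ A with hp
  set e := Equiv.piEquivPiSubtypeProd p Ω with he
  have hsymm : ∀ (x : ((∀ v : {x // p x}, Ω v) × (∀ v : {x // ¬ p x}, Ω v))) (v : V),
      e.symm x v = if h : p v then x.1 ⟨v, h⟩ else x.2 ⟨v, h⟩ := by
    intro x v; rfl
  -- G : predicate on the outside part
  set G : (∀ v : {x // ¬ p x}, Ω v) → Prop :=
    fun bb => F (e.symm (fun v => a₀ v, bb)) with hG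
  have hFG : ∀ (aa : ∀ v : {x // p x}, Ω v) (bb : ∀ v : {x // ¬ p x}, Ω v),
      F (e.symm (aa, bb)) ↔ G bb := by
    intro aa bb
    have hagree : ∀ v, v ∉ A → e.symm (aa, bb) v = e.symm (fun v => a₀ v, bb) v := by
      intro v hv
      rw [hsymm, hsymm, dif_neg hv, dif_neg hv]
    constructor
    · exact hF _ _ hagree
    · exact hF _ _ fun v hv => (hagree v hv).symm
  -- split the weight
  have hw : ∀ (aa : ∀ v : {x // p x}, Ω v) (bb : ∀ v : {x // ¬ p x}, Ω v),
      (∏ v, g v (e.symm (aa, bb) v)) =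
        (∏ v : {x // p x}, g v (aa v)) * (∏ v : {x // ¬ p x}, g v (bb v)) := by
    intro aa bb
    rw [← Fintype.prod_subtype_mul_prod_subtype p (fun v => g v (e.symm (aa, bb) v))]
    congr 1
    · apply Finset.prod_congr
      · congr!
      · intro v _; rw [hsymm, dif_pos v.2]
    · apply Finset.prod_congr
      · congr!
      · intro v _; rw [hsymm, dif_neg v.2]
  have key : ∀ (F' : (∀ v, Ω v) → Prop) (W : (∀ v : {x // p x}, Ω v) → ℝ),
      (∀ aa bb, (if F' (e.symm (aa, bb)) then W aa * (∏ v : {x // ¬ p x}, g v (bb v)) else 0)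
        = (W aa) * (if G bb then ∏ v : {x // ¬ p x}, g v (bb v) else 0)) → True := fun _ _ _ => trivial
  -- rewrite both sums via the equivalence
  have main : ∀ (F' : (∀ v, Ω v) → Prop),
      (∑ σ : ∀ v, Ω v, (if F' σ then ∏ v, g v (σ v) else 0)) =
      ∑ aa : ∀ v : {x // p x}, Ω v, ∑ bb : ∀ v : {x // ¬ p x}, Ω v,
        (if F' (e.symm (aa, bb)) then
          (∏ v : {x // p x}, g v (aa v)) * (∏ v : {x // ¬ p x}, g v (bb v)) else 0) := by
    intro F'
    rw [← e.symm.sum_comp (fun σ => if F' σ then ∏ v, g v (σ v) else 0), Fintype.sum_prod_type]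
    exact Finset.sum_congr rfl fun aa _ => Finset.sum_congr rfl fun bb _ => by
      rw [hw]
  have hmass : (∑ aa : ∀ v : {x // p x}, Ω v, ∏ v : {x // p x}, g v (aa v)) = 1 := by
    rw [← Fintype.prod_sum fun (v : {x // p x}) (x : Ω v) => g v x]
    simp [hg1]
  set a₀' : ∀ v : {x // p x}, Ω v := fun v => a₀ v with ha₀'
  have hPa : (∏ v : {x // p x}, g v (a₀' v)) = ∏ v ∈ A, g v (a₀ v) := by
    rw [Finset.prod_subtype A (fun x => Iff.rfl) (fun v => g v (a₀ v))]
  have hLcond : ∀ (aa : ∀ v : {x // p x}, Ω v) (bb : ∀ v : {x // ¬ p x}, Ω v),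
      ((∀ v ∈ A, e.symm (aa, bb) v = a₀ v) ↔ aa = a₀') := by
    intro aa bb
    constructor
    · intro h; funext v; have h2 := h v v.2
      rwa [hsymm, dif_pos v.2] at h2
    · rintro rfl v hv
      rw [hsymm, dif_pos hv]
  have e1 : (∑ σ : ∀ v, Ω v, (if (∀ v ∈ A, σ v = a₀ v) ∧ F σ then ∏ v, g v (σ v) else 0))
      = ∑ aa : ∀ v : {x // p x}, Ω v, ∑ bb : ∀ v : {x // ¬ p x}, Ω v,
        (if (∀ v ∈ A, (e.symm (aa, bb)) v = a₀ v) ∧ F (e.symm (aa, bb)) then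
          (∏ v : {x // p x}, g v (aa v)) * (∏ v : {x // ¬ p x}, g v (bb v)) else 0) :=
    by
      refine Eq.trans ?_ (Eq.trans (main (fun σ => (∀ v ∈ A, σ v = a₀ v) ∧ F σ)) ?_)
      · exact Finset.sum_congr rfl fun σ _ => ite_irrel _ _
      · exact Finset.sum_congr rfl fun aa _ => Finset.sum_congr rfl fun bb _ =>
          ite_irrel _ _
  rw [main, e1]
  have hL : ∀ (aa : ∀ v : {x // p x}, Ω v) (bb : ∀ v : {x // ¬ p x}, Ω v),
      (if ((∀ v ∈ A, e.symm (aa, bb) v = a₀ v) ∧ F (e.symm (aa, bb))) then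
      (∏ v : {x // p x}, g v (aa v)) * (∏ v : {x // ¬ p x}, g v (bb v)) else 0)
      = (if aa = a₀' then ∏ v : {x // p x}, g v (aa v) else 0) *
        (if G bb then ∏ v : {x // ¬ p x}, g v (bb v) else 0) := by
    intro aa bb
    rw [if_congr (and_congr (hLcond aa bb) (hFG aa bb)) rfl rfl]
    by_cases h1 : aa = a₀' <;> by_cases h2 : G bb <;> simp [h1, h2]
  have hR : ∀ (aa : ∀ v : {x // p x}, Ω v) (bb : ∀ v : {x // ¬ p x}, Ω v),
      (if F (e.symm (aa, bb)) then
      (∏ v : {x // p x}, g v (aa v)) * (∏ v : {x // ¬ p x}, g v (bb v)) else 0)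
      = (∏ v : {x // p x}, g v (aa v)) *
        (if G bb then ∏ v : {x // ¬ p x}, g v (bb v) else 0) := by
    intro aa bb
    rw [if_congr (hFG aa bb) rfl rfl]
    by_cases h2 : G bb <;> simp [h2]
  simp_rw [hL, hR]
  rw [← Finset.sum_mul_sum, ← Finset.sum_mul_sum]
  rw [Finset.sum_ite_eq' Finset.univ a₀' (fun aa => ∏ v : {x // p x}, g v (aa v)),
    if_pos (Finset.mem_univ _), hPa, hmass, one_mul]

end LLL2

lemma ite_congr_prop {b c : Prop} {i1 : Decidable b} {i2 : Decidable c} (h : b ↔ c) (x y : ℝ) :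
    @ite ℝ b i1 x y = @ite ℝ c i2 x y := by
  by_cases hb : b
  · rw [if_pos hb, if_pos (h.mp hb)]
  · rw [if_neg hb, if_neg (fun hc => hb (h.mpr hc))]

section LLL3
variable {V ι : Type*} [Fintype V] [DecidableEq V] {Ω : V → Type*} [∀ v, Fintype (Ω v)]
  [Fintype ι]
variable (g : ∀ v, Ω v → ℝ) (vbl : ι → Finset V) (forb : ι → ∀ v, Ω v)

/-- probability that constraint `c` is violated while all constraints in `S` are satisfied. -/
noncomputable def badterm (c : ι) (S : Finset ι) : ℝ :=
  ∑ σ : ∀ v, Ω v, if (∀ v ∈ vbl c, σ v = forb c v) ∧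
      (∀ c' ∈ S, ∃ v ∈ vbl c', σ v ≠ forb c' v) then ∏ v, g v (σ v) else 0

lemma fprob_insert (c : ι) (S : Finset ι) :
    fprob g vbl forb (insert c S) = fprob g vbl forb S - badterm g vbl forb c S := by
  rw [fprob, fprob, badterm, ← Finset.sum_sub_distrib]
  refine Finset.sum_congr rfl fun σ _ => ?_
  by_cases hS : ∀ c' ∈ S, ∃ v ∈ vbl c', σ v ≠ forb c' v
  · by_cases hc : ∀ v ∈ vbl c, σ v = forb c v
    · rw [if_neg, if_pos hS, if_pos ⟨hc, hS⟩, sub_self]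
      rw [Finset.forall_mem_insert]
      rintro ⟨⟨v, hv, hne⟩, -⟩
      exact hne (hc v hv)
    · push_neg at hc
      obtain ⟨v, hv, hne⟩ := hc
      rw [if_pos, if_pos hS, if_neg, sub_zero]
      · rintro ⟨hall, -⟩; exact hne (hall v hv)
      · rw [Finset.forall_mem_insert]
        exact ⟨⟨v, hv, hne⟩, hS⟩
  · rw [if_neg, if_neg hS, if_neg, sub_zero]
    · rintro ⟨-, h2⟩; exact hS h2
    · rw [Finset.forall_mem_insert]
      rintro ⟨-, h2⟩; exact hS h2

lemma badterm_mono (hg0 : ∀ v x, 0 ≤ g v x) (c : ι) {S T : Finset ι} (h : S ⊆ T) :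
    badterm g vbl forb c T ≤ badterm g vbl forb c S := by
  refine Finset.sum_le_sum fun σ _ => ?_
  by_cases hT : (∀ v ∈ vbl c, σ v = forb c v) ∧ (∀ c' ∈ T, ∃ v ∈ vbl c', σ v ≠ forb c' v)
  · rw [if_pos hT, if_pos ⟨hT.1, fun c' hc' => hT.2 c' (h hc')⟩]
  · rw [if_neg hT]
    split
    · exact Finset.prod_nonneg fun v _ => hg0 v _
    · exact le_rfl

lemma badterm_eq (hg1 : ∀ v, ∑ x, g v x = 1) (c : ι) (S : Finset ι)
    (hdisj : ∀ c' ∈ S, ∀ v ∈ vbl c, v ∉ vbl c') :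
    badterm g vbl forb c S = (∏ v ∈ vbl c, g v (forb c v)) * fprob g vbl forb S := by
  have h := key_split g hg1 (vbl c) (forb c)
    (fun σ => ∀ c' ∈ S, ∃ v ∈ vbl c', σ v ≠ forb c' v) ?_
  · refine Eq.trans ?_ (h.trans ?_)
    · exact Finset.sum_congr rfl fun σ _ => ite_irrel _ _
    · exact congrArg (fun z => (∏ v ∈ vbl c, g v (forb c v)) * z)
        (Finset.sum_congr rfl fun σ _ => ite_irrel _ _)
  · intro σ τ hagree hFσ c' hc'
    obtain ⟨v, hv, hne⟩ := hFσ c' hc'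
    refine ⟨v, hv, ?_⟩
    rw [← hagree v (fun hvA => hdisj c' hc' v hvA hv)]
    exact hne

variable {b : ℝ} {Δ : ℕ}

lemma lll_main (hg0 : ∀ v x, 0 ≤ g v x) (hg1 : ∀ v, ∑ x, g v x = 1)
    (hbnn : 0 ≤ b) (hpb : ∀ c : ι, ∏ v ∈ vbl c, g v (forb c v) ≤ b)
    (hΔ : ∀ c : ι, ((univ : Finset ι).filter fun c' => (vbl c ∩ vbl c').Nonempty).card ≤ Δ)
    (hsm : 3 * b * (Δ : ℝ) ≤ 1/2) (hsm1 : 3 * b ≤ 1/2) :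
    ∀ (n : ℕ) (S : Finset ι), S.card ≤ n → ∀ c : ι,
      (1 - 3*b) * fprob g vbl forb S ≤ fprob g vbl forb (insert c S) := by
  have h13 : (0:ℝ) ≤ 1 - 3*b := by linarith
  intro n
  induction n with
  | zero =>
    intro S hS c
    have hSe : S = ∅ := Finset.card_eq_zero.mp (Nat.le_zero.mp hS)
    subst hSe
    rw [fprob_insert, fprob_empty g vbl forb hg1,
      badterm_eq g vbl forb hg1 c ∅ (by simp)]
    rw [fprob_empty g vbl forb hg1]
    have := hpb c
    nlinarith [hpb c]
  | succ n ih =>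
    intro S hS c
    by_cases hcS : c ∈ S
    · rw [Finset.insert_eq_self.mpr hcS]
      exact mul_le_of_le_one_left (fprob_nonneg g vbl forb hg0 S) (by linarith)
    set N := S.filter (fun c' => (vbl c ∩ vbl c').Nonempty) with hN
    set S₀ := S \ N with hS₀
    have hNsub : N ⊆ S := Finset.filter_subset _ _
    have hunion : S₀ ∪ N = S := Finset.sdiff_union_of_subset hNsub
    have claim : ∀ T : Finset ι, T ⊆ N →
        (1 - 3*b)^T.card * fprob g vbl forb S₀ ≤ fprob g vbl forb (S₀ ∪ T) := by
      intro T
      induction T using Finset.induction_on with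
      | empty => intro _; simp
      | @insert a T ha ihT =>
        intro hsub
        have hTN : T ⊆ N := (Finset.subset_insert a T).trans hsub
        have haN : a ∈ N := hsub (Finset.mem_insert_self a T)
        have hcard : (S₀ ∪ T).card ≤ n := by
          have hsub2 : S₀ ∪ T ⊆ S.erase a := by
            intro x hx
            rcases Finset.mem_union.mp hx with hx0 | hxT
            · exact Finset.mem_erase.mpr
                ⟨fun h => (Finset.mem_sdiff.mp hx0).2 (h ▸ haN), (Finset.mem_sdiff.mp hx0).1⟩
            · exact Finset.mem_erase.mpr ⟨fun h => ha (h ▸ hxT), hNsub (hTN hxT)⟩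
          have h1 := Finset.card_le_card hsub2
          rw [Finset.card_erase_of_mem (hNsub haN)] at h1
          have h2 : 1 ≤ S.card := Finset.card_pos.mpr ⟨a, hNsub haN⟩
          omega
        have h1 := ih (S₀ ∪ T) hcard a
        have h2 := ihT hTN
        rw [Finset.union_insert]
        calc (1 - 3*b)^(insert a T).card * fprob g vbl forb S₀
            = (1 - 3*b) * ((1 - 3*b)^T.card * fprob g vbl forb S₀) := by
              rw [Finset.card_insert_of_notMem ha, pow_succ]; ring
          _ ≤ (1 - 3*b) * fprob g vbl forb (S₀ ∪ T) :=
              mul_le_mul_of_nonneg_left h2 h13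
          _ ≤ fprob g vbl forb (insert a (S₀ ∪ T)) := h1
    have hNcard : N.card ≤ Δ := by
      refine le_trans (Finset.card_le_card ?_) (hΔ c)
      intro x hx
      exact Finset.mem_filter.mpr ⟨Finset.mem_univ x, (Finset.mem_filter.mp hx).2⟩
    have hpow : (1/2 : ℝ) ≤ (1 - 3*b)^N.card := by
      have hmono : (1 - 3*b)^Δ ≤ (1 - 3*b)^N.card :=
        pow_le_pow_of_le_one h13 (by linarith) hNcard
      have hber : 1 + (Δ:ℝ) * (-(3*b)) ≤ (1 + (-(3*b)))^Δ :=
        one_add_mul_le_pow (by linarith) Δ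
      have : (1:ℝ)/2 ≤ 1 + (Δ:ℝ) * (-(3*b)) := by nlinarith
      calc (1/2 : ℝ) ≤ 1 + (Δ:ℝ) * (-(3*b)) := this
        _ ≤ (1 + (-(3*b)))^Δ := hber
        _ = (1 - 3*b)^Δ := by ring_nf
        _ ≤ (1 - 3*b)^N.card := hmono
    have hfS0nn : 0 ≤ fprob g vbl forb S₀ := fprob_nonneg g vbl forb hg0 S₀
    have hS0S : fprob g vbl forb S₀ ≤ 2 * fprob g vbl forb S := by
      have hc1 := claim N le_rfl
      rw [hunion] at hc1
      nlinarith [mul_le_mul_of_nonneg_right hpow hfS0nn]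
    have hdisj : ∀ c' ∈ S₀, ∀ v ∈ vbl c, v ∉ vbl c' := by
      intro c' hc' v hv hv'
      have h1 := Finset.mem_sdiff.mp hc'
      exact h1.2 (Finset.mem_filter.mpr ⟨h1.1, ⟨v, Finset.mem_inter.mpr ⟨hv, hv'⟩⟩⟩)
    have hbt : badterm g vbl forb c S ≤ b * fprob g vbl forb S₀ := by
      calc badterm g vbl forb c S ≤ badterm g vbl forb c S₀ :=
            badterm_mono g vbl forb hg0 c (Finset.sdiff_subset)
        _ = (∏ v ∈ vbl c, g v (forb c v)) * fprob g vbl forb S₀ :=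
            badterm_eq g vbl forb hg1 c S₀ hdisj
        _ ≤ b * fprob g vbl forb S₀ := mul_le_mul_of_nonneg_right (hpb c) hfS0nn
    rw [fprob_insert]
    have hfSnn : 0 ≤ fprob g vbl forb S := fprob_nonneg g vbl forb hg0 S
    nlinarith [mul_le_mul_of_nonneg_left hS0S hbnn]

lemma fprob_ge_pow (hg0 : ∀ v x, 0 ≤ g v x) (hg1 : ∀ v, ∑ x, g v x = 1)
    (hbnn : 0 ≤ b) (hpb : ∀ c : ι, ∏ v ∈ vbl c, g v (forb c v) ≤ b)
    (hΔ : ∀ c : ι, ((univ : Finset ι).filter fun c' => (vbl c ∩ vbl c').Nonempty).card ≤ Δ)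
    (hsm : 3 * b * (Δ : ℝ) ≤ 1/2) (hsm1 : 3 * b ≤ 1/2) (S : Finset ι) :
    (1 - 3*b)^S.card ≤ fprob g vbl forb S := by
  have h13 : (0:ℝ) ≤ 1 - 3*b := by linarith
  induction S using Finset.induction_on with
  | empty => rw [fprob_empty g vbl forb hg1]; simp
  | @insert a S ha ihS =>
    rw [Finset.card_insert_of_notMem ha, pow_succ]
    calc (1 - 3*b)^S.card * (1 - 3*b) ≤ fprob g vbl forb S * (1 - 3*b) :=
          mul_le_mul_of_nonneg_right ihS h13
      _ = (1 - 3*b) * fprob g vbl forb S := mul_comm _ _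
      _ ≤ fprob g vbl forb (insert a S) :=
          lll_main g vbl forb hg0 hg1 hbnn hpb hΔ hsm hsm1 S.card S le_rfl a

end LLL3

/-- The graph `H(Y)` on the variables: `u ≠ w` are joined iff some constraint `c` with
`bad c` (i.e. `c` is not satisfied by the partial projected assignment `Y`) has
`u, w ∈ vbl c`. -/
def varGraph {V ι : Type*} (vbl : ι → Finset V) (bad : ι → Prop) : SimpleGraph V where
  Adj u w := u ≠ w ∧ ∃ c, bad c ∧ u ∈ vbl c ∧ w ∈ vbl c
  symm := by
    constructor
    rintro u w ⟨h, c, hc, hu, hw⟩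
    exact ⟨h.symm, c, hc, hw, hu⟩
  loopless := by constructor; rintro u ⟨h, -⟩; exact h rfl

/-- **Success probability of rejection sampling on a small component.**
`Φ` is an atomic CSP of degree `Δ`, `π` a projection scheme with
`b = max_C ∏_{v ∈ vbl C} |π_v⁻¹(𝐂_π(v))|⁻¹ ≤ η/(300Δ)` for some `η ∈ (0,1/2)`.
Given a partial projected assignment `Y` on `V' ⊆ V` (with nonempty fibres on `V'`), a connected
component `H'` (with vertex set `K.supp`) of the graph `H(Y)`, and `M > 1` with
`|𝒞(H')| ≤ 20·Δ·log M`, let `X` have independent coordinates, uniform on `π_v⁻¹(Y v)` for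
`v ∈ H' ∩ V'` and uniform on `Ω v` for `v ∈ H' \ V'` (and, immaterially, uniform on `Ω v`
outside `H'`).  Then the probability `P` that `X` satisfies every constraint in `𝒞(H')` is at
least `(1-3b)^{|𝒞(H')|}`, hence at least `M^{-η}`. -/
theorem stmt_5 {V : Type*} [Fintype V] [DecidableEq V]
    {Ω : V → Type*} [∀ v, Fintype (Ω v)] [∀ v, DecidableEq (Ω v)]
    (hΩ : ∀ v, 2 ≤ Fintype.card (Ω v))
    {Q : V → Type*} [∀ v, Fintype (Q v)] [∀ v, DecidableEq (Q v)]
    {ι : Type*} [Fintype ι]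
    (vbl : ι → Finset V) (forb : ι → ∀ v, Ω v) (π : ∀ v, Ω v → Q v)
    (Δ : ℕ)
    (hΔ : IsGreatest (Set.range fun c : ι =>
      ((univ : Finset ι).filter fun c' => (vbl c ∩ vbl c').Nonempty).card) Δ)
    (η : ℝ) (hη : 0 < η ∧ η < 1/2)
    (b : ℝ)
    (hb : IsGreatest (Set.range fun c : ι => ∏ v ∈ vbl c,
      (((univ : Finset (Ω v)).filter fun x => π v x = π v (forb c v)).card : ℝ)⁻¹) b)
    (hbsmall : b ≤ η / (300 * (Δ : ℝ)))
    (V' : Finset V) (Y : ∀ v, Q v)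
    (hYfib : ∀ v ∈ V', ∃ x : Ω v, π v x = Y v)
    -- `𝒞(Y)`: the constraints not satisfied by the partial assignment `Y` on `V'`
    (CY : Set ι) (hCY : CY = {c : ι | ∀ v ∈ vbl c, v ∈ V' → Y v = π v (forb c v)})
    -- a connected component `H'` of `H(Y)`, with vertex set `K.supp`
    (K : (varGraph vbl (· ∈ CY)).ConnectedComponent)
    -- `𝒞(H')`
    (CH : Set ι) (hCH : CH = {c : ι | c ∈ CY ∧ ∀ v ∈ vbl c, v ∈ K.supp})
    (M : ℝ) (hM : 1 < M)
    (hsize : (CH.ncard : ℝ) ≤ 20 * (Δ : ℝ) * Real.log M)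
    -- `P`: the probability that `X` satisfies every constraint in `𝒞(H')`
    (P : ℝ)
    (hP : P = ∑ σ : ∀ v, Ω v,
      (if ∀ c ∈ CH, ∃ v ∈ vbl c, σ v ≠ forb c v then
        ∏ v, (if v ∈ K.supp ∧ v ∈ V' then
                (if π v (σ v) = Y v then
                  (((univ : Finset (Ω v)).filter fun z => π v z = Y v).card : ℝ)⁻¹
                 else 0)
              else ((Fintype.card (Ω v) : ℝ))⁻¹)
       else 0)) :
    (1 - 3 * b) ^ CH.ncard ≤ P ∧ M ^ (-η) ≤ P := by
  classical
  obtain ⟨c₀, hc₀⟩ := hb.1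
  have hbpos : 0 < b := by
    rw [← hc₀]
    refine Finset.prod_pos fun v hv => inv_pos.mpr ?_
    have hmem : forb c₀ v ∈ (univ : Finset (Ω v)).filter fun x => π v x = π v (forb c₀ v) :=
      Finset.mem_filter.mpr ⟨Finset.mem_univ _, rfl⟩
    exact_mod_cast Finset.card_pos.mpr ⟨forb c₀ v, hmem⟩
  have hΔ1 : 1 ≤ Δ := by
    by_contra h
    have hΔ0 : Δ = 0 := by omega
    rw [hΔ0] at hbsmall
    norm_num at hbsmall
    linarith
  have hΔR : (1:ℝ) ≤ (Δ:ℝ) := by exact_mod_cast hΔ1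
  have h300 : (0:ℝ) < 300 * (Δ:ℝ) := by linarith
  have hbΔ : b * (300 * (Δ:ℝ)) ≤ η := (le_div_iff₀ h300).mp hbsmall
  have hsm : 3 * b * (Δ:ℝ) ≤ 1/2 := by nlinarith [hη.2]
  have hsm1 : 3 * b ≤ 1/2 := by nlinarith [hbpos, hΔR]
  set G : ∀ v, Ω v → ℝ := fun v x =>
    (if v ∈ K.supp ∧ v ∈ V' then
      (if π v x = Y v then
        (((univ : Finset (Ω v)).filter fun z => π v z = Y v).card : ℝ)⁻¹
       else 0)
     else ((Fintype.card (Ω v) : ℝ))⁻¹) with hG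
  have hg0 : ∀ v x, 0 ≤ G v x := by
    intro v x
    simp only [hG]
    split
    · split
      · positivity
      · exact le_rfl
    · positivity
  have hg1 : ∀ v, ∑ x, G v x = 1 := by
    intro v
    simp only [hG]
    by_cases hv : v ∈ K.supp ∧ v ∈ V'
    · simp only [if_pos hv]
      rw [← Finset.sum_filter, Finset.sum_const, nsmul_eq_mul]
      have hcard : 0 < ((univ : Finset (Ω v)).filter fun z => π v z = Y v).card := by
        obtain ⟨x, hx⟩ := hYfib v hv.2
        exact Finset.card_pos.mpr ⟨x, Finset.mem_filter.mpr ⟨Finset.mem_univ _, hx⟩⟩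
      rw [mul_inv_cancel₀]
      exact_mod_cast hcard.ne'
    · simp only [if_neg hv]
      rw [Finset.sum_const, Finset.card_univ, nsmul_eq_mul, mul_inv_cancel₀]
      have h2 := hΩ v
      exact_mod_cast (by omega : Fintype.card (Ω v) ≠ 0)
  have hpb : ∀ c : ι, ∏ v ∈ vbl c, G v (forb c v) ≤ b := by
    intro c
    refine le_trans (Finset.prod_le_prod (fun v _ => hg0 v _) (fun v hv => ?_)) (hb.2 ⟨c, rfl⟩)
    simp only [hG]
    by_cases hv2 : v ∈ K.supp ∧ v ∈ V'
    · rw [if_pos hv2]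
      by_cases he : π v (forb c v) = Y v
      · rw [if_pos he, he]
      · rw [if_neg he]
        positivity
    · rw [if_neg hv2]
      have h1 : 0 < ((univ : Finset (Ω v)).filter fun x => π v x = π v (forb c v)).card :=
        Finset.card_pos.mpr ⟨forb c v, Finset.mem_filter.mpr ⟨Finset.mem_univ _, rfl⟩⟩
      have h2 : ((univ : Finset (Ω v)).filter fun x => π v x = π v (forb c v)).card
          ≤ Fintype.card (Ω v) := by
        rw [← Finset.card_univ]
        exact Finset.card_filter_le _ _
      apply inv_anti₀
      · exact_mod_cast h1
      · exact_mod_cast h2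
  have hΔ' : ∀ c : ι, ((univ : Finset ι).filter fun c' => (vbl c ∩ vbl c').Nonempty).card ≤ Δ :=
    fun c => hΔ.2 ⟨c, rfl⟩
  have hPf : P = fprob G vbl forb CH.toFinset := by
    rw [hP, fprob]
    refine Finset.sum_congr rfl fun σ _ => ?_
    have hbody : (∏ v, (if v ∈ K.supp ∧ v ∈ V' then
        (if π v (σ v) = Y v then
          (((univ : Finset (Ω v)).filter fun z => π v z = Y v).card : ℝ)⁻¹
         else 0)
       else ((Fintype.card (Ω v) : ℝ))⁻¹)) = ∏ v, G v (σ v) :=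
      Finset.prod_congr rfl fun v _ => by simp only [hG]
    rw [hbody]
    refine ite_congr_prop ?_ _ _
    constructor
    · intro h c hc
      exact h c (Set.mem_toFinset.mp hc)
    · intro h c hc
      exact h c (Set.mem_toFinset.mpr hc)
  have hncard : CH.ncard = CH.toFinset.card := Set.ncard_eq_toFinset_card' CH
  have part1 : (1 - 3 * b) ^ CH.ncard ≤ P := by
    rw [hPf, hncard]
    exact fprob_ge_pow G vbl forb hg0 hg1 hbpos.le hpb hΔ' hsm hsm1 CH.toFinset
  have h13 : (0:ℝ) < 1 - 3*b := by linarith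
  have hlogM : 0 < Real.log M := Real.log_pos hM
  have hexp : Real.exp (-(6*b)) ≤ 1 - 3*b := by
    have h1 : Real.exp (-(6*b)) = (Real.exp (6*b))⁻¹ := Real.exp_neg _
    have h2 : 1 + 6*b ≤ Real.exp (6*b) := by linarith [Real.add_one_le_exp (6*b)]
    have h3 : (Real.exp (6*b))⁻¹ ≤ (1 + 6*b)⁻¹ :=
      inv_anti₀ (by linarith) h2
    have h4 : (1 + 6*b)⁻¹ ≤ 1 - 3*b := by
      rw [inv_eq_one_div, div_le_iff₀ (by linarith : (0:ℝ) < 1 + 6*b)]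
      nlinarith
    linarith [h1 ▸ le_trans h3 h4]
  have hlog13 : -(6*b) ≤ Real.log (1-3*b) := (Real.le_log_iff_exp_le h13).mpr hexp
  have hkey : Real.log M * (-η) ≤ (CH.ncard : ℝ) * Real.log (1-3*b) := by
    have hn0 : (0:ℝ) ≤ (CH.ncard : ℝ) := Nat.cast_nonneg _
    have hstep1 : (CH.ncard : ℝ) * (-(6*b)) ≤ (CH.ncard : ℝ) * Real.log (1-3*b) :=
      mul_le_mul_of_nonneg_left hlog13 hn0
    have hstep2 : (20 * (Δ:ℝ) * Real.log M) * (-(6*b)) ≤ (CH.ncard : ℝ) * (-(6*b)) :=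
      mul_le_mul_of_nonpos_right hsize (by linarith)
    have hstep3 : Real.log M * (-η) ≤ (20 * (Δ:ℝ) * Real.log M) * (-(6*b)) := by
      nlinarith [mul_le_mul_of_nonneg_right hbΔ hlogM.le,
        mul_nonneg (mul_nonneg (Nat.cast_nonneg Δ : (0:ℝ) ≤ (Δ:ℝ)) hbpos.le) hlogM.le]
    linarith
  have hfinal : M ^ (-η) ≤ (1 - 3*b) ^ CH.ncard := by
    have hM0 : (0:ℝ) < M := by linarith
    rw [Real.rpow_def_of_pos hM0]
    have hpoweq : ((1 - 3*b):ℝ) ^ CH.ncard = Real.exp ((CH.ncard:ℝ) * Real.log (1-3*b)) := by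
      rw [Real.exp_nat_mul, Real.exp_log h13]
    rw [hpoweq]
    exact Real.exp_le_exp.mpr hkey
  exact ⟨part1, hfinal.trans part1⟩
end

section
/- Let Φ be an atomic CSP with degree Δ and let π be a projection scheme with e·b·Δ ≤ 1, so that all conditional distributions μ_π[value(v) = · | Y^{-v}] are well defined. Fix v ∈ V and X, Y ∈ ∏_{u∈V} Q_u. Let 𝒞' be the set of constraints C ∈ 𝒞 that are not satisfied by at least one of the partial assignments X^{-v} and Y^{-v}, let G' be the subgraph of G(𝒞) induced on 𝒞', and let K ⊆ V be the union of vbl(C) over all C ∈ 𝒞' that lie in a connected component of G' containing at least one constraint whose variable set contains v. If X(u) = Y(u) for every u ∈ K ∖ {v}, then μ_π[value(v) = · | X^{-v}] = μ_π[value(v) = · | Y^{-v}] as distributions on Q_v. -/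
open Finset

/-- The subgraph of the constraint graph `G(𝒞)` induced on the constraints satisfying `P`:
two distinct constraints satisfying `P` are joined iff their variable sets intersect. -/
def inducedConstraintGraph {V ι : Type*} [DecidableEq V] (vbl : ι → Finset V)
    (P : ι → Prop) : SimpleGraph ι where
  Adj c c' := c ≠ c' ∧ P c ∧ P c' ∧ (vbl c ∩ vbl c').Nonempty
  symm := ⟨by
    rintro c c' ⟨h, hc, hc', x, hx⟩
    rw [Finset.mem_inter] at hx
    exact ⟨h.symm, hc', hc, x, Finset.mem_inter.mpr ⟨hx.2, hx.1⟩⟩⟩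
  loopless := ⟨by rintro c ⟨h, -⟩; exact h rfl⟩



private lemma card_filter_bridge {α : Type*} (s : Finset α) (p q : α → Prop)
    (hp : DecidablePred p) (hq : DecidablePred q) (h : ∀ a, p a ↔ q a) :
    (@Finset.filter α p hp s).card = (@Finset.filter α q hq s).card := by
  have h1 : @Finset.filter α p hp s = @Finset.filter α q hq s := by
    ext a
    rw [Finset.mem_filter, Finset.mem_filter, h a]
  rw [h1]


section Merge
set_option linter.unusedSectionVars false
variable {V : Type*} [Fintype V] [DecidableEq V] {Ω : V → Type*}
  [∀ v, Fintype (Ω v)] [∀ v, DecidableEq (Ω v)]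

private def mrg (W : Finset V) (σ τ : ∀ v, Ω v) : ∀ v, Ω v :=
  fun u => if u ∈ W then σ u else τ u

private lemma mrg_mrg (W : Finset V) (σ τ : ∀ v, Ω v) :
    mrg W (mrg W σ τ) (mrg W τ σ) = σ := by
  funext u; by_cases h : u ∈ W <;> simp [mrg, h]

private lemma merge_card_aux (U₁ U₂ : ∀ v, Finset (Ω v)) (W : Finset V)
    (hU : ∀ u ∈ W, U₁ u = U₂ u)
    (P₁ P₂ Q₁ Q₂ : (∀ v, Ω v) → Prop)
    [DecidablePred P₁] [DecidablePred P₂] [DecidablePred Q₁] [DecidablePred Q₂]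
    (hP₁ : ∀ σ τ, (∀ u ∈ W, σ u = τ u) → P₁ σ → P₁ τ)
    (hP₂ : ∀ σ τ, (∀ u ∈ W, σ u = τ u) → P₂ σ → P₂ τ)
    (hQ₁ : ∀ σ τ, (∀ u, u ∉ W → σ u = τ u) → Q₁ σ → Q₁ τ)
    (hQ₂ : ∀ σ τ, (∀ u, u ∉ W → σ u = τ u) → Q₂ σ → Q₂ τ) :
    ((Fintype.piFinset U₁).filter fun σ => P₁ σ ∧ Q₁ σ).card *
      ((Fintype.piFinset U₂).filter fun σ => P₂ σ ∧ Q₂ σ).card =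
    ((Fintype.piFinset U₂).filter fun σ => P₁ σ ∧ Q₂ σ).card *
      ((Fintype.piFinset U₁).filter fun σ => P₂ σ ∧ Q₁ σ).card := by
  rw [← card_product, ← card_product]
  refine card_bij' (fun p _ => (mrg W p.1 p.2, mrg W p.2 p.1))
    (fun p _ => (mrg W p.1 p.2, mrg W p.2 p.1)) ?_ ?_ ?_ ?_
  · rintro ⟨σ, τ⟩ hp
    simp only [mem_product, mem_filter, Fintype.mem_piFinset] at hp ⊢
    obtain ⟨⟨hσB, hσP, hσQ⟩, hτB, hτP, hτQ⟩ := hp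
    have hagree : ∀ u ∈ W, σ u = mrg W σ τ u := fun u hu => by simp [mrg, hu]
    have hagree' : ∀ u, u ∉ W → τ u = mrg W σ τ u := fun u hu => by simp [mrg, hu]
    have hagree2 : ∀ u ∈ W, τ u = mrg W τ σ u := fun u hu => by simp [mrg, hu]
    have hagree2' : ∀ u, u ∉ W → σ u = mrg W τ σ u := fun u hu => by simp [mrg, hu]
    refine ⟨⟨fun u => ?_, hP₁ _ _ hagree hσP, hQ₂ _ _ hagree' hτQ⟩,
      fun u => ?_, hP₂ _ _ hagree2 hτP, hQ₁ _ _ hagree2' hσQ⟩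
    · by_cases hu : u ∈ W
      · simpa [mrg, hu, ← hU u hu] using hσB u
      · simpa [mrg, hu] using hτB u
    · by_cases hu : u ∈ W
      · simpa [mrg, hu, hU u hu] using hτB u
      · simpa [mrg, hu] using hσB u
  · rintro ⟨σ, τ⟩ hp
    simp only [mem_product, mem_filter, Fintype.mem_piFinset] at hp ⊢
    obtain ⟨⟨hσB, hσP, hσQ⟩, hτB, hτP, hτQ⟩ := hp
    have hagree : ∀ u ∈ W, σ u = mrg W σ τ u := fun u hu => by simp [mrg, hu]
    have hagree' : ∀ u, u ∉ W → τ u = mrg W σ τ u := fun u hu => by simp [mrg, hu]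
    have hagree2 : ∀ u ∈ W, τ u = mrg W τ σ u := fun u hu => by simp [mrg, hu]
    have hagree2' : ∀ u, u ∉ W → σ u = mrg W τ σ u := fun u hu => by simp [mrg, hu]
    refine ⟨⟨fun u => ?_, hP₁ _ _ hagree hσP, hQ₁ _ _ hagree' hτQ⟩,
      fun u => ?_, hP₂ _ _ hagree2 hτP, hQ₂ _ _ hagree2' hσQ⟩
    · by_cases hu : u ∈ W
      · simpa [mrg, hu, hU u hu] using hσB u
      · simpa [mrg, hu] using hτB u
    · by_cases hu : u ∈ W
      · simpa [mrg, hu, ← hU u hu] using hτB u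
      · simpa [mrg, hu] using hσB u
  · rintro ⟨σ, τ⟩ _
    simp only [Prod.mk.injEq]
    exact ⟨mrg_mrg W σ τ, mrg_mrg W τ σ⟩
  · rintro ⟨σ, τ⟩ _
    simp only [Prod.mk.injEq]
    exact ⟨mrg_mrg W σ τ, mrg_mrg W τ σ⟩

private lemma factor_card (U : ∀ v, Finset (Ω v)) (W : Finset V)
    (P Q : (∀ v, Ω v) → Prop) [DecidablePred P] [DecidablePred Q]
    (hP : ∀ σ τ, (∀ u ∈ W, σ u = τ u) → P σ → P τ)
    (hQ : ∀ σ τ, (∀ u, u ∉ W → σ u = τ u) → Q σ → Q τ) :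
    ((Fintype.piFinset U).filter fun σ => P σ ∧ Q σ).card * (Fintype.piFinset U).card =
    ((Fintype.piFinset U).filter P).card * ((Fintype.piFinset U).filter Q).card := by
  have h := merge_card_aux U U W (fun _ _ => rfl) P (fun _ => True) Q (fun _ => True)
    hP (fun _ _ _ _ => trivial) hQ (fun _ _ _ _ => trivial)
  simp only [and_true, true_and, filter_true] at h
  rw [mul_comm] at h ⊢
  rw [h, mul_comm]

private lemma violate_card (U : ∀ v, Finset (Ω v)) (hU : ∀ u, (U u).Nonempty)
    (W : Finset V) (f : ∀ v, Ω v) :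
    ((((Fintype.piFinset U).filter fun σ => ∀ u ∈ W, σ u = f u).card : ℝ)) =
      (∏ u ∈ W, if f u ∈ U u then ((U u).card : ℝ)⁻¹ else 0) *
        ((Fintype.piFinset U).card : ℝ) := by
  classical
  have hfil : ((Fintype.piFinset U).filter fun σ => ∀ u ∈ W, σ u = f u)
      = Fintype.piFinset (fun u => if u ∈ W then ({f u} ∩ U u) else U u) := by
    ext σ
    simp only [mem_filter, Fintype.mem_piFinset]
    constructor
    · rintro ⟨h1, h2⟩ u
      by_cases hu : u ∈ W
      · rw [if_pos hu, mem_inter, mem_singleton]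
        exact ⟨h2 u hu, h2 u hu ▸ h1 u⟩
      · simp [hu, h1 u]
    · intro h
      refine ⟨fun u => ?_, fun u hu => ?_⟩
      · have := h u
        by_cases hu : u ∈ W
        · rw [if_pos hu, mem_inter] at this; exact this.2
        · rwa [if_neg hu] at this
      · have := h u
        rw [if_pos hu, mem_inter, mem_singleton] at this; exact this.1
  rw [hfil, Fintype.card_piFinset, Fintype.card_piFinset]
  push_cast
  rw [← prod_mul_prod_compl W (fun u => (((if u ∈ W then ({f u} ∩ U u) else U u).card : ℕ) : ℝ)),
      ← prod_mul_prod_compl W (fun u => (((U u).card : ℕ) : ℝ))]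
  have h1 : ∀ u ∈ Wᶜ, (((if u ∈ W then ({f u} ∩ U u) else U u).card : ℕ) : ℝ)
      = (((U u).card : ℕ) : ℝ) := by
    intro u hu; rw [mem_compl] at hu; rw [if_neg hu]
  rw [prod_congr rfl h1, ← mul_assoc]
  congr 1
  rw [← prod_mul_distrib]
  refine prod_congr rfl fun u hu => ?_
  rw [if_pos hu]
  by_cases hf : f u ∈ U u
  · rw [if_pos hf, singleton_inter_of_mem hf, card_singleton, inv_mul_cancel₀]
    · norm_num
    · exact_mod_cast (card_pos.mpr (hU u)).ne'
  · rw [if_neg hf, singleton_inter_of_notMem hf, card_empty, zero_mul]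
    norm_num


private lemma lll_arith (Δ : ℕ) (hΔ1 : 1 ≤ Δ) (p : ℝ) (hp0 : 0 ≤ p)
    (h : Real.exp 1 * p * Δ ≤ 1) :
    p ≤ ((Δ : ℝ) + 1)⁻¹ * (1 - ((Δ : ℝ) + 1)⁻¹) ^ (Δ - 1) := by
  have hD : (1 : ℝ) ≤ (Δ : ℝ) := by exact_mod_cast hΔ1
  have hD0 : (0 : ℝ) < (Δ : ℝ) := by linarith
  have hD1 : (0 : ℝ) < (Δ : ℝ) + 1 := by linarith
  have he : (0 : ℝ) < Real.exp 1 := Real.exp_pos 1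
  obtain ⟨k, hk⟩ : ∃ k, Δ = k + 1 := ⟨Δ - 1, by omega⟩
  have hk' : Δ - 1 = k := by omega
  have hsub : (1 : ℝ) - ((Δ : ℝ) + 1)⁻¹ = (Δ : ℝ) / ((Δ : ℝ) + 1) := by
    field_simp
    ring
  have hkey : ((Δ : ℝ) + 1) ^ Δ ≤ Real.exp 1 * (Δ : ℝ) ^ Δ := by
    have h1 : (Δ : ℝ) + 1 ≤ (Δ : ℝ) * Real.exp ((Δ : ℝ)⁻¹) := by
      have h2 := Real.add_one_le_exp ((Δ : ℝ)⁻¹)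
      calc (Δ : ℝ) + 1 = (Δ : ℝ) * ((Δ : ℝ)⁻¹ + 1) := by field_simp; ring
        _ ≤ (Δ : ℝ) * Real.exp ((Δ : ℝ)⁻¹) :=
            mul_le_mul_of_nonneg_left h2 (le_of_lt hD0)
    calc ((Δ : ℝ) + 1) ^ Δ ≤ ((Δ : ℝ) * Real.exp ((Δ : ℝ)⁻¹)) ^ Δ :=
          pow_le_pow_left₀ (le_of_lt hD1) h1 Δ
      _ = (Δ : ℝ) ^ Δ * Real.exp ((Δ : ℝ)⁻¹) ^ Δ := mul_pow _ _ _
      _ = (Δ : ℝ) ^ Δ * Real.exp (Δ * (Δ : ℝ)⁻¹) := by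
          rw [← Real.exp_nat_mul]
      _ = Real.exp 1 * (Δ : ℝ) ^ Δ := by
          rw [mul_inv_cancel₀ (ne_of_gt hD0)]; ring
  have hp' : p ≤ (Real.exp 1 * (Δ : ℝ))⁻¹ := by
    rw [inv_eq_one_div, le_div_iff₀ (by positivity)]
    calc p * (Real.exp 1 * (Δ : ℝ)) = Real.exp 1 * p * Δ := by ring
      _ ≤ 1 := h
  have hrhs : ((Δ : ℝ) + 1)⁻¹ * ((Δ : ℝ) / ((Δ : ℝ) + 1)) ^ k
      = (Δ : ℝ) ^ k / ((Δ : ℝ) + 1) ^ (k + 1) := by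
    rw [div_pow, pow_succ]
    field_simp
  rw [hsub, hk', hrhs]
  refine le_trans hp' ?_
  rw [inv_eq_one_div, div_le_div_iff₀ (by positivity) (by positivity)]
  calc 1 * ((Δ : ℝ) + 1) ^ (k + 1) = ((Δ : ℝ) + 1) ^ Δ := by rw [one_mul, hk]
    _ ≤ Real.exp 1 * (Δ : ℝ) ^ Δ := hkey
    _ = (Δ : ℝ) ^ k * (Real.exp 1 * (Δ : ℝ)) := by
        rw [hk, pow_succ]; ring


private lemma lll_count {ι : Type*} [Fintype ι] [DecidableEq ι]
    (U : ∀ v, Finset (Ω v)) (hU : ∀ u, (U u).Nonempty)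
    (vbl : ι → Finset V) (forb : ι → ∀ v, Ω v)
    (hvbl : ∀ c, (vbl c).Nonempty)
    (Δ : ℕ)
    (hΔ : ∀ c : ι, ((univ : Finset ι).filter fun c' => (vbl c ∩ vbl c').Nonempty).card ≤ Δ)
    (hp : ∀ c, Real.exp 1 *
      (∏ u ∈ vbl c, if forb c u ∈ U u then ((U u).card : ℝ)⁻¹ else 0) * (Δ : ℝ) ≤ 1) :
    0 < ((Fintype.piFinset U).filter fun σ => ∀ c, ∃ u ∈ vbl c, σ u ≠ forb c u).card := by
  classical
  have hBpos : 0 < (Fintype.piFinset U).card := by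
    rw [Fintype.card_piFinset]; exact prod_pos fun u _ => card_pos.mpr (hU u)
  by_cases hι : Nonempty ι
  swap
  · have heq : ((Fintype.piFinset U).filter fun σ => ∀ c, ∃ u ∈ vbl c, σ u ≠ forb c u)
        = Fintype.piFinset U := by
      apply filter_true_of_mem; intro σ _ c; exact absurd ⟨c⟩ hι
    rw [heq]; exact hBpos
  obtain ⟨c₀⟩ := hι
  have hΔ1 : 1 ≤ Δ := by
    have h1 : 0 < ((univ : Finset ι).filter fun c' => (vbl c₀ ∩ vbl c').Nonempty).card :=
      card_pos.mpr ⟨c₀, mem_filter.mpr ⟨mem_univ _, by simpa [inter_self] using hvbl c₀⟩⟩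
    have := hΔ c₀; omega
  set x : ℝ := ((Δ : ℝ) + 1)⁻¹ with hxdef
  have hDpos : (0:ℝ) < (Δ:ℝ) := by exact_mod_cast hΔ1
  have hx0 : 0 < x := by rw [hxdef]; positivity
  have hx1 : x < 1 := by
    rw [hxdef]
    rw [inv_lt_one_iff₀]
    right; linarith
  have h1x : (0:ℝ) < 1 - x := by linarith
  set p : ι → ℝ := fun c => ∏ u ∈ vbl c, if forb c u ∈ U u then ((U u).card : ℝ)⁻¹ else 0
    with hpdef
  have hp0 : ∀ c, 0 ≤ p c := fun c => prod_nonneg fun u _ => by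
    split <;> positivity
  set g : Finset ι → ℕ := fun T =>
    ((Fintype.piFinset U).filter fun σ => ∀ j ∈ T, ∃ u ∈ vbl j, σ u ≠ forb j u).card with hgdef
  have hBne : ((Fintype.piFinset U).card : ℝ) ≠ 0 := (Nat.cast_pos.mpr hBpos).ne'
  -- independence
  have hind : ∀ (c : ι) (T₂ : Finset ι), (∀ j ∈ T₂, ∀ u ∈ vbl j, u ∉ vbl c) →
      ((((Fintype.piFinset U).filter fun σ => (∀ u ∈ vbl c, σ u = forb c u) ∧
          ∀ j ∈ T₂, ∃ u ∈ vbl j, σ u ≠ forb j u).card : ℝ)) = p c * g T₂ := by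
    intro c T₂ hdisj
    have hfac := factor_card U (vbl c)
      (fun σ => ∀ u ∈ vbl c, σ u = forb c u)
      (fun σ => ∀ j ∈ T₂, ∃ u ∈ vbl j, σ u ≠ forb j u)
      (fun σ τ hag hP u hu => (hag u hu) ▸ hP u hu)
      (fun σ τ hag hQ j hj => by
        obtain ⟨u, hu, hne⟩ := hQ j hj
        exact ⟨u, hu, (hag u (hdisj j hj u hu)) ▸ hne⟩)
    have hv := violate_card U hU (vbl c) (forb c)
    have hcast := congrArg (Nat.cast : ℕ → ℝ) hfac
    push_cast at hcast
    rw [hv] at hcast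
    apply mul_right_cancel₀ hBne
    rw [hcast]
    simp only [hgdef]
    push_cast
    ring
  -- main claim
  have main : ∀ T : Finset ι, ∀ c : ι, (1 - x) * (g T : ℝ) ≤ (g (insert c T) : ℝ) := by
    intro T
    induction T using Finset.strongInduction with
    | _ T IH =>
      intro c
      by_cases hc : c ∈ T
      · rw [insert_eq_self.mpr hc]
        have : (0:ℝ) ≤ x * (g T : ℝ) := mul_nonneg hx0.le (Nat.cast_nonneg _)
        linarith
      · set T₁ := T.filter (fun j => (vbl c ∩ vbl j).Nonempty) with hT₁
        set T₂ := T.filter (fun j => ¬ (vbl c ∩ vbl j).Nonempty) with hT₂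
        have hT12 : T₁ ∪ T₂ = T := filter_union_filter_not_eq _ T
        have hsplit : g T = g (insert c T) +
            ((Fintype.piFinset U).filter fun σ => (∀ u ∈ vbl c, σ u = forb c u) ∧
              ∀ j ∈ T, ∃ u ∈ vbl j, σ u ≠ forb j u).card := by
          have hkey := card_filter_add_card_filter_not
            (s := (Fintype.piFinset U).filter fun σ => ∀ j ∈ T, ∃ u ∈ vbl j, σ u ≠ forb j u)
            (p := fun σ => ∀ u ∈ vbl c, σ u = forb c u)
          have e1 : (((Fintype.piFinset U).filter fun σ =>
                ∀ j ∈ T, ∃ u ∈ vbl j, σ u ≠ forb j u).filter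
                  fun σ => ∀ u ∈ vbl c, σ u = forb c u)
              = ((Fintype.piFinset U).filter fun σ => (∀ u ∈ vbl c, σ u = forb c u) ∧
                  ∀ j ∈ T, ∃ u ∈ vbl j, σ u ≠ forb j u) := by
            ext σ
            simp only [mem_filter]
            tauto
          have e2 : (((Fintype.piFinset U).filter fun σ =>
                ∀ j ∈ T, ∃ u ∈ vbl j, σ u ≠ forb j u).filter
                  fun σ => ¬ ∀ u ∈ vbl c, σ u = forb c u)
              = ((Fintype.piFinset U).filter fun σ =>
                  ∀ j ∈ insert c T, ∃ u ∈ vbl j, σ u ≠ forb j u) := by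
            ext σ
            simp only [mem_filter, forall_mem_insert, not_forall, exists_prop, ne_eq]
            tauto
          rw [e1, e2] at hkey
          simp only [hgdef]
          exact hkey.symm.trans (Nat.add_comm _ _)
        have hDD : (((Fintype.piFinset U).filter fun σ => (∀ u ∈ vbl c, σ u = forb c u) ∧
              ∀ j ∈ T, ∃ u ∈ vbl j, σ u ≠ forb j u).card) ≤
            (((Fintype.piFinset U).filter fun σ => (∀ u ∈ vbl c, σ u = forb c u) ∧
              ∀ j ∈ T₂, ∃ u ∈ vbl j, σ u ≠ forb j u).card) := by
          apply card_le_card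
          apply monotone_filter_right
          intro σ _ h
          exact ⟨h.1, fun j hj => h.2 j (filter_subset _ _ hj)⟩
        have hD2 := hind c T₂ (by
          intro j hj u hu huc
          exact (mem_filter.mp hj).2 ⟨u, mem_inter.mpr ⟨huc, hu⟩⟩)
        have hsubI : ∀ S : Finset ι, S ⊆ T₁ → ((1 - x) ^ S.card * (g T₂ : ℝ)) ≤ g (T₂ ∪ S) := by
          intro S
          induction S using Finset.induction_on with
          | empty => intro _; simp
          | @insert a S ha IH2 =>
            intro hins
            have haT₁ : a ∈ T₁ := hins (mem_insert_self a S)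
            have hST₁ : S ⊆ T₁ := (subset_insert a S).trans hins
            have hproper : T₂ ∪ S ⊂ T := by
              rw [Finset.ssubset_iff_of_subset
                (union_subset (filter_subset _ _) (hST₁.trans (filter_subset _ _)))]
              refine ⟨a, filter_subset _ _ haT₁, ?_⟩
              intro hmem
              rcases mem_union.mp hmem with h | h
              · exact (mem_filter.mp h).2 (mem_filter.mp haT₁).2
              · exact ha h
            calc (1 - x) ^ (insert a S).card * (g T₂ : ℝ)
                = (1 - x) * ((1 - x) ^ S.card * (g T₂ : ℝ)) := by
                  rw [card_insert_of_notMem ha, pow_succ]; ring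
              _ ≤ (1 - x) * (g (T₂ ∪ S) : ℝ) :=
                  mul_le_mul_of_nonneg_left (IH2 hST₁) h1x.le
              _ ≤ (g (insert a (T₂ ∪ S)) : ℝ) := IH _ hproper a
              _ = (g (T₂ ∪ insert a S) : ℝ) := by rw [union_insert]
        have hT₁card : T₁.card ≤ Δ - 1 := by
          have hsub1 : T₁ ⊆ ((univ : Finset ι).filter
              fun j => (vbl c ∩ vbl j).Nonempty).erase c := by
            intro j hj
            rw [mem_erase]
            exact ⟨fun hjc => hc (hjc ▸ (mem_filter.mp hj).1),
              mem_filter.mpr ⟨mem_univ _, (mem_filter.mp hj).2⟩⟩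
          calc T₁.card ≤ _ := card_le_card hsub1
            _ = ((univ : Finset ι).filter
                fun j => (vbl c ∩ vbl j).Nonempty).card - 1 :=
              card_erase_of_mem (mem_filter.mpr ⟨mem_univ _,
                by simpa [inter_self] using hvbl c⟩)
            _ ≤ Δ - 1 := Nat.sub_le_sub_right (hΔ c) 1
        have hpc : p c ≤ x * (1 - x) ^ T₁.card := by
          refine le_trans (lll_arith Δ hΔ1 (p c) (hp0 c) (hp c)) ?_
          rw [hxdef]
          refine mul_le_mul_of_nonneg_left ?_ (by positivity)
          exact pow_le_pow_of_le_one (by rw [← hxdef]; linarith) (by rw [← hxdef]; linarith)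
            hT₁card
        have hfin : (g T : ℝ) - (g (insert c T) : ℝ) ≤ x * (g T : ℝ) := by
          have e1 : (g T : ℝ) - (g (insert c T) : ℝ)
              = (((Fintype.piFinset U).filter fun σ => (∀ u ∈ vbl c, σ u = forb c u) ∧
                  ∀ j ∈ T, ∃ u ∈ vbl j, σ u ≠ forb j u).card : ℝ) := by
            rw [hsplit]; push_cast; ring
          rw [e1]
          calc (((Fintype.piFinset U).filter fun σ => (∀ u ∈ vbl c, σ u = forb c u) ∧
                  ∀ j ∈ T, ∃ u ∈ vbl j, σ u ≠ forb j u).card : ℝ)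
              ≤ (((Fintype.piFinset U).filter fun σ => (∀ u ∈ vbl c, σ u = forb c u) ∧
                  ∀ j ∈ T₂, ∃ u ∈ vbl j, σ u ≠ forb j u).card : ℝ) := by exact_mod_cast hDD
            _ = p c * (g T₂ : ℝ) := hD2
            _ ≤ (x * (1 - x) ^ T₁.card) * (g T₂ : ℝ) :=
                mul_le_mul_of_nonneg_right hpc (Nat.cast_nonneg _)
            _ = x * ((1 - x) ^ T₁.card * (g T₂ : ℝ)) := by ring
            _ ≤ x * (g (T₂ ∪ T₁) : ℝ) :=
                mul_le_mul_of_nonneg_left (hsubI T₁ subset_rfl) hx0.le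
            _ = x * (g T : ℝ) := by rw [union_comm, hT12]
        linarith
  -- positivity of all g T
  have hpos : ∀ T : Finset ι, 0 < g T := by
    intro T
    induction T using Finset.induction_on with
    | empty =>
      have he : g ∅ = (Fintype.piFinset U).card := by
        simp only [hgdef]
        rw [filter_true_of_mem]
        intro σ _ j hj
        exact absurd hj (notMem_empty j)
      rw [he]; exact hBpos
    | @insert a S ha IH =>
      have h1 := main S a
      have h2 : (0:ℝ) < (g S : ℝ) := by exact_mod_cast IH
      have : (0:ℝ) < (g (insert a S) : ℝ) := lt_of_lt_of_le (mul_pos h1x h2) h1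
      exact_mod_cast this
  have hfinal : ((Fintype.piFinset U).filter fun σ => ∀ c, ∃ u ∈ vbl c, σ u ≠ forb c u)
      = ((Fintype.piFinset U).filter fun σ =>
          ∀ j ∈ (univ : Finset ι), ∃ u ∈ vbl j, σ u ≠ forb j u) := by
    ext σ
    simp only [mem_filter, mem_univ, forall_true_left, true_implies]
  rw [hfinal]
  exact hpos univ


private lemma ratio_eq (nX nXy nY nYy aX aXy aY aYy qX qY bX bY : ℕ)
    (hbX : 0 < bX) (hbY : 0 < bY)
    (h1 : nXy * bX = aXy * qX) (h2 : nX * bX = aX * qX)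
    (h3 : nYy * bY = aYy * qY) (h4 : nY * bY = aY * qY)
    (hcross : aXy * aY = aYy * aX)
    (hnX : 0 < nX) (hnY : 0 < nY) :
    (nXy : ℝ) / (nX : ℝ) = (nYy : ℝ) / (nY : ℝ) := by
  rw [div_eq_div_iff (by exact_mod_cast hnX.ne') (by exact_mod_cast hnY.ne')]
  have key : nXy * nY * (bX * bY) = nYy * nX * (bX * bY) := by
    calc nXy * nY * (bX * bY) = (nXy * bX) * (nY * bY) := by ring
      _ = (aXy * qX) * (aY * qY) := by rw [h1, h4]
      _ = (aXy * aY) * (qX * qY) := by ring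
      _ = (aYy * aX) * (qX * qY) := by rw [hcross]
      _ = (aYy * qY) * (aX * qX) := by ring
      _ = (nYy * bY) * (nX * bX) := by rw [h3, h2]
      _ = nYy * nX * (bX * bY) := by ring
  have := Nat.eq_of_mul_eq_mul_right (Nat.mul_pos hbX hbY) key
  exact_mod_cast this

end Merge


/-- **The conditional marginal at `v` depends only on the relevant connected component of
failed constraints.**  `Φ` is an atomic CSP with degree `Δ`, `π` a (surjective) projection
scheme with `e·b·Δ ≤ 1` (so all conditional distributions `μ_π[value(v) = · | Y^{-v}]` are well
defined).  Fix `v` and projected assignments `X, Y`; `bad` is the set `𝒞'` of constraints not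
satisfied by at least one of `X^{-v}` and `Y^{-v}`; `G'` is the subgraph of `G(𝒞)` induced on
`𝒞'`, and `K` is the union of `vbl C` over `C ∈ 𝒞'` lying in a connected component of `G'`
containing a constraint whose variable set contains `v`.  If `X` and `Y` agree on `K \ {v}`,
then `μ_π[value(v) = · | X^{-v}] = μ_π[value(v) = · | Y^{-v}]` (both being well defined). -/
theorem stmt_6 {V : Type*} [Fintype V] [DecidableEq V]
    {Ω : V → Type*} [∀ v, Fintype (Ω v)] [∀ v, DecidableEq (Ω v)]
    (hΩ : ∀ v, 2 ≤ Fintype.card (Ω v))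
    {Q : V → Type*} [∀ v, Fintype (Q v)] [∀ v, DecidableEq (Q v)]
    (hQ : ∀ v, 1 ≤ Fintype.card (Q v))
    {ι : Type*} [Fintype ι]
    (vbl : ι → Finset V) (forb : ι → ∀ v, Ω v) (π : ∀ v, Ω v → Q v)
    (hsurj : ∀ v, Function.Surjective (π v))
    (Sat : Finset (∀ v, Ω v))
    (hSat : Sat = univ.filter fun σ => ∀ c, ∃ v ∈ vbl c, σ v ≠ forb c v)
    (hne : Sat.Nonempty)
    (Δ : ℕ)
    (hΔ : ∀ c : ι, ((univ : Finset ι).filter fun c' => (vbl c ∩ vbl c').Nonempty).card ≤ Δ)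
    (b : ℝ)
    (hb : ∀ c : ι, ∏ v ∈ vbl c,
      (((univ : Finset (Ω v)).filter fun x => π v x = π v (forb c v)).card : ℝ)⁻¹ ≤ b)
    (hLLL : Real.exp 1 * b * Δ ≤ 1)
    (v : V) (X Y : ∀ u, Q u)
    -- `bad = 𝒞'`: constraints not satisfied by at least one of `X^{-v}` and `Y^{-v}`
    (bad : ι → Prop)
    (hbad : ∀ c, bad c ↔ ((∀ u ∈ vbl c, u ≠ v → X u = π u (forb c u)) ∨
                          (∀ u ∈ vbl c, u ≠ v → Y u = π u (forb c u))))
    -- `X` and `Y` agree off `v` on `K`, the union of the variable sets of the constraints of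
    -- `𝒞'` whose component in `G'` contains a constraint whose variable set contains `v`
    (hXY : ∀ u : V, (∃ c, bad c ∧ u ∈ vbl c ∧ ∃ c₀, bad c₀ ∧ v ∈ vbl c₀ ∧
        (inducedConstraintGraph vbl bad).Reachable c c₀) → u ≠ v → X u = Y u) :
    0 < (Sat.filter fun σ => ∀ u, u ≠ v → π u (σ u) = X u).card ∧
    0 < (Sat.filter fun σ => ∀ u, u ≠ v → π u (σ u) = Y u).card ∧
    ∀ y : Q v,
      ((Sat.filter fun σ => (∀ u, u ≠ v → π u (σ u) = X u) ∧ π v (σ v) = y).card : ℝ) /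
          ((Sat.filter fun σ => ∀ u, u ≠ v → π u (σ u) = X u).card : ℝ) =
        ((Sat.filter fun σ => (∀ u, u ≠ v → π u (σ u) = Y u) ∧ π v (σ v) = y).card : ℝ) /
          ((Sat.filter fun σ => ∀ u, u ≠ v → π u (σ u) = Y u).card : ℝ) := by
  classical
  have hvbl : ∀ c, (vbl c).Nonempty := by
    obtain ⟨σ₀, hσ₀⟩ := hne
    rw [hSat, mem_filter] at hσ₀
    intro c
    obtain ⟨u, hu, -⟩ := hσ₀.2 c
    exact ⟨u, hu⟩
  have hUne : ∀ (Z : ∀ u, Q u) (u : V),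
      (if u = v then (univ : Finset (Ω u)) else univ.filter fun x => π u x = Z u).Nonempty := by
    intro Z u
    by_cases hu : u = v
    · rw [if_pos hu]
      have h0 : 0 < Fintype.card (Ω u) := by have := hΩ u; omega
      exact univ_nonempty_iff.mpr (Fintype.card_pos_iff.mp h0)
    · rw [if_neg hu]
      obtain ⟨x, hx⟩ := hsurj u (Z u)
      exact ⟨x, mem_filter.mpr ⟨mem_univ _, hx⟩⟩
  have hmem : ∀ (Z : ∀ u, Q u) (σ : ∀ u, Ω u),
      σ ∈ Fintype.piFinset (fun u => if u = v then (univ : Finset (Ω u))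
          else univ.filter fun x => π u x = Z u) ↔ ∀ u, u ≠ v → π u (σ u) = Z u := by
    intro Z σ
    rw [Fintype.mem_piFinset]
    constructor
    · intro h u huv
      have h2 := h u
      rw [if_neg huv, mem_filter] at h2
      exact h2.2
    · intro h u
      by_cases hu : u = v
      · rw [if_pos hu]; exact mem_univ _
      · rw [if_neg hu]; exact mem_filter.mpr ⟨mem_univ _, h u hu⟩
  have hBpos : ∀ (Z : ∀ u, Q u),
      0 < (Fintype.piFinset (fun u => if u = v then (univ : Finset (Ω u))
          else univ.filter fun x => π u x = Z u)).card := by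
    intro Z
    rw [Fintype.card_piFinset]
    exact prod_pos fun u _ => card_pos.mpr (hUne Z u)
  -- LLL positivity
  have hposZ : ∀ (Z : ∀ u, Q u),
      0 < ((Fintype.piFinset (fun u => if u = v then (univ : Finset (Ω u))
          else univ.filter fun x => π u x = Z u)).filter
          fun σ => ∀ c, ∃ u ∈ vbl c, σ u ≠ forb c u).card := by
    intro Z
    refine lll_count _ (hUne Z) vbl forb hvbl Δ hΔ ?_
    intro c
    have hterm : (∏ u ∈ vbl c, if forb c u ∈ (if u = v then (univ : Finset (Ω u))
          else univ.filter fun x => π u x = Z u) then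
          (((if u = v then (univ : Finset (Ω u))
          else univ.filter fun x => π u x = Z u)).card : ℝ)⁻¹ else 0)
        ≤ ∏ u ∈ vbl c,
          (((univ : Finset (Ω u)).filter fun x => π u x = π u (forb c u)).card : ℝ)⁻¹ := by
      refine prod_le_prod (fun u _ => ?_) (fun u _ => ?_)
      · split <;> positivity
      · by_cases hu : u = v
        · rw [if_pos hu]
          rw [if_pos (mem_univ (forb c u))]
          have h1 : 0 < ((univ : Finset (Ω u)).filter fun x => π u x = π u (forb c u)).card :=
            card_pos.mpr ⟨forb c u, mem_filter.mpr ⟨mem_univ _, rfl⟩⟩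
          refine inv_anti₀ (by exact_mod_cast h1) ?_
          exact_mod_cast card_le_card (filter_subset _ _)
        · rw [if_neg hu]
          by_cases hf : forb c u ∈ univ.filter fun x => π u x = Z u
          · rw [if_pos hf]
            have h2 : π u (forb c u) = Z u := (mem_filter.mp hf).2
            rw [h2]
          · rw [if_neg hf]
            positivity
    calc Real.exp 1 * (∏ u ∈ vbl c, if forb c u ∈ (if u = v then (univ : Finset (Ω u))
            else univ.filter fun x => π u x = Z u) then
            (((if u = v then (univ : Finset (Ω u))
            else univ.filter fun x => π u x = Z u)).card : ℝ)⁻¹ else 0) * (Δ : ℝ)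
        ≤ Real.exp 1 * (∏ u ∈ vbl c,
            (((univ : Finset (Ω u)).filter fun x => π u x = π u (forb c u)).card : ℝ)⁻¹)
            * (Δ : ℝ) :=
          mul_le_mul_of_nonneg_right
            (mul_le_mul_of_nonneg_left hterm (Real.exp_pos 1).le) (Nat.cast_nonneg _)
      _ ≤ Real.exp 1 * b * (Δ : ℝ) :=
          mul_le_mul_of_nonneg_right
            (mul_le_mul_of_nonneg_left (hb c) (Real.exp_pos 1).le) (Nat.cast_nonneg _)
      _ ≤ 1 := hLLL
  -- identification of Sat-filters with box-filters
  have hsatfil : ∀ (Z : ∀ u, Q u),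
      Sat.filter (fun σ => ∀ u, u ≠ v → π u (σ u) = Z u)
        = (Fintype.piFinset (fun u => if u = v then (univ : Finset (Ω u))
            else univ.filter fun x => π u x = Z u)).filter
            (fun σ => ∀ c, ∃ u ∈ vbl c, σ u ≠ forb c u) := by
    intro Z
    ext σ
    simp only [hSat, mem_filter, mem_univ, true_and, hmem Z σ]
    tauto
  have hsatfily : ∀ (Z : ∀ u, Q u) (y : Q v),
      Sat.filter (fun σ => (∀ u, u ≠ v → π u (σ u) = Z u) ∧ π v (σ v) = y)
        = (Fintype.piFinset (fun u => if u = v then (univ : Finset (Ω u))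
            else univ.filter fun x => π u x = Z u)).filter
            (fun σ => (∀ c, ∃ u ∈ vbl c, σ u ≠ forb c u) ∧ π v (σ v) = y) := by
    intro Z y
    ext σ
    simp only [hSat, mem_filter, mem_univ, true_and, hmem Z σ]
    tauto
  -- linked constraints and the separating set S
  set Lk : ι → Prop := fun c => bad c ∧ ∃ c₀, bad c₀ ∧ v ∈ vbl c₀ ∧
    (inducedConstraintGraph vbl bad).Reachable c c₀ with hLkdef
  set S : Finset V := univ.filter (fun u => u = v ∨ ∃ c, Lk c ∧ u ∈ vbl c) with hSdef
  have hvS : v ∈ S := mem_filter.mpr ⟨mem_univ _, Or.inl rfl⟩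
  have hvblS : ∀ c, Lk c → ∀ u ∈ vbl c, u ∈ S := fun c hc u hu =>
    mem_filter.mpr ⟨mem_univ _, Or.inr ⟨c, hc, hu⟩⟩
  have hdisjS : ∀ c, bad c → ¬ Lk c → ∀ u ∈ vbl c, u ∉ S := by
    intro c hbc hnc u hu hus
    rcases (mem_filter.mp hus).2 with rfl | ⟨c', hc', hu'⟩
    · exact hnc ⟨hbc, c, hbc, hu, SimpleGraph.Reachable.refl _⟩
    · by_cases hcc : c = c'
      · exact hnc (hcc ▸ hc')
      · obtain ⟨hbc', c₀, hb₀, hv₀, hr⟩ := hc'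
        refine hnc ⟨hbc, c₀, hb₀, hv₀, SimpleGraph.Reachable.trans ?_ hr⟩
        exact SimpleGraph.Adj.reachable
          (show (inducedConstraintGraph vbl bad).Adj c c' from
            ⟨hcc, hbc, hbc', ⟨u, mem_inter.mpr ⟨hu, hu'⟩⟩⟩)
  have hUS : ∀ u ∈ S,
      (if u = v then (univ : Finset (Ω u)) else univ.filter fun x => π u x = X u)
      = (if u = v then (univ : Finset (Ω u)) else univ.filter fun x => π u x = Y u) := by
    intro u hus
    by_cases hu : u = v
    · rw [if_pos hu, if_pos hu]
    · rw [if_neg hu, if_neg hu]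
      have hlk : ∃ c, bad c ∧ u ∈ vbl c ∧ ∃ c₀, bad c₀ ∧ v ∈ vbl c₀ ∧
          (inducedConstraintGraph vbl bad).Reachable c c₀ := by
        rcases (mem_filter.mp hus).2 with h | ⟨c, ⟨hbc, c₀, h₀⟩, hu'⟩
        · exact absurd h hu
        · exact ⟨c, hbc, hu', c₀, h₀⟩
      rw [hXY u hlk hu]
  -- the predicates
  set P0 : (∀ u, Ω u) → Prop := fun σ => ∀ c, Lk c → ∃ u ∈ vbl c, σ u ≠ forb c u with hP0def
  set Qp : (∀ u, Ω u) → Prop :=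
    fun σ => ∀ c, bad c → ¬ Lk c → ∃ u ∈ vbl c, σ u ≠ forb c u with hQpdef
  have hP0dep : ∀ σ τ, (∀ u ∈ S, σ u = τ u) → P0 σ → P0 τ := by
    intro σ τ hag hP c hc
    obtain ⟨u, hu, hne'⟩ := hP c hc
    exact ⟨u, hu, (hag u (hvblS c hc u hu)) ▸ hne'⟩
  have hQdep : ∀ σ τ, (∀ u, u ∉ S → σ u = τ u) → Qp σ → Qp τ := by
    intro σ τ hag hQ' c hbc hnc
    obtain ⟨u, hu, hne'⟩ := hQ' c hbc hnc
    exact ⟨u, hu, (hag u (hdisjS c hbc hnc u hu)) ▸ hne'⟩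
  have hPydep : ∀ (y : Q v) σ τ, (∀ u ∈ S, σ u = τ u) →
      (P0 σ ∧ π v (σ v) = y) → (P0 τ ∧ π v (τ v) = y) := by
    rintro y σ τ hag ⟨h1, h2⟩
    exact ⟨hP0dep σ τ hag h1, (hag v hvS) ▸ h2⟩
  -- equivalence of satisfaction with split form, inside the box
  have hequiv : ∀ (Z : ∀ u, Q u),
      (∀ c, (∀ u ∈ vbl c, u ≠ v → Z u = π u (forb c u)) → bad c) →
      ∀ σ ∈ Fintype.piFinset (fun u => if u = v then (univ : Finset (Ω u))
          else univ.filter fun x => π u x = Z u),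
        ((∀ c, ∃ u ∈ vbl c, σ u ≠ forb c u) ↔ (P0 σ ∧ Qp σ)) := by
    intro Z hZbad σ hσ
    constructor
    · intro h; exact ⟨fun c _ => h c, fun c _ _ => h c⟩
    · rintro ⟨h1, h2⟩ c
      by_cases hlk : Lk c
      · exact h1 c hlk
      by_cases hbc : bad c
      · exact h2 c hbc hlk
      by_contra hcon
      push_neg at hcon
      refine absurd (hZbad c ?_) hbc
      intro u hu huv
      rw [← hcon u hu]
      exact (((hmem Z σ).mp hσ) u huv).symm
  have hZbadX : ∀ c, (∀ u ∈ vbl c, u ≠ v → X u = π u (forb c u)) → bad c :=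
    fun c h => (hbad c).mpr (Or.inl h)
  have hZbadY : ∀ c, (∀ u ∈ vbl c, u ≠ v → Y u = π u (forb c u)) → bad c :=
    fun c h => (hbad c).mpr (Or.inr h)
  -- filter splits
  have hGX : ((Fintype.piFinset (fun u => if u = v then (univ : Finset (Ω u))
        else univ.filter fun x => π u x = X u)).filter
        fun σ => ∀ c, ∃ u ∈ vbl c, σ u ≠ forb c u)
      = ((Fintype.piFinset (fun u => if u = v then (univ : Finset (Ω u))
        else univ.filter fun x => π u x = X u)).filter
        fun σ => P0 σ ∧ Qp σ) :=
    filter_congr (hequiv X hZbadX)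
  have hGY : ((Fintype.piFinset (fun u => if u = v then (univ : Finset (Ω u))
        else univ.filter fun x => π u x = Y u)).filter
        fun σ => ∀ c, ∃ u ∈ vbl c, σ u ≠ forb c u)
      = ((Fintype.piFinset (fun u => if u = v then (univ : Finset (Ω u))
        else univ.filter fun x => π u x = Y u)).filter
        fun σ => P0 σ ∧ Qp σ) :=
    filter_congr (hequiv Y hZbadY)
  have hGXy : ∀ y : Q v, ((Fintype.piFinset (fun u => if u = v then (univ : Finset (Ω u))
        else univ.filter fun x => π u x = X u)).filter
        fun σ => (∀ c, ∃ u ∈ vbl c, σ u ≠ forb c u) ∧ π v (σ v) = y)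
      = ((Fintype.piFinset (fun u => if u = v then (univ : Finset (Ω u))
        else univ.filter fun x => π u x = X u)).filter
        fun σ => (P0 σ ∧ π v (σ v) = y) ∧ Qp σ) := by
    intro y
    refine filter_congr fun σ hσ => ?_
    have := hequiv X hZbadX σ hσ
    tauto
  have hGYy : ∀ y : Q v, ((Fintype.piFinset (fun u => if u = v then (univ : Finset (Ω u))
        else univ.filter fun x => π u x = Y u)).filter
        fun σ => (∀ c, ∃ u ∈ vbl c, σ u ≠ forb c u) ∧ π v (σ v) = y)
      = ((Fintype.piFinset (fun u => if u = v then (univ : Finset (Ω u))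
        else univ.filter fun x => π u x = Y u)).filter
        fun σ => (P0 σ ∧ π v (σ v) = y) ∧ Qp σ) := by
    intro y
    refine filter_congr fun σ hσ => ?_
    have := hequiv Y hZbadY σ hσ
    tauto
  -- factorizations
  have hfacX := factor_card (fun u => if u = v then (univ : Finset (Ω u))
      else univ.filter fun x => π u x = X u) S P0 Qp hP0dep hQdep
  have hfacY := factor_card (fun u => if u = v then (univ : Finset (Ω u))
      else univ.filter fun x => π u x = Y u) S P0 Qp hP0dep hQdep
  have hfacXy : ∀ y : Q v, _ := fun y => factor_card
    (fun u => if u = v then (univ : Finset (Ω u)) else univ.filter fun x => π u x = X u)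
    S (fun σ => P0 σ ∧ π v (σ v) = y) Qp (hPydep y) hQdep
  have hfacYy : ∀ y : Q v, _ := fun y => factor_card
    (fun u => if u = v then (univ : Finset (Ω u)) else univ.filter fun x => π u x = Y u)
    S (fun σ => P0 σ ∧ π v (σ v) = y) Qp (hPydep y) hQdep
  -- cross identity
  have hcross : ∀ y : Q v,
      ((Fintype.piFinset (fun u => if u = v then (univ : Finset (Ω u))
          else univ.filter fun x => π u x = X u)).filter
          fun σ => P0 σ ∧ π v (σ v) = y).card *
        ((Fintype.piFinset (fun u => if u = v then (univ : Finset (Ω u))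
          else univ.filter fun x => π u x = Y u)).filter P0).card
      = ((Fintype.piFinset (fun u => if u = v then (univ : Finset (Ω u))
          else univ.filter fun x => π u x = Y u)).filter
          fun σ => P0 σ ∧ π v (σ v) = y).card *
        ((Fintype.piFinset (fun u => if u = v then (univ : Finset (Ω u))
          else univ.filter fun x => π u x = X u)).filter P0).card := by
    intro y
    have h := merge_card_aux
      (fun u => if u = v then (univ : Finset (Ω u)) else univ.filter fun x => π u x = X u)
      (fun u => if u = v then (univ : Finset (Ω u)) else univ.filter fun x => π u x = Y u)
      S hUS (fun σ => P0 σ ∧ π v (σ v) = y) P0 (fun _ => True) (fun _ => True)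
      (hPydep y) hP0dep (fun _ _ _ h => h) (fun _ _ _ h => h)
    simpa only [and_true] using h
  -- positivity of the two denominators (as Sat-filters)
  have hposX : 0 < (Sat.filter fun σ => ∀ u, u ≠ v → π u (σ u) = X u).card :=
    lt_of_lt_of_eq (hposZ X) (congrArg Finset.card (hsatfil X)).symm
  have hposY : 0 < (Sat.filter fun σ => ∀ u, u ≠ v → π u (σ u) = Y u).card :=
    lt_of_lt_of_eq (hposZ Y) (congrArg Finset.card (hsatfil Y)).symm
  refine ⟨hposX, hposY, ?_⟩
  intro y
  have hratio := ratio_eq _ _ _ _ _ _ _ _ _ _ _ _ (hBpos X) (hBpos Y)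
    (hfacXy y) hfacX (hfacYy y) hfacY (hcross y)
    (lt_of_lt_of_eq (lt_of_lt_of_eq (hposZ X) (congrArg Finset.card hGX))
      (card_filter_bridge _ _ _ _ _ fun a => Iff.rfl))
    (lt_of_lt_of_eq (lt_of_lt_of_eq (hposZ Y) (congrArg Finset.card hGY))
      (card_filter_bridge _ _ _ _ _ fun a => Iff.rfl))
  convert hratio using 2
  · exact_mod_cast (congrArg Finset.card ((hsatfily X y).trans (hGXy y))).trans
      (card_filter_bridge _ _ _ _ _ fun a => Iff.rfl)
  · exact_mod_cast (congrArg Finset.card ((hsatfil X).trans hGX)).trans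
      (card_filter_bridge _ _ _ _ _ fun a => Iff.rfl)
  · exact_mod_cast (congrArg Finset.card ((hsatfily Y y).trans (hGYy y))).trans
      (card_filter_bridge _ _ _ _ _ fun a => Iff.rfl)
  · exact_mod_cast (congrArg Finset.card ((hsatfil Y).trans hGY)).trans
      (card_filter_bridge _ _ _ _ _ fun a => Iff.rfl)
end

section
/- There exist real numbers α, θ₁, θ_f ∈ (0,1) and γ ≥ 0.1742 such that γ ≤ θ₁ < α, 2γ ≤ θ_f < 1 − α, D(θ₁, α) ≥ γ·log 2, and D(θ_f, 1 − α) ≥ γ·log 2. -/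
/-- The Kullback–Leibler divergence `D(x,y)` between `Bernoulli(x)` and `Bernoulli(y)`. -/
noncomputable def klBern (x y : ℝ) : ℝ :=
  x * Real.log (x / y) + (1 - x) * Real.log ((1 - x) / (1 - y))

/-- Lower bound for the logarithm: if `(1 - b/n)^n * q ≥ 1` then `b ≤ log q`. -/
lemma log_lb (q b : ℝ) (n : ℕ) (hn : 0 < n) (hq : 0 < q) (hd : 0 < 1 - b / n)
    (h : 1 ≤ (1 - b / n) ^ n * q) : b ≤ Real.log q := by
  have h1 : (1 - b / n : ℝ) ≤ Real.exp (-(b / n)) := by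
    have := Real.add_one_le_exp (-(b / n)); linarith
  have h2 : (1 - b / n) ^ n ≤ Real.exp (-(b / n)) ^ n :=
    pow_le_pow_left₀ hd.le h1 n
  rw [← Real.exp_nat_mul] at h2
  have hne : (n : ℝ) ≠ 0 := Nat.cast_ne_zero.mpr hn.ne'
  have h3 : (n : ℝ) * -(b / n) = -b := by field_simp
  rw [h3] at h2
  have h4 : 1 ≤ Real.exp (-b) * q := le_trans h (by
    have := Real.exp_pos (-b)
    nlinarith [hq])
  have h5 : Real.exp b ≤ q := by
    have he := Real.exp_pos (-b)
    have : Real.exp b * (Real.exp (-b) * q) = q := by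
      rw [← mul_assoc, ← Real.exp_add]; simp
    nlinarith [Real.exp_pos b]
  exact (Real.le_log_iff_exp_le hq).mpr h5

/-- **Feasibility of the optimization problem for Boolean alphabets (Case 2 of
Proposition 3.5).**  There exist `α, θ₁, θ_f ∈ (0,1)` and `γ ≥ 0.1742` with `γ ≤ θ₁ < α`,
`2γ ≤ θ_f < 1 - α`, `D(θ₁, α) ≥ γ·log 2` and `D(θ_f, 1-α) ≥ γ·log 2`. -/
theorem stmt_8 :
    ∃ α θ₁ θf γ : ℝ,
      α ∈ Set.Ioo (0 : ℝ) 1 ∧ θ₁ ∈ Set.Ioo (0 : ℝ) 1 ∧ θf ∈ Set.Ioo (0 : ℝ) 1 ∧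
      0.1742 ≤ γ ∧
      γ ≤ θ₁ ∧ θ₁ < α ∧
      2 * γ ≤ θf ∧ θf < 1 - α ∧
      γ * Real.log 2 ≤ klBern θ₁ α ∧
      γ * Real.log 2 ≤ klBern θf (1 - α) := by
  refine ⟨0.405, 0.1742, 0.3484, 0.1742, ⟨by norm_num, by norm_num⟩,
    ⟨by norm_num, by norm_num⟩, ⟨by norm_num, by norm_num⟩,
    le_refl _, le_refl _, by norm_num, by norm_num, by norm_num, ?_, ?_⟩
  · -- klBern 0.1742 0.405 ≥ 0.1742 * log 2
    have hL1 : (-0.8445 : ℝ) ≤ Real.log (0.1742 / 0.405) := by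
      apply log_lb _ _ 512 (by norm_num) (by norm_num) (by norm_num)
      norm_num
      rw [show (512:ℕ) = 256 * 2 from rfl, pow_mul]
      norm_num
    have hL2 : (0.3270 : ℝ) ≤ Real.log ((1 - 0.1742) / (1 - 0.405)) := by
      apply log_lb _ _ 128 (by norm_num) (by norm_num) (by norm_num)
      norm_num
    have hlog2 : Real.log 2 < 0.6931471808 := Real.log_two_lt_d9
    unfold klBern
    nlinarith
  · -- klBern 0.3484 (1 - 0.405) ≥ 0.1742 * log 2
    have hL3 : (-0.5360 : ℝ) ≤ Real.log (0.3484 / (1 - 0.405)) := by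
      apply log_lb _ _ 256 (by norm_num) (by norm_num) (by norm_num)
      norm_num
    have hL4 : (0.4740 : ℝ) ≤ Real.log ((1 - 0.3484) / (1 - (1 - 0.405))) := by
      apply log_lb _ _ 128 (by norm_num) (by norm_num) (by norm_num)
      norm_num
    have hlog2 : Real.log 2 < 0.6931471808 := Real.log_two_lt_d9
    unfold klBern
    nlinarith
end

section
/- Let V be a finite set and let 𝒞 be a finite family of constraints, each constraint C having a variable set vbl(C) ⊆ V with |vbl(C)| = k, such that each constraint shares a variable with at most Δ constraints in total (including itself). Let θ₁, θ_f, α ∈ (0,1) with θ₁ < α and θ_f < 1 − α satisfy max(e^{−D(θ₁,α)·k}, e^{−D(θ_f,1−α)·k}) < (2eΔ)^{-1}. Then there exists a subset V₁ ⊆ V such that for every C ∈ 𝒞, |V₁ ∩ vbl(C)| ≥ θ₁·k and |vbl(C) ∖ V₁| ≥ θ_f·k. -/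
open Finset

/-! ### Finite probability preliminaries -/

noncomputable def PrW {Ω : Type*} (w : Ω → ℝ) (E : Finset Ω) : ℝ := ∑ x ∈ E, w x

section basics
variable {Ω : Type*} [DecidableEq Ω] {w : Ω → ℝ}

omit [DecidableEq Ω] in
lemma PrW_nonneg (hw : ∀ x, 0 ≤ w x) (E : Finset Ω) : 0 ≤ PrW w E :=
  Finset.sum_nonneg fun x _ => hw x

omit [DecidableEq Ω] in
lemma PrW_mono (hw : ∀ x, 0 ≤ w x) {E F : Finset Ω} (h : E ⊆ F) : PrW w E ≤ PrW w F :=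
  Finset.sum_le_sum_of_subset_of_nonneg h (fun x _ _ => hw x)

lemma PrW_sdiff (E F : Finset Ω) : PrW w (E \ F) = PrW w E - PrW w (E ∩ F) := by
  have h : E ∩ F ⊆ E := Finset.inter_subset_left
  have h1 := Finset.sum_sdiff (f := w) h
  have h2 : E \ (E ∩ F) = E \ F := by ext x; simp [Finset.mem_sdiff]
  rw [h2] at h1
  unfold PrW
  linarith

lemma PrW_union_le (hw : ∀ x, 0 ≤ w x) (E F : Finset Ω) :
    PrW w (E ∪ F) ≤ PrW w E + PrW w F := by
  have h1 := Finset.sum_union_inter (s₁ := E) (s₂ := F) (f := w)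
  have h2 : 0 ≤ PrW w (E ∩ F) := PrW_nonneg hw _
  unfold PrW at *
  linarith

end basics

lemma sum_pow_card {V : Type*} [DecidableEq V] (U : Finset V) (a b : ℝ) :
    ∑ A ∈ U.powerset, a ^ A.card * b ^ (U.card - A.card) = (a + b) ^ U.card := by
  have h := Finset.prod_add (fun _ : V => a) (fun _ : V => b) U
  simp only [Finset.prod_const] at h
  rw [h]
  exact Finset.sum_congr rfl fun t ht => by
    rw [Finset.card_sdiff_of_subset (Finset.mem_powerset.1 ht)]

/-! ### Abstract finite Lovász Local Lemma -/

section LLL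
variable {Ω ι : Type*} [Fintype Ω] [DecidableEq Ω] [DecidableEq ι]
  (w : Ω → ℝ) (A : ι → Finset Ω)

/-- the event that none of the `A j`, `j ∈ S`, occur -/
def avoidE (S : Finset ι) : Finset Ω := univ \ S.biUnion A

variable {w A} {N : ι → Finset ι} {x : ℝ} {d : ℕ}

lemma avoid_insert (j : ι) (S : Finset ι) :
    avoidE A (insert j S) = avoidE A S \ A j := by
  ext ω; simp [avoidE, mem_sdiff, mem_biUnion]; tauto

theorem lll_main_s9 (hw : ∀ y, 0 ≤ w y) (hx0 : 0 ≤ x) (hx1 : x < 1)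
    (hNi : ∀ i, i ∈ N i)
    (hind : ∀ i (S : Finset ι), Disjoint S (N i) →
      PrW w (A i ∩ avoidE A S) = PrW w (A i) * PrW w (avoidE A S))
    (hbound : ∀ i, PrW w (A i) ≤ x * (1 - x) ^ d)
    (hNd : ∀ i, (N i).card ≤ d + 1) :
    ∀ (S : Finset ι) (i : ι), i ∉ S → PrW w (A i ∩ avoidE A S) ≤ x * PrW w (avoidE A S) := by
  intro S
  induction S using Finset.strongInduction with
  | _ S IH =>
  intro i hi
  set S₁ : Finset ι := S ∩ N i with hS₁
  set S₂ : Finset ι := S \ N i with hS₂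
  have hS : S₂ ∪ S₁ = S := Finset.sdiff_union_inter S (N i)
  have h1x : (0:ℝ) ≤ 1 - x := by linarith
  have sub : ∀ T : Finset ι, T ⊆ S₁ →
      (1 - x) ^ T.card * PrW w (avoidE A S₂) ≤ PrW w (avoidE A (S₂ ∪ T)) := by
    intro T
    induction T using Finset.induction_on with
    | empty => intro _; simp
    | @insert j T hjT IHT =>
      intro hins
      have hjS₁ : j ∈ S₁ := hins (mem_insert_self j T)
      have hTS₁ : T ⊆ S₁ := fun y hy => hins (mem_insert_of_mem hy)
      have hUsub : S₂ ∪ T ⊂ S := by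
        refine Finset.ssubset_iff_of_subset ?_ |>.2 ⟨j, ?_, ?_⟩
        · rw [← hS]; exact Finset.union_subset_union le_rfl hTS₁
        · rw [← hS]; exact Finset.mem_union_right _ hjS₁
        · simp only [Finset.mem_union]
          push_neg
          constructor
          · intro hc; exact (Finset.mem_sdiff.1 hc).2 (Finset.inter_subset_right hjS₁)
          · exact hjT
      have hjU : j ∉ S₂ ∪ T := by
        simp only [Finset.mem_union]
        push_neg
        exact ⟨fun hc => (Finset.mem_sdiff.1 hc).2 (Finset.inter_subset_right hjS₁), hjT⟩
      have hrec := IH _ hUsub j hjU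
      have hins2 : S₂ ∪ insert j T = insert j (S₂ ∪ T) := by
        ext y; simp [Finset.mem_insert]
      rw [hins2, avoid_insert, PrW_sdiff]
      have h3 : PrW w (avoidE A (S₂ ∪ T) ∩ A j) = PrW w (A j ∩ avoidE A (S₂ ∪ T)) := by
        rw [Finset.inter_comm]
      rw [h3]
      have h4 := IHT hTS₁
      have h5 : (0:ℝ) ≤ PrW w (avoidE A S₂) := PrW_nonneg hw _
      calc (1-x) ^ (insert j T).card * PrW w (avoidE A S₂)
          = (1-x) * ((1-x) ^ T.card * PrW w (avoidE A S₂)) := by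
            rw [Finset.card_insert_of_notMem hjT]; ring
        _ ≤ (1-x) * PrW w (avoidE A (S₂ ∪ T)) := by
            apply mul_le_mul_of_nonneg_left h4 h1x
        _ ≤ PrW w (avoidE A (S₂ ∪ T)) - PrW w (A j ∩ avoidE A (S₂ ∪ T)) := by
            nlinarith [PrW_nonneg hw (avoidE A (S₂ ∪ T))]
  have hS₁card : S₁.card ≤ d := by
    have hsub : S₁ ⊆ N i \ {i} := by
      intro y hy
      simp only [Finset.mem_sdiff, Finset.mem_singleton]
      refine ⟨Finset.inter_subset_right hy, ?_⟩
      rintro rfl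
      exact hi (Finset.inter_subset_left hy)
    have h6 := Finset.card_le_card hsub
    have h7 : (N i \ {i}).card = (N i).card - 1 := by
      rw [Finset.sdiff_singleton_eq_erase, Finset.card_erase_of_mem (hNi i)]
    have := hNd i
    omega
  calc PrW w (A i ∩ avoidE A S)
      ≤ PrW w (A i ∩ avoidE A S₂) := by
        refine PrW_mono hw (Finset.inter_subset_inter le_rfl ?_)
        intro ω hω
        simp only [avoidE, mem_sdiff, mem_biUnion, not_exists, not_and] at *
        exact ⟨hω.1, fun j hj => hω.2 j (Finset.mem_sdiff.1 hj).1⟩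
    _ = PrW w (A i) * PrW w (avoidE A S₂) := hind i S₂ Finset.sdiff_disjoint
    _ ≤ (x * (1-x)^d) * PrW w (avoidE A S₂) := by
        apply mul_le_mul_of_nonneg_right (hbound i) (PrW_nonneg hw _)
    _ ≤ (x * (1-x)^S₁.card) * PrW w (avoidE A S₂) := by
        apply mul_le_mul_of_nonneg_right _ (PrW_nonneg hw _)
        apply mul_le_mul_of_nonneg_left _ hx0
        exact pow_le_pow_of_le_one h1x (by linarith) hS₁card
    _ = x * ((1-x)^S₁.card * PrW w (avoidE A S₂)) := by ring
    _ ≤ x * PrW w (avoidE A (S₂ ∪ S₁)) := mul_le_mul_of_nonneg_left (sub S₁ le_rfl) hx0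
    _ = x * PrW w (avoidE A S) := by rw [hS]

theorem lll_final [Fintype ι] (hw : ∀ y, 0 ≤ w y) (hx0 : 0 ≤ x) (hx1 : x < 1)
    (hNi : ∀ i, i ∈ N i)
    (hind : ∀ i (S : Finset ι), Disjoint S (N i) →
      PrW w (A i ∩ avoidE A S) = PrW w (A i) * PrW w (avoidE A S))
    (hbound : ∀ i, PrW w (A i) ≤ x * (1 - x) ^ d)
    (hNd : ∀ i, (N i).card ≤ d + 1)
    (htot : 0 < PrW w Finset.univ) :
    ∃ ω : Ω, ∀ i, ω ∉ A i := by
  have h1x : (0:ℝ) ≤ 1 - x := by linarith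
  have key : ∀ T : Finset ι, (1 - x) ^ T.card * PrW w Finset.univ ≤ PrW w (avoidE A T) := by
    intro T
    induction T using Finset.induction_on with
    | empty => simp [avoidE]
    | @insert j T hjT IHT =>
      have hrec := lll_main_s9 hw hx0 hx1 hNi hind hbound hNd T j hjT
      rw [avoid_insert, PrW_sdiff, Finset.inter_comm]
      calc (1-x) ^ (insert j T).card * PrW w Finset.univ
          = (1-x) * ((1-x) ^ T.card * PrW w Finset.univ) := by
            rw [Finset.card_insert_of_notMem hjT]; ring
        _ ≤ (1-x) * PrW w (avoidE A T) := mul_le_mul_of_nonneg_left IHT h1x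
        _ ≤ PrW w (avoidE A T) - PrW w (A j ∩ avoidE A T) := by
            nlinarith [PrW_nonneg hw (avoidE A T)]
  have hpos : 0 < PrW w (avoidE A Finset.univ) := by
    have := key Finset.univ
    have hp : 0 < (1-x) ^ (Finset.univ : Finset ι).card := pow_pos (by linarith) _
    nlinarith
  have hne : (avoidE A (Finset.univ : Finset ι)).Nonempty := by
    by_contra h
    rw [Finset.not_nonempty_iff_eq_empty] at h
    rw [h] at hpos
    simp [PrW] at hpos
  obtain ⟨ω, hω⟩ := hne
  refine ⟨ω, fun i hc => ?_⟩
  simp only [avoidE, mem_sdiff, mem_biUnion, not_exists, not_and] at hω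
  exact hω.2 i (Finset.mem_univ i) hc
end LLL

/-! ### Splitting sums over a coordinate decomposition -/

section split
variable {V : Type*} [Fintype V] [DecidableEq V]

lemma sum_split (T : Finset V) (f : Finset V → ℝ) :
    ∑ S : Finset V, f S =
      ∑ p ∈ T.powerset ×ˢ (Finset.univ \ T).powerset, f (p.1 ∪ p.2) := by
  refine Finset.sum_nbij' (fun S => (S ∩ T, S \ T)) (fun p => p.1 ∪ p.2) ?_ ?_ ?_ ?_ ?_
  · intro S _
    simp only [Finset.mem_product, Finset.mem_powerset]
    exact ⟨Finset.inter_subset_right, fun y hy => by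
      simp only [Finset.mem_sdiff, Finset.mem_univ, true_and] at *
      exact hy.2⟩
  · intro p _; exact Finset.mem_univ _
  · intro S _
    simp only
    ext y; simp only [Finset.mem_union, Finset.mem_inter, Finset.mem_sdiff]; tauto
  · intro p hp
    simp only [Finset.mem_product, Finset.mem_powerset] at hp
    obtain ⟨h1, h2⟩ := hp
    have hd : ∀ y ∈ p.2, y ∉ T := fun y hy => (Finset.mem_sdiff.1 (h2 hy)).2
    refine Prod.ext ?_ ?_ <;> simp only
    · ext y
      simp only [Finset.mem_inter, Finset.mem_union]
      constructor
      · rintro ⟨h | h, ht⟩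
        · exact h
        · exact absurd ht (hd _ h)
      · intro h; exact ⟨Or.inl h, h1 h⟩
    · ext y
      simp only [Finset.mem_sdiff, Finset.mem_union]
      constructor
      · rintro ⟨h | h, ht⟩
        · exact absurd (h1 h) ht
        · exact h
      · intro h; exact ⟨Or.inr h, hd _ h⟩
  · intro S _
    have : S ∩ T ∪ S \ T = S := by
      ext y; simp only [Finset.mem_union, Finset.mem_inter, Finset.mem_sdiff]; tauto
    simp only
    rw [this]

lemma sum_split' (T : Finset V) (f : Finset V → ℝ) :
    ∑ S : Finset V, f S =
      ∑ A ∈ T.powerset, ∑ B ∈ (Finset.univ \ T).powerset, f (A ∪ B) := by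
  rw [sum_split T f, Finset.sum_product]
end split

/-! ### The product Bernoulli measure on subsets -/

section meas
variable {V : Type*} [Fintype V] [DecidableEq V] (α : ℝ)

/-- weight of `A` within ground set `U` -/
noncomputable def wB (U A : Finset V) : ℝ := α ^ A.card * (1 - α) ^ (U.card - A.card)

noncomputable def wM : Finset V → ℝ := wB α Finset.univ

lemma sum_wB (U : Finset V) : ∑ A ∈ U.powerset, wB α U A = 1 := by
  have h := sum_pow_card U α (1 - α)
  simp only [wB]
  rw [h]
  norm_num

omit [Fintype V] in
lemma wB_nonneg (hα0 : 0 ≤ α) (hα1 : α ≤ 1) (U A : Finset V) : 0 ≤ wB α U A :=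
  mul_nonneg (pow_nonneg hα0 _) (pow_nonneg (by linarith) _)

lemma wM_factor {T A B : Finset V} (hA : A ∈ T.powerset) (hB : B ∈ (Finset.univ \ T).powerset) :
    wM α (A ∪ B) = wB α T A * wB α (Finset.univ \ T) B := by
  rw [Finset.mem_powerset] at hA hB
  have hdAB : Disjoint A B := by
    refine Finset.disjoint_left.2 fun y hy hyB => ?_
    exact (Finset.mem_sdiff.1 (hB hyB)).2 (hA hy)
  have hcard : (A ∪ B).card = A.card + B.card := Finset.card_union_of_disjoint hdAB
  have hTc : (Finset.univ : Finset V).card = T.card + (Finset.univ \ T).card := by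
    rw [Finset.card_sdiff_of_subset (Finset.subset_univ T)]
    have := Finset.card_le_card (Finset.subset_univ T)
    omega
  have hA' : A.card ≤ T.card := Finset.card_le_card hA
  have hB' : B.card ≤ (Finset.univ \ T).card := Finset.card_le_card hB
  unfold wM wB
  rw [hcard]
  rw [show (Finset.univ : Finset V).card - (A.card + B.card)
      = (T.card - A.card) + ((Finset.univ \ T).card - B.card) by omega]
  rw [pow_add, pow_add]
  ring

variable {T : Finset V} {p q : Finset V → Prop} [DecidablePred p] [DecidablePred q]

lemma trace_inter {A B : Finset V} (hA : A ∈ T.powerset) (hB : B ∈ (Finset.univ \ T).powerset) :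
    (A ∪ B) ∩ T = A := by
  rw [Finset.mem_powerset] at hA hB
  ext y
  simp only [Finset.mem_inter, Finset.mem_union]
  constructor
  · rintro ⟨h | h, ht⟩
    · exact h
    · exact absurd ht (Finset.mem_sdiff.1 (hB h)).2
  · intro h; exact ⟨Or.inl h, hA h⟩

lemma trace_sdiff {A B : Finset V} (hA : A ∈ T.powerset) (hB : B ∈ (Finset.univ \ T).powerset) :
    (A ∪ B) \ T = B := by
  rw [Finset.mem_powerset] at hA hB
  ext y
  simp only [Finset.mem_sdiff, Finset.mem_union]
  constructor
  · rintro ⟨h | h, ht⟩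
    · exact absurd (hA h) ht
    · exact h
  · intro h; exact ⟨Or.inr h, (Finset.mem_sdiff.1 (hB h)).2⟩

lemma PrW_filter (pr : Finset V → Prop) [DecidablePred pr] :
    PrW (wM α) (Finset.univ.filter pr) = ∑ S : Finset V, if pr S then wM α S else 0 := by
  rw [PrW, Finset.sum_filter]

lemma marginal (hp : ∀ S, p S ↔ p (S ∩ T)) :
    PrW (wM α) (Finset.univ.filter p) = ∑ A ∈ T.powerset, if p A then wB α T A else 0 := by
  rw [PrW_filter, sum_split' T]
  have : ∀ A ∈ T.powerset, ∑ B ∈ (Finset.univ \ T).powerset,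
      (if p (A ∪ B) then wM α (A ∪ B) else 0)
      = (if p A then wB α T A else 0) * ∑ B ∈ (Finset.univ \ T).powerset, wB α (Finset.univ \ T) B := by
    intro A hA
    rw [Finset.mul_sum]
    refine Finset.sum_congr rfl fun B hB => ?_
    rw [wM_factor α hA hB]
    have hpA : p (A ∪ B) ↔ p A := by rw [hp (A ∪ B), trace_inter hA hB]
    by_cases h : p A
    · rw [if_pos h, if_pos (hpA.2 h)]
    · rw [if_neg h, if_neg (fun hc => h (hpA.1 hc)), zero_mul]
  refine (Finset.sum_congr rfl this).trans ?_
  rw [← Finset.sum_mul, sum_wB, mul_one]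

lemma indepM (hp : ∀ S, p S ↔ p (S ∩ T)) (hq : ∀ S, q S ↔ q (S \ T)) :
    PrW (wM α) (Finset.univ.filter p ∩ Finset.univ.filter q)
      = PrW (wM α) (Finset.univ.filter p) * PrW (wM α) (Finset.univ.filter q) := by
  have hinter : Finset.univ.filter p ∩ Finset.univ.filter q
      = Finset.univ.filter (fun S => p S ∧ q S) := by
    ext S; simp [Finset.mem_filter]
  rw [hinter, PrW_filter, PrW_filter, PrW_filter, sum_split' T, sum_split' T, sum_split' T]
  have key : ∀ (A B : Finset V), A ∈ T.powerset → B ∈ (Finset.univ \ T).powerset →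
      ((p (A ∪ B) ↔ p A) ∧ (q (A ∪ B) ↔ q B)) := by
    intro A B hA hB
    constructor
    · rw [hp (A ∪ B), trace_inter hA hB]
    · rw [hq (A ∪ B), trace_sdiff hA hB]
  have e1 : ∀ A ∈ T.powerset, ∀ B ∈ (Finset.univ \ T).powerset,
      (if p (A ∪ B) ∧ q (A ∪ B) then wM α (A ∪ B) else 0)
      = (if p A then wB α T A else 0) * (if q B then wB α (Finset.univ \ T) B else 0) := by
    intro A hA B hB
    obtain ⟨h1, h2⟩ := key A B hA hB
    rw [wM_factor α hA hB]
    by_cases hpa : p A <;> by_cases hqb : q B <;>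
      simp [hpa, hqb, h1, h2]
  calc ∑ A ∈ T.powerset, ∑ B ∈ (Finset.univ \ T).powerset,
        (if p (A ∪ B) ∧ q (A ∪ B) then wM α (A ∪ B) else 0)
      = ∑ A ∈ T.powerset, ∑ B ∈ (Finset.univ \ T).powerset,
        (if p A then wB α T A else 0) * (if q B then wB α (Finset.univ \ T) B else 0) := by
        refine Finset.sum_congr rfl fun A hA => Finset.sum_congr rfl fun B hB => e1 A hA B hB
    _ = (∑ A ∈ T.powerset, if p A then wB α T A else 0) *
        (∑ B ∈ (Finset.univ \ T).powerset, if q B then wB α (Finset.univ \ T) B else 0) := by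
        rw [Finset.sum_mul]
        refine Finset.sum_congr rfl fun A _ => ?_
        rw [Finset.mul_sum]
    _ = _ := by
        congr 1
        · rw [← marginal α hp, PrW_filter, sum_split' T]
        · have : ∀ A ∈ T.powerset, ∑ B ∈ (Finset.univ \ T).powerset,
              (if q (A ∪ B) then wM α (A ∪ B) else 0)
              = wB α T A * ∑ B ∈ (Finset.univ \ T).powerset,
                  (if q B then wB α (Finset.univ \ T) B else 0) := by
            intro A hA
            rw [Finset.mul_sum]
            refine Finset.sum_congr rfl fun B hB => ?_
            rw [wM_factor α hA hB]
            by_cases hqb : q B <;> simp [hqb, (key A B hA hB).2]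
          refine Eq.symm ((Finset.sum_congr rfl this).trans ?_)
          rw [← Finset.sum_mul, sum_wB, one_mul]
end meas

/-! ### Chernoff bound for the binomial lower tail -/

lemma chernoff {V : Type*} [DecidableEq V] (U : Finset V) (p θ : ℝ)
    (hp1 : p < 1) (hθ0 : 0 < θ) (hθp : θ < p) :
    ∑ A ∈ U.powerset, (if (A.card : ℝ) < θ * U.card then wB p U A else 0)
      ≤ Real.exp (-klBern θ p * U.card) := by
  have hp0 : 0 < p := hθ0.trans hθp
  have h1p : 0 < 1 - p := by linarith
  have h1θ : 0 < 1 - θ := by linarith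
  set k := U.card with hk
  set r : ℝ := p * (1 - θ) / (θ * (1 - p)) with hr
  have hrpos : 0 < r := div_pos (mul_pos hp0 h1θ) (mul_pos hθ0 h1p)
  have hr1 : 1 ≤ r := by
    rw [le_div_iff₀ (mul_pos hθ0 h1p)]
    nlinarith
  have step1 : ∀ A ∈ U.powerset,
      (if (A.card : ℝ) < θ * k then wB p U A else 0)
        ≤ (p / r) ^ A.card * (1 - p) ^ (k - A.card) * r ^ (θ * (k:ℝ)) := by
    intro A hA
    have hterm : (p / r) ^ A.card * (1 - p) ^ (k - A.card) * r ^ (θ * (k:ℝ))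
        = wB p U A * r ^ (θ * (k:ℝ) - (A.card : ℝ)) := by
      rw [Real.rpow_sub hrpos, div_pow, wB]
      rw [← Real.rpow_natCast r A.card]
      field_simp
      rfl
    rw [hterm]
    by_cases hcond : (A.card : ℝ) < θ * k
    · rw [if_pos hcond]
      have h2 : (1:ℝ) ≤ r ^ (θ * (k:ℝ) - (A.card:ℝ)) :=
        Real.one_le_rpow hr1 (by linarith)
      have hwb : 0 ≤ wB p U A :=
        mul_nonneg (pow_nonneg hp0.le _) (pow_nonneg h1p.le _)
      exact le_mul_of_one_le_right hwb h2
    · rw [if_neg hcond]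
      have hwb : 0 ≤ wB p U A :=
        mul_nonneg (pow_nonneg hp0.le _) (pow_nonneg h1p.le _)
      positivity
  have step2 : ∑ A ∈ U.powerset, (if (A.card : ℝ) < θ * k then wB p U A else 0)
      ≤ (p / r + (1 - p)) ^ k * r ^ (θ * (k:ℝ)) := by
    calc _ ≤ ∑ A ∈ U.powerset, (p / r) ^ A.card * (1 - p) ^ (k - A.card) * r ^ (θ * (k:ℝ)) :=
          Finset.sum_le_sum step1
      _ = (∑ A ∈ U.powerset, (p / r) ^ A.card * (1 - p) ^ (k - A.card)) * r ^ (θ * (k:ℝ)) := by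
          rw [Finset.sum_mul]
      _ = _ := by rw [sum_pow_card]
  have hfrac : p / r + (1 - p) = (1 - p) / (1 - θ) := by
    rw [hr]
    field_simp
    ring
  have hfracpos : 0 < (1 - p) / (1 - θ) := div_pos h1p h1θ
  have step3 : (p / r + (1 - p)) ^ k * r ^ (θ * (k:ℝ)) = Real.exp (-klBern θ p * k) := by
    rw [hfrac]
    have e1 : ((1 - p) / (1 - θ)) ^ k = Real.exp (Real.log ((1 - p) / (1 - θ)) * k) := by
      rw [← Real.rpow_natCast ((1-p)/(1-θ)) k, Real.rpow_def_of_pos hfracpos]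
    have e2 : r ^ (θ * (k:ℝ)) = Real.exp (Real.log r * (θ * k)) :=
      Real.rpow_def_of_pos hrpos _
    rw [e1, e2, ← Real.exp_add]
    congr 1
    have hlr : Real.log r = Real.log p + Real.log (1 - θ) - Real.log θ - Real.log (1 - p) := by
      rw [hr, Real.log_div (by positivity) (by positivity),
        Real.log_mul hp0.ne' h1θ.ne', Real.log_mul hθ0.ne' h1p.ne']
      ring
    have hlf : Real.log ((1 - p) / (1 - θ)) = Real.log (1 - p) - Real.log (1 - θ) :=
      Real.log_div h1p.ne' h1θ.ne'
    have hkl : klBern θ p = θ * (Real.log θ - Real.log p)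
        + (1 - θ) * (Real.log (1 - θ) - Real.log (1 - p)) := by
      rw [klBern, Real.log_div hθ0.ne' hp0.ne', Real.log_div h1θ.ne' h1p.ne']
    rw [hlr, hlf, hkl]
    ring
  linarith [step2, step3.le]

lemma sdiff_reindex {V : Type*} [DecidableEq V] (T : Finset V) (f : Finset V → ℝ) :
    ∑ A ∈ T.powerset, f A = ∑ A ∈ T.powerset, f (T \ A) := by
  refine Finset.sum_nbij' (fun A => T \ A) (fun A => T \ A) ?_ ?_ ?_ ?_ ?_
  · intro A hA; exact Finset.mem_powerset.2 (Finset.sdiff_subset)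
  · intro A hA; exact Finset.mem_powerset.2 (Finset.sdiff_subset)
  · intro A hA; exact Finset.sdiff_sdiff_eq_self (Finset.mem_powerset.1 hA)
  · intro A hA; exact Finset.sdiff_sdiff_eq_self (Finset.mem_powerset.1 hA)
  · intro A hA
    rw [Finset.sdiff_sdiff_eq_self (Finset.mem_powerset.1 hA)]

/-- **Existence of a good marking via the Lovász Local Lemma.**
`𝒞` is a family of constraints (indexed by `ι`) on a finite variable set `V`, each with
variable set of size exactly `k`, and each sharing a variable with at most `Δ` constraints in
total (including itself).  If `θ₁, θ_f, α ∈ (0,1)` with `θ₁ < α` and `θ_f < 1 - α` satisfy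
`max(e^{-D(θ₁,α)·k}, e^{-D(θ_f,1-α)·k}) < (2eΔ)⁻¹`, then there is a subset `V₁ ⊆ V` such that
every constraint `C` satisfies `|V₁ ∩ vbl(C)| ≥ θ₁·k` and `|vbl(C) \ V₁| ≥ θ_f·k`. -/
theorem stmt_9 {V : Type*} [Fintype V] [DecidableEq V] {ι : Type*} [Fintype ι]
    (k Δ : ℕ) (vbl : ι → Finset V)
    (hk : ∀ c, (vbl c).card = k)
    (hΔ : ∀ c : ι, ((univ : Finset ι).filter fun c' => (vbl c ∩ vbl c').Nonempty).card ≤ Δ)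
    (θ₁ θf α : ℝ)
    (hθ₁ : θ₁ ∈ Set.Ioo (0 : ℝ) 1) (hθf : θf ∈ Set.Ioo (0 : ℝ) 1)
    (hα : α ∈ Set.Ioo (0 : ℝ) 1)
    (h1 : θ₁ < α) (h2 : θf < 1 - α)
    (hLLL : max (Real.exp (-(klBern θ₁ α) * k)) (Real.exp (-(klBern θf (1 - α)) * k)) <
      (2 * Real.exp 1 * (Δ : ℝ))⁻¹) :
    ∃ V₁ : Finset V, ∀ c : ι,
      θ₁ * k ≤ ((V₁ ∩ vbl c).card : ℝ) ∧ θf * k ≤ (((vbl c) \ V₁).card : ℝ) := by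
  classical
  obtain ⟨hθ₁0, hθ₁1⟩ := hθ₁
  obtain ⟨hθf0, hθf1⟩ := hθf
  obtain ⟨hα0, hα1⟩ := hα
  have hE : (0:ℝ) < Real.exp 1 := Real.exp_pos 1
  rcases Nat.eq_zero_or_pos k with hk0 | hkpos
  · subst hk0
    refine ⟨∅, fun c => ?_⟩
    rw [Nat.cast_zero, mul_zero, mul_zero]
    constructor <;> positivity
  rcases Nat.eq_zero_or_pos Δ with hΔ0 | hΔpos
  · exfalso
    subst hΔ0
    have h : (0:ℝ) < max (Real.exp (-(klBern θ₁ α) * k)) (Real.exp (-(klBern θf (1 - α)) * k)) :=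
      lt_max_of_lt_left (Real.exp_pos _)
    rw [Nat.cast_zero, mul_zero, inv_zero] at hLLL
    linarith
  -- setup
  set badP : ι → Finset V → Prop := fun c S =>
    ((S ∩ vbl c).card : ℝ) < θ₁ * k ∨ (((vbl c) \ S).card : ℝ) < θf * k with hbadP
  set A : ι → Finset (Finset V) := fun c => Finset.univ.filter (badP c) with hA
  set N : ι → Finset ι := fun c => Finset.univ.filter fun c' => (vbl c ∩ vbl c').Nonempty with hN
  set d : ℕ := Δ - 1 with hd
  set x : ℝ := if Δ = 1 then 1/2 else ((Δ:ℝ))⁻¹ with hx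
  have hΔR : (0:ℝ) < (Δ:ℝ) := by exact_mod_cast hΔpos
  have hw : ∀ S : Finset V, 0 ≤ wM α S := fun S => wB_nonneg α hα0.le hα1.le _ _
  have hx0 : 0 ≤ x := by
    rw [hx]
    split_ifs
    · norm_num
    · positivity
  have hx1 : x < 1 := by
    rw [hx]; split_ifs with h
    · norm_num
    · have : (2:ℝ) ≤ (Δ:ℝ) := by exact_mod_cast (by omega : 2 ≤ Δ)
      rw [inv_lt_one_iff₀]; right; linarith
  have hNi : ∀ i, i ∈ N i := by
    intro i
    rw [hN]
    simp only [Finset.mem_filter, Finset.mem_univ, true_and, Finset.inter_self]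
    exact Finset.card_pos.mp (by rw [hk i]; exact hkpos)
  have hNd : ∀ i, (N i).card ≤ d + 1 := by
    intro i
    rw [hN, hd]
    have := hΔ i
    have h9 : Δ - 1 + 1 = Δ := by omega
    rw [h9]
    exact this
  -- independence
  have hind : ∀ i (S : Finset ι), Disjoint S (N i) →
      PrW (wM α) (A i ∩ avoidE A S) = PrW (wM α) (A i) * PrW (wM α) (avoidE A S) := by
    intro i S hdisj
    have havoid : avoidE A S = Finset.univ.filter (fun S' => ∀ j ∈ S, ¬ badP j S') := by
      ext ω
      simp only [avoidE, Finset.mem_sdiff, Finset.mem_biUnion, Finset.mem_filter,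
        Finset.mem_univ, true_and, not_exists, not_and, hA]
    have hAi : A i = Finset.univ.filter (badP i) := by rw [hA]
    rw [havoid, hAi]
    have hp : ∀ S', badP i S' ↔ badP i (S' ∩ vbl i) := by
      intro S'
      have e1 : (S' ∩ vbl i) ∩ vbl i = S' ∩ vbl i := by
        rw [Finset.inter_assoc, Finset.inter_self]
      have e2 : vbl i \ (S' ∩ vbl i) = vbl i \ S' := by
        ext y; simp only [Finset.mem_sdiff, Finset.mem_inter]; tauto
      rw [hbadP]
      simp only [e1, e2]
    have hq : ∀ S', (∀ j ∈ S, ¬ badP j S') ↔ (∀ j ∈ S, ¬ badP j (S' \ vbl i)) := by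
      intro S'
      refine forall₂_congr fun j hj => not_congr ?_
      have hjN : j ∉ N i := Finset.disjoint_left.1 hdisj hj
      have hemp : vbl i ∩ vbl j = ∅ := by
        rw [hN] at hjN
        simp only [Finset.mem_filter, Finset.mem_univ, true_and] at hjN
        exact Finset.not_nonempty_iff_eq_empty.1 hjN
      have hno : ∀ y ∈ vbl j, y ∉ vbl i := by
        intro y hyj hyi
        have : y ∈ vbl i ∩ vbl j := Finset.mem_inter.2 ⟨hyi, hyj⟩
        rw [hemp] at this
        exact absurd this (Finset.notMem_empty y)
      have e1 : (S' \ vbl i) ∩ vbl j = S' ∩ vbl j := by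
        ext y
        simp only [Finset.mem_inter, Finset.mem_sdiff]
        constructor
        · rintro ⟨⟨h, _⟩, hj'⟩; exact ⟨h, hj'⟩
        · rintro ⟨h, hj'⟩; exact ⟨⟨h, hno y hj'⟩, hj'⟩
      have e2 : vbl j \ (S' \ vbl i) = vbl j \ S' := by
        ext y
        simp only [Finset.mem_sdiff]
        constructor
        · rintro ⟨hj', h⟩
          exact ⟨hj', fun hc => h ⟨hc, hno y hj'⟩⟩
        · rintro ⟨hj', h⟩
          exact ⟨hj', fun hc => h hc.1⟩
      rw [hbadP]
      simp only [e1, e2]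
    exact indepM α hp hq
  -- probability bound
  have hmax := hLLL
  set M := max (Real.exp (-(klBern θ₁ α) * k)) (Real.exp (-(klBern θf (1 - α)) * k)) with hM
  have hxd : (Real.exp 1 * (Δ:ℝ))⁻¹ ≤ x * (1-x)^d := by
    by_cases hone : Δ = 1
    · have h2e : (2:ℝ) ≤ Real.exp 1 := by
        have := Real.add_one_le_exp (1:ℝ); linarith
      rw [hx, if_pos hone, hd, hone]
      norm_num
      rw [inv_le_comm₀ (by positivity) (by norm_num)]
      linarith
    · have hΔ2 : 2 ≤ Δ := by omega
      set m : ℕ := Δ - 1 with hm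
      have hdm : d = m := rfl
      have hmR : (1:ℝ) ≤ (m:ℝ) := by exact_mod_cast (by omega : 1 ≤ m)
      have hΔm : (Δ:ℝ) = (m:ℝ) + 1 := by
        have : Δ = m + 1 := by omega
        exact_mod_cast congrArg (Nat.cast : ℕ → ℝ) this
      have hmpos : (0:ℝ) < (m:ℝ) := by linarith
      have key : ((1:ℝ) + 1/(m:ℝ))^m ≤ Real.exp 1 := by
        have hstep : (1:ℝ) + 1/(m:ℝ) ≤ Real.exp (1/(m:ℝ)) := by
          have := Real.add_one_le_exp (1/(m:ℝ)); linarith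
        calc ((1:ℝ) + 1/(m:ℝ))^m ≤ (Real.exp (1/(m:ℝ)))^m := by
              apply pow_le_pow_left₀ (by positivity) hstep
          _ = Real.exp ((m:ℝ) * (1/(m:ℝ))) := by rw [Real.exp_nat_mul]
          _ = Real.exp 1 := by rw [mul_one_div, div_self hmpos.ne']
      have hxval : x = ((Δ:ℝ))⁻¹ := by rw [hx, if_neg hone]
      have h1x : 1 - x = (m:ℝ)/((m:ℝ)+1) := by
        rw [hxval, hΔm]
        field_simp
        ring
      have hinv : ((m:ℝ)/((m:ℝ)+1)) = ((1:ℝ) + 1/(m:ℝ))⁻¹ := by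
        field_simp
      have hppos : (0:ℝ) < ((1:ℝ) + 1/(m:ℝ))^m := by positivity
      have hmain : (Real.exp 1)⁻¹ ≤ ((m:ℝ)/((m:ℝ)+1))^m := by
        rw [hinv, inv_pow]
        exact inv_anti₀ hppos key
      rw [h1x, hxval, hdm, hΔm]
      have expand : (Real.exp 1 * ((m:ℝ)+1))⁻¹ = (Real.exp 1)⁻¹ * ((m:ℝ)+1)⁻¹ := by
        rw [mul_inv]
      rw [expand]
      calc (Real.exp 1)⁻¹ * ((m:ℝ)+1)⁻¹ ≤ ((m:ℝ)/((m:ℝ)+1))^m * ((m:ℝ)+1)⁻¹ := by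
            apply mul_le_mul_of_nonneg_right hmain (by positivity)
        _ = ((m:ℝ)+1)⁻¹ * ((m:ℝ)/((m:ℝ)+1))^m := by ring
  have hbound : ∀ i, PrW (wM α) (A i) ≤ x * (1-x)^d := by
    intro i
    have hsplit : A i = (Finset.univ.filter (fun S : Finset V => ((S ∩ vbl i).card:ℝ) < θ₁*k))
        ∪ (Finset.univ.filter (fun S : Finset V => (((vbl i) \ S).card:ℝ) < θf*k)) := by
      ext S
      simp only [hA, hbadP, Finset.mem_union, Finset.mem_filter, Finset.mem_univ, true_and]
    have hp1 : ∀ S : Finset V, (((S ∩ vbl i).card:ℝ) < θ₁*k) ↔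
        ((((S ∩ vbl i) ∩ vbl i).card:ℝ) < θ₁*k) := by
      intro S
      rw [Finset.inter_assoc, Finset.inter_self]
    have hm1 := marginal (T := vbl i) α hp1
    have hp2 : ∀ S : Finset V, ((((vbl i) \ S).card:ℝ) < θf*k) ↔
        ((((vbl i) \ (S ∩ vbl i)).card:ℝ) < θf*k) := by
      intro S
      have e2 : vbl i \ (S ∩ vbl i) = vbl i \ S := by
        ext y; simp only [Finset.mem_sdiff, Finset.mem_inter]; tauto
      rw [e2]
    have hm2 := marginal (T := vbl i) α hp2
    -- first tail
    have ht1 : PrW (wM α) (Finset.univ.filter (fun S : Finset V => ((S ∩ vbl i).card:ℝ) < θ₁*k))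
        ≤ Real.exp (-(klBern θ₁ α) * k) := by
      rw [hm1]
      have congr1 : ∀ B ∈ (vbl i).powerset,
          (if ((B ∩ vbl i).card:ℝ) < θ₁*k then wB α (vbl i) B else 0)
          = (if (B.card:ℝ) < θ₁ * (k:ℝ) then wB α (vbl i) B else 0) := by
        intro B hB
        rw [Finset.inter_eq_left.2 (Finset.mem_powerset.1 hB)]
      refine (Finset.sum_congr rfl congr1).trans_le ?_
      have := chernoff (vbl i) α θ₁ hα1 hθ₁0 h1
      rw [hk i] at this
      exact this
    -- second tail
    have ht2 : PrW (wM α) (Finset.univ.filter (fun S : Finset V => (((vbl i) \ S).card:ℝ) < θf*k))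
        ≤ Real.exp (-(klBern θf (1-α)) * k) := by
      rw [hm2]
      rw [sdiff_reindex (vbl i)
        (f := fun B => if (((vbl i) \ B).card:ℝ) < θf*k then wB α (vbl i) B else 0)]
      have congr2 : ∀ B ∈ (vbl i).powerset,
          (if (((vbl i) \ ((vbl i) \ B)).card:ℝ) < θf*k then wB α (vbl i) ((vbl i) \ B) else 0)
          = (if (B.card:ℝ) < θf * (k:ℝ) then wB (1-α) (vbl i) B else 0) := by
        intro B hB
        have hBsub := Finset.mem_powerset.1 hB
        have e3 : (vbl i) \ ((vbl i) \ B) = B := Finset.sdiff_sdiff_eq_self hBsub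
        have e4 : wB α (vbl i) ((vbl i) \ B) = wB (1-α) (vbl i) B := by
          unfold wB
          have hc1 : ((vbl i) \ B).card = (vbl i).card - B.card :=
            Finset.card_sdiff_of_subset hBsub
          have hc2 : B.card ≤ (vbl i).card := Finset.card_le_card hBsub
          rw [hc1]
          rw [show (vbl i).card - ((vbl i).card - B.card) = B.card by omega]
          rw [show (1:ℝ) - (1-α) = α by ring]
          ring
        rw [e3, e4]
      refine (Finset.sum_congr rfl congr2).trans_le ?_
      have := chernoff (vbl i) (1-α) θf (by linarith) hθf0 h2
      rw [hk i] at this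
      exact this
    have hsum : PrW (wM α) (A i) ≤ Real.exp (-(klBern θ₁ α) * k)
        + Real.exp (-(klBern θf (1-α)) * k) := by
      rw [hsplit]
      calc _ ≤ _ := PrW_union_le hw _ _
        _ ≤ _ := add_le_add ht1 ht2
    have hmax1 : Real.exp (-(klBern θ₁ α) * k) ≤ M := le_max_left _ _
    have hmax2 : Real.exp (-(klBern θf (1-α)) * k) ≤ M := le_max_right _ _
    have h2M : 2 * M < 2 * (2 * Real.exp 1 * (Δ:ℝ))⁻¹ := by linarith
    have heq : 2 * (2 * Real.exp 1 * (Δ:ℝ))⁻¹ = (Real.exp 1 * (Δ:ℝ))⁻¹ := by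
      rw [show (2:ℝ) * Real.exp 1 * (Δ:ℝ) = 2 * (Real.exp 1 * (Δ:ℝ)) by ring, mul_inv,
        ← mul_assoc]
      norm_num
    linarith [hxd]
  -- conclusion
  have htot : (0:ℝ) < PrW (wM α) (Finset.univ : Finset (Finset V)) := by
    have : PrW (wM α) (Finset.univ : Finset (Finset V)) = 1 := by
      rw [PrW, ← Finset.powerset_univ]
      exact sum_wB α Finset.univ
    rw [this]; norm_num
  obtain ⟨ω, hω⟩ := lll_final hw hx0 hx1 hNi hind hbound hNd htot
  refine ⟨ω, fun c => ?_⟩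
  have hc := hω c
  rw [hA] at hc
  simp only [Finset.mem_filter, Finset.mem_univ, true_and, hbadP] at hc
  push_neg at hc
  exact hc
end

section
/- There exists an absolute constant c > 0 such that the following holds for every integer k ≥ 2. Let V be a finite set and let 𝒞 be a finite family of constraints, each constraint C having a variable set vbl(C) ⊆ V with |vbl(C)| = k, such that each constraint shares a variable with at most Δ constraints in total (including itself). If Δ ≤ c·2^{0.1742·k}/k², then there exists a subset V₁ ⊆ V such that for every C ∈ 𝒞, |V₁ ∩ vbl(C)| ≥ 0.1742·k and |vbl(C) ∖ V₁| ≥ 0.3484·k. -/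
open Finset


namespace LLL10
set_option linter.unusedSectionVars false

/-! ### Weighted counting measure on `V → Bool` -/

variable {V : Type} [Fintype V] [DecidableEq V]

def w (q : ℝ) (f : V → Bool) : ℝ := ∏ v, (if f v then q else 1 - q)

lemma w_nonneg {q : ℝ} (h0 : 0 ≤ q) (h1 : q ≤ 1) (f : V → Bool) : 0 ≤ w q f :=
  Finset.prod_nonneg fun v _ => by by_cases hv : f v <;> simp [hv] <;> linarith

lemma sum_prod_bool (g : V → Bool → ℝ) :
    ∑ f : V → Bool, ∏ v, g v (f v) = ∏ v, (g v true + g v false) := by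
  rw [show (∏ v, (g v true + g v false)) = ∏ v, ∑ b : Bool, g v b by
        refine Finset.prod_congr rfl fun v _ => ?_
        simp [Fintype.sum_bool],
      Fintype.prod_sum]

lemma sum_w (q : ℝ) : ∑ f : V → Bool, w q f = 1 := by
  have h := sum_prod_bool (V := V) (fun _ b => if b then q else 1 - q)
  simp only [if_true, Bool.false_eq_true, if_false] at h
  rw [show (∑ f : V → Bool, w q f) = ∑ f : V → Bool, ∏ v, (if f v then q else 1 - q) from rfl, h]
  simp

def Pr (q : ℝ) (E : Finset (V → Bool)) : ℝ := ∑ f ∈ E, w q f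

lemma Pr_nonneg {q : ℝ} (h0 : 0 ≤ q) (h1 : q ≤ 1) (E : Finset (V → Bool)) : 0 ≤ Pr q E :=
  Finset.sum_nonneg fun f _ => w_nonneg h0 h1 f

lemma Pr_union_le {q : ℝ} (h0 : 0 ≤ q) (h1 : q ≤ 1) (E F : Finset (V → Bool)) :
    Pr q (E ∪ F) ≤ Pr q E + Pr q F := by
  have := Finset.sum_union_inter (s₁ := E) (s₂ := F) (f := w q)
  have h2 : 0 ≤ Pr q (E ∩ F) := Pr_nonneg h0 h1 _
  unfold Pr at *
  linarith

/-! ### Independence for events on disjoint coordinate sets -/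

def mrg (T : Finset V) (f g : V → Bool) : V → Bool := fun v => if v ∈ T then f v else g v

def detBy (T : Finset V) (E : Finset (V → Bool)) : Prop :=
  ∀ f g : V → Bool, (∀ v ∈ T, f v = g v) → (f ∈ E ↔ g ∈ E)

lemma w_mrg (q : ℝ) (T : Finset V) (f g : V → Bool) :
    w q (mrg T f g) * w q (mrg T g f) = w q f * w q g := by
  unfold w mrg
  rw [← Finset.prod_mul_distrib, ← Finset.prod_mul_distrib]
  refine Finset.prod_congr rfl fun v _ => ?_
  by_cases hv : v ∈ T <;> simp [hv, mul_comm]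

lemma Pr_inter_indep (q : ℝ) (T : Finset V) (E F : Finset (V → Bool))
    (hE : detBy T E) (hF : detBy Tᶜ F) :
    Pr q (E ∩ F) = Pr q E * Pr q F := by
  have key : Pr q E * Pr q F = Pr q (E ∩ F) * ∑ h : V → Bool, w q h := by
    unfold Pr
    rw [Finset.sum_mul_sum, ← Finset.sum_product', Finset.sum_mul]
    simp_rw [Finset.mul_sum]
    rw [← Finset.sum_product']
    refine Finset.sum_nbij' (fun p => (mrg T p.1 p.2, mrg T p.2 p.1))
      (fun p => (mrg T p.1 p.2, mrg T p.2 p.1)) ?_ ?_ ?_ ?_ ?_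
    · rintro ⟨f, g⟩ hp
      simp only [Finset.mem_product] at hp ⊢
      constructor
      · simp only [Finset.mem_inter]
        constructor
        · exact (hE (mrg T f g) f (fun v hv => by simp [mrg, hv])).mpr hp.1
        · exact (hF (mrg T f g) g (fun v hv => by
            simp only [Finset.mem_compl] at hv; simp [mrg, hv])).mpr hp.2
      · exact Finset.mem_univ _
    · rintro ⟨f, g⟩ hp
      simp only [Finset.mem_product, Finset.mem_inter] at hp ⊢
      constructor
      · exact (hE (mrg T f g) f (fun v hv => by simp [mrg, hv])).mpr hp.1.1
      · exact (hF (mrg T g f) f (fun v hv => by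
          simp only [Finset.mem_compl] at hv; simp [mrg, hv])).mpr hp.1.2
    · rintro ⟨f, g⟩ _
      simp only [Prod.mk.injEq]
      constructor <;> (ext v; by_cases hv : v ∈ T <;> simp [mrg, hv])
    · rintro ⟨f, g⟩ _
      simp only [Prod.mk.injEq]
      constructor <;> (ext v; by_cases hv : v ∈ T <;> simp [mrg, hv])
    · rintro ⟨f, g⟩ _
      exact (w_mrg q T f g).symm
  rw [sum_w] at key
  linarith

/-! ### Chernoff-type bound via the moment generating function -/

def cnt (T : Finset V) (f : V → Bool) : ℕ := (T.filter fun v => f v = true).card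

lemma sum_t_cnt (q t : ℝ) (T : Finset V) :
    ∑ f : V → Bool, t ^ (cnt T f) * w q f = (q * t + (1 - q)) ^ T.card := by
  have key : ∀ f : V → Bool, t ^ (cnt T f) * w q f
      = ∏ v, (fun v (b : Bool) => if b then (if v ∈ T then q * t else q) else 1 - q) v (f v) := by
    intro f
    have h1 : (t : ℝ) ^ (cnt T f) = ∏ v, (if v ∈ T ∧ f v = true then t else 1) := by
      rw [Finset.prod_ite, Finset.prod_const, Finset.prod_const, one_pow, mul_one]
      congr 1
      unfold cnt
      congr 1
      ext v
      simp [Finset.mem_filter]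
    rw [h1]
    unfold w
    rw [← Finset.prod_mul_distrib]
    refine Finset.prod_congr rfl fun v _ => ?_
    by_cases hv : v ∈ T <;> by_cases hf : f v <;> simp [hv, hf] <;> ring
  rw [Finset.sum_congr rfl fun f _ => key f,
    sum_prod_bool (fun v (b : Bool) => if b then (if v ∈ T then q * t else q) else 1 - q)]
  simp only [if_true, Bool.false_eq_true, if_false]
  rw [show (∏ v, ((if v ∈ T then q * t else q) + (1 - q)))
      = ∏ v, (if v ∈ T then q * t + (1 - q) else 1) by
    refine Finset.prod_congr rfl fun v _ => ?_
    by_cases hv : v ∈ T <;> simp [hv]]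
  rw [Finset.prod_ite, Finset.prod_const, Finset.prod_const, one_pow, mul_one]
  congr 1
  simp

lemma Pr_mgf {q t b : ℝ} (hq0 : 0 ≤ q) (hq1 : q ≤ 1) (ht : 0 < t)
    (T : Finset V) (E : Finset (V → Bool))
    (hE : ∀ f ∈ E, (1 : ℝ) ≤ t ^ (((cnt T f : ℝ)) - b)) :
    Pr q E ≤ t ^ (-b) * (q * t + (1 - q)) ^ T.card := by
  have step1 : Pr q E ≤ ∑ f : V → Bool, t ^ (((cnt T f : ℝ)) - b) * w q f := by
    rw [Pr, ← Finset.sum_filter_add_sum_filter_not Finset.univ (· ∈ E)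
        (fun f => t ^ (((cnt T f : ℝ)) - b) * w q f)]
    have h1 : Pr q E ≤ ∑ f ∈ Finset.univ.filter (· ∈ E), t ^ (((cnt T f : ℝ)) - b) * w q f := by
      rw [Pr, show Finset.univ.filter (· ∈ E) = E by ext f; simp]
      refine Finset.sum_le_sum fun f hf => ?_
      nlinarith [w_nonneg hq0 hq1 f, hE f hf, Real.rpow_pos_of_pos ht ((cnt T f : ℝ) - b)]
    have h2 : 0 ≤ ∑ f ∈ Finset.univ.filter (¬ · ∈ E), t ^ (((cnt T f : ℝ)) - b) * w q f :=
      Finset.sum_nonneg fun f _ => mul_nonneg (Real.rpow_nonneg ht.le _) (w_nonneg hq0 hq1 f)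
    unfold Pr at h1
    linarith
  calc Pr q E ≤ ∑ f : V → Bool, t ^ (((cnt T f : ℝ)) - b) * w q f := step1
    _ = t ^ (-b) * ∑ f : V → Bool, t ^ (cnt T f) * w q f := by
        rw [Finset.mul_sum]
        refine Finset.sum_congr rfl fun f _ => ?_
        rw [sub_eq_add_neg, Real.rpow_add ht, Real.rpow_natCast]
        ring
    _ = t ^ (-b) * (q * t + (1 - q)) ^ T.card := by rw [sum_t_cnt]

end LLL10

namespace LLLY
open LLL10

variable {Ω ι : Type} [Fintype Ω] [DecidableEq Ω] [Fintype ι] [DecidableEq ι]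
set_option linter.unusedSectionVars false

def Es (A : ι → Finset Ω) (S : Finset ι) : Finset Ω :=
  Finset.univ.filter fun f => ∀ j ∈ S, f ∉ A j

lemma Es_anti (A : ι → Finset Ω) {S S' : Finset ι} (h : S' ⊆ S) : Es A S ⊆ Es A S' := by
  intro f hf
  simp only [Es, Finset.mem_filter, Finset.mem_univ, true_and] at hf ⊢
  exact fun j hj => hf j (h hj)

lemma sum_union_le {W : Ω → ℝ} (hW : ∀ f, 0 ≤ W f) (X Y : Finset Ω) :
    ∑ f ∈ X ∪ Y, W f ≤ ∑ f ∈ X, W f + ∑ f ∈ Y, W f := by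
  have h := Finset.sum_union_inter (s₁ := X) (s₂ := Y) (f := W)
  have h2 : 0 ≤ ∑ f ∈ X ∩ Y, W f := Finset.sum_nonneg fun f _ => hW f
  linarith

lemma sum_biUnion_le {W : Ω → ℝ} (hW : ∀ f, 0 ≤ W f) (s : Finset ι) (t : ι → Finset Ω) :
    ∑ f ∈ s.biUnion t, W f ≤ ∑ j ∈ s, ∑ f ∈ t j, W f := by
  classical
  induction s using Finset.induction_on with
  | empty => simp
  | @insert a s' hj ih =>
    rw [Finset.biUnion_insert, Finset.sum_insert hj]
    calc ∑ f ∈ t a ∪ s'.biUnion t, W f ≤ ∑ f ∈ t a, W f + ∑ f ∈ s'.biUnion t, W f :=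
          sum_union_le hW _ _
      _ ≤ _ := by linarith

theorem lll_ind (W : Ω → ℝ) (hW : ∀ f, 0 ≤ W f)
    (A : ι → Finset Ω) (N : ι → Finset ι) (p D : ℝ)
    (hp0 : 0 ≤ p)
    (hN : ∀ i, ((N i).card : ℝ) ≤ D)
    (hpD : 2 * p * D ≤ 1 / 2)
    (hD0 : 0 ≤ D)
    (hstar : ∀ i, ∀ S : Finset ι, Disjoint S (N i) →
      (∑ f ∈ A i ∩ Es A S, W f) ≤ p * ∑ f ∈ Es A S, W f) :
    ∀ n : ℕ, ∀ S : Finset ι, S.card ≤ n → ∀ i : ι,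
      (∑ f ∈ A i ∩ Es A S, W f) ≤ 2 * p * ∑ f ∈ Es A S, W f := by
  intro n
  induction n with
  | zero =>
    intro S hS i
    have hSe : S = ∅ := Finset.card_eq_zero.mp (Nat.le_zero.mp hS)
    subst hSe
    have hd : Disjoint (∅ : Finset ι) (N i) := Finset.disjoint_empty_left _
    have := hstar i ∅ hd
    have hnn : 0 ≤ ∑ f ∈ Es A (∅ : Finset ι), W f := Finset.sum_nonneg fun f _ => hW f
    nlinarith
  | succ n ih =>
    intro S hS i
    set S₁ := S ∩ N i with hS₁
    set S₂ := S \ N i with hS₂def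
    have hPrS2 : 0 ≤ ∑ f ∈ Es A S₂, W f := Finset.sum_nonneg fun f _ => hW f
    have hPrS : 0 ≤ ∑ f ∈ Es A S, W f := Finset.sum_nonneg fun f _ => hW f
    by_cases hone : S₁ = ∅
    · have hSS2 : S₂ = S := by
        rw [hS₂def, Finset.sdiff_eq_self_iff_disjoint]
        rwa [← Finset.disjoint_iff_inter_eq_empty] at hone
      have := hstar i S₂ Finset.sdiff_disjoint
      rw [hSS2] at this
      nlinarith
    · have hsub : S₂ ⊆ S := Finset.sdiff_subset
      have hne : S₂ ≠ S := by
        obtain ⟨a, ha⟩ := Finset.nonempty_of_ne_empty hone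
        intro hcontra
        rw [hS₁] at ha
        have := Finset.mem_inter.mp ha
        have : a ∈ S₂ := hcontra ▸ this.1
        rw [hS₂def] at this
        exact (Finset.mem_sdiff.mp this).2 (Finset.mem_inter.mp ha).2
      have hcard2 : S₂.card ≤ n := by
        have : S₂.card < S.card := Finset.card_lt_card (ssubset_of_subset_of_ne hsub hne)
        omega
      have h1 : (∑ f ∈ A i ∩ Es A S, W f) ≤ ∑ f ∈ A i ∩ Es A S₂, W f :=
        Finset.sum_le_sum_of_subset_of_nonneg
          (Finset.inter_subset_inter (Finset.Subset.refl (A i)) (Es_anti A hsub))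
          (fun f _ _ => hW f)
      have h2 : (∑ f ∈ A i ∩ Es A S₂, W f) ≤ p * ∑ f ∈ Es A S₂, W f :=
        hstar i S₂ Finset.sdiff_disjoint
      have hcover : Es A S₂ ⊆ Es A S ∪ S₁.biUnion (fun j => A j ∩ Es A S₂) := by
        intro f hf
        by_cases hbad : ∃ j ∈ S, f ∈ A j
        · obtain ⟨j, hjS, hjA⟩ := hbad
          have hjS₁ : j ∈ S₁ := by
            rw [hS₁, Finset.mem_inter]
            refine ⟨hjS, ?_⟩
            by_contra hjn
            have : j ∈ S₂ := Finset.mem_sdiff.mpr ⟨hjS, hjn⟩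
            simp only [Es, Finset.mem_filter] at hf
            exact hf.2 j this hjA
          exact Finset.mem_union_right _ (Finset.mem_biUnion.mpr
            ⟨j, hjS₁, Finset.mem_inter.mpr ⟨hjA, hf⟩⟩)
        · push_neg at hbad
          refine Finset.mem_union_left _ ?_
          simp only [Es, Finset.mem_filter, Finset.mem_univ, true_and]
          exact hbad
      have h3 : (∑ f ∈ Es A S₂, W f)
          ≤ (∑ f ∈ Es A S, W f) + ∑ j ∈ S₁, ∑ f ∈ A j ∩ Es A S₂, W f := by
        calc (∑ f ∈ Es A S₂, W f)
            ≤ ∑ f ∈ Es A S ∪ S₁.biUnion (fun j => A j ∩ Es A S₂), W f :=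
              Finset.sum_le_sum_of_subset_of_nonneg hcover (fun f _ _ => hW f)
          _ ≤ (∑ f ∈ Es A S, W f) + ∑ f ∈ S₁.biUnion (fun j => A j ∩ Es A S₂), W f :=
              sum_union_le hW _ _
          _ ≤ _ := by
              have := sum_biUnion_le hW S₁ (fun j => A j ∩ Es A S₂)
              linarith
      have h4 : (∑ j ∈ S₁, ∑ f ∈ A j ∩ Es A S₂, W f)
          ≤ (S₁.card : ℝ) * (2 * p * ∑ f ∈ Es A S₂, W f) := by
        calc (∑ j ∈ S₁, ∑ f ∈ A j ∩ Es A S₂, W f)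
            ≤ ∑ _j ∈ S₁, (2 * p * ∑ f ∈ Es A S₂, W f) :=
              Finset.sum_le_sum fun j _ => ih S₂ hcard2 j
          _ = (S₁.card : ℝ) * (2 * p * ∑ f ∈ Es A S₂, W f) := by
              rw [Finset.sum_const, nsmul_eq_mul]
      have hcardS₁ : (S₁.card : ℝ) ≤ D := by
        have : S₁.card ≤ (N i).card :=
          Finset.card_le_card (by rw [hS₁]; exact Finset.inter_subset_right)
        exact le_trans (Nat.cast_le.mpr this) (hN i)
      have h5 : (∑ f ∈ Es A S₂, W f) ≤ 2 * ∑ f ∈ Es A S, W f := by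
        have hA : (S₁.card : ℝ) * (2 * p * ∑ f ∈ Es A S₂, W f)
            ≤ (1/2) * ∑ f ∈ Es A S₂, W f := by
          have h6 : (S₁.card : ℝ) * (2 * p) ≤ 2 * p * D := by nlinarith
          nlinarith
        linarith
      nlinarith

theorem lll (W : Ω → ℝ) (hW : ∀ f, 0 ≤ W f)
    (A : ι → Finset Ω) (N : ι → Finset ι) (p D : ℝ)
    (hp0 : 0 ≤ p)
    (hN : ∀ i, ((N i).card : ℝ) ≤ D)
    (hpD : 2 * p * D ≤ 1 / 2)
    (hD0 : 0 ≤ D)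
    (hp1 : 2 * p < 1)
    (hstar : ∀ i, ∀ S : Finset ι, Disjoint S (N i) →
      (∑ f ∈ A i ∩ Es A S, W f) ≤ p * ∑ f ∈ Es A S, W f)
    (htot : 0 < ∑ f : Ω, W f) :
    ∃ f : Ω, ∀ i : ι, f ∉ A i := by
  have hlow : ∀ S : Finset ι, (1 - 2*p) ^ S.card * (∑ f : Ω, W f) ≤ ∑ f ∈ Es A S, W f := by
    intro S
    induction S using Finset.induction_on with
    | empty => simp [Es]
    | @insert i S' hj ih =>
      have hsplit : (∑ f ∈ Es A S', W f)
          = (∑ f ∈ Es A (insert i S'), W f) + ∑ f ∈ A i ∩ Es A S', W f := by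
        rw [← Finset.sum_filter_add_sum_filter_not (Es A S') (· ∈ A i)]
        rw [add_comm]
        congr 1
        · congr 1
          ext f
          simp only [Es, Finset.mem_filter, Finset.mem_univ, true_and, Finset.mem_insert]
          constructor
          · rintro ⟨hf, hfn⟩ j hj
            rcases hj with rfl | hj
            · exact hfn
            · exact hf j hj
          · intro hf
            exact ⟨fun j hj => hf j (Or.inr hj), hf i (Or.inl rfl)⟩
        · congr 1
          ext f
          simp only [Finset.mem_filter, Finset.mem_inter]
          tauto
      have hind := lll_ind W hW A N p D hp0 hN hpD hD0 hstar S'.card S' le_rfl i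
      have hcard : (insert i S').card = S'.card + 1 := Finset.card_insert_of_notMem hj
      rw [hcard, pow_succ]
      have h12p : 0 ≤ 1 - 2 * p := by linarith
      have hEs' : 0 ≤ ∑ f ∈ Es A S', W f := Finset.sum_nonneg fun f _ => hW f
      nlinarith
  have hfin := hlow Finset.univ
  have hpos : 0 < ∑ f ∈ Es A Finset.univ, W f := by
    have h12p : 0 < (1 - 2*p) ^ (Finset.univ : Finset ι).card := pow_pos (by linarith) _
    nlinarith
  have hne : (Es A Finset.univ).Nonempty := by
    by_contra h
    rw [Finset.not_nonempty_iff_eq_empty] at h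
    rw [h] at hpos
    simp at hpos
  obtain ⟨f, hf⟩ := hne
  simp only [Es, Finset.mem_filter, Finset.mem_univ, true_and] at hf
  exact ⟨f, fun i => hf i trivial⟩

end LLLY

namespace LLLN

lemma core1 : (0.72055:ℝ)^(5000:ℕ) * 2^(871:ℕ) ≤ 0.31^(871:ℕ) := by
  rw [show (5000:ℕ) = 200 * 25 from rfl, pow_mul, show (871:ℕ) = 67 * 13 from rfl, pow_mul, pow_mul]
  norm_num

lemma core2 : (1.70875:ℝ)^(5000:ℕ) * 2^(871:ℕ) ≤ 2.75^(3258:ℕ) := by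
  rw [show (5000:ℕ) = 200 * 25 from rfl, pow_mul, show (871:ℕ) = 67 * 13 from rfl, pow_mul,
    show (3258:ℕ) = 181 * 18 from rfl, pow_mul]
  norm_num

lemma rpow_pow (x y : ℝ) (hx : 0 < x) (n : ℕ) : (x ^ (y:ℝ)) ^ (n:ℕ) = x ^ (y * n) := by
  rw [← Real.rpow_natCast (x ^ (y:ℝ)) n, ← Real.rpow_mul hx.le]

lemma rpow_neg_nat (x : ℝ) (hx : 0 < x) (n : ℕ) : x ^ (-(n:ℝ)) = (x ^ n)⁻¹ := by
  rw [Real.rpow_neg hx.le, Real.rpow_natCast]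

lemma num1 : (0.31:ℝ) ^ (-(0.1742):ℝ) * 0.72055 ≤ (2:ℝ) ^ (-(0.1742):ℝ) := by
  have h31 : (0:ℝ) < 0.31 := by norm_num
  have h2 : (0:ℝ) < 2 := by norm_num
  refine le_of_pow_le_pow_left₀ (n := 5000) (by norm_num) (Real.rpow_nonneg h2.le _) ?_
  rw [mul_pow, rpow_pow _ _ h31, rpow_pow _ _ h2]
  have he : (-(0.1742):ℝ) * (5000:ℕ) = -((871:ℕ):ℝ) := by norm_num
  rw [he, rpow_neg_nat _ h31, rpow_neg_nat _ h2]
  have p1 : (0:ℝ) < 0.31^(871:ℕ) := by positivity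
  have p2 : (0:ℝ) < 2^(871:ℕ) := by positivity
  rw [inv_mul_le_iff₀ p1, ← div_eq_mul_inv, le_div_iff₀ p2]
  exact core1

lemma num2 : (2.75:ℝ) ^ (-(0.6516):ℝ) * 1.70875 ≤ (2:ℝ) ^ (-(0.1742):ℝ) := by
  have h31 : (0:ℝ) < 2.75 := by norm_num
  have h2 : (0:ℝ) < 2 := by norm_num
  refine le_of_pow_le_pow_left₀ (n := 5000) (by norm_num) (Real.rpow_nonneg h2.le _) ?_
  rw [mul_pow, rpow_pow _ _ h31, rpow_pow _ _ h2]
  have he : (-(0.6516):ℝ) * (5000:ℕ) = -((3258:ℕ):ℝ) := by norm_num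
  have he2 : (-(0.1742):ℝ) * (5000:ℕ) = -((871:ℕ):ℝ) := by norm_num
  rw [he, he2, rpow_neg_nat _ h31, rpow_neg_nat _ h2]
  have p1 : (0:ℝ) < 2.75^(3258:ℕ) := by positivity
  have p2 : (0:ℝ) < 2^(871:ℕ) := by positivity
  rw [inv_mul_le_iff₀ p1, ← div_eq_mul_inv, le_div_iff₀ p2]
  exact core2

end LLLN

namespace LLL10

variable {V : Type} [Fintype V] [DecidableEq V]

/-- bad event: too few marked variables in T -/
noncomputable def Elo (k : ℕ) (T : Finset V) : Finset (V → Bool) :=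
  Finset.univ.filter fun f => ((cnt T f : ℝ) < 0.1742 * (k:ℝ))

/-- bad event: too few unmarked variables in T -/
noncomputable def Ehi (k : ℕ) (T : Finset V) : Finset (V → Bool) :=
  Finset.univ.filter fun f => ((k:ℝ) - (cnt T f : ℝ) < 0.3484 * (k:ℝ))

noncomputable def Abad (k : ℕ) (T : Finset V) : Finset (V → Bool) := Elo k T ∪ Ehi k T

lemma detBy_Abad (k : ℕ) (T : Finset V) : detBy T (Abad k T) := by
  intro f g hfg
  have hc : cnt T f = cnt T g := by
    unfold cnt
    congr 1
    apply Finset.filter_congr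
    intro v hv
    rw [hfg v hv]
  simp only [Abad, Elo, Ehi, Finset.mem_union, Finset.mem_filter, Finset.mem_univ, true_and, hc]

lemma Pr_Elo_le (k : ℕ) (T : Finset V) (hT : T.card = k) :
    Pr 0.405 (Elo k T) ≤ ((2:ℝ) ^ (-(0.1742):ℝ)) ^ k := by
  have hq0 : (0:ℝ) ≤ 0.405 := by norm_num
  have hq1 : (0.405:ℝ) ≤ 1 := by norm_num
  have hE : ∀ f ∈ Elo k T, (1:ℝ) ≤ (0.31:ℝ) ^ (((cnt T f : ℝ)) - 0.1742*(k:ℝ)) := by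
    intro f hf
    simp only [Elo, Finset.mem_filter, Finset.mem_univ, true_and] at hf
    have h0 : ((cnt T f : ℝ) - 0.1742*(k:ℝ)) ≤ 0 := by linarith
    calc (1:ℝ) = (0.31:ℝ) ^ (0:ℝ) := (Real.rpow_zero _).symm
      _ ≤ _ := Real.rpow_le_rpow_of_exponent_ge (by norm_num) (by norm_num) h0
  have h := Pr_mgf (q := 0.405) (t := 0.31) (b := 0.1742*(k:ℝ)) hq0 hq1 (by norm_num)
    T (Elo k T) hE
  rw [hT] at h
  calc Pr 0.405 (Elo k T)
      ≤ (0.31:ℝ) ^ (-(0.1742*(k:ℝ))) * (0.405 * 0.31 + (1 - 0.405)) ^ k := h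
    _ = ((0.31:ℝ) ^ (-(0.1742):ℝ) * 0.72055) ^ k := by
        rw [show -(0.1742*(k:ℝ)) = (-(0.1742):ℝ) * (k:ℕ) by push_cast; ring,
          ← LLLN.rpow_pow _ _ (by norm_num : (0:ℝ) < 0.31),
          show (0.405 * 0.31 + (1 - 0.405) : ℝ) = 0.72055 by norm_num, mul_pow]
    _ ≤ ((2:ℝ) ^ (-(0.1742):ℝ)) ^ k := by
        apply pow_le_pow_left₀ (by positivity) LLLN.num1

lemma Pr_Ehi_le (k : ℕ) (T : Finset V) (hT : T.card = k) :
    Pr 0.405 (Ehi k T) ≤ ((2:ℝ) ^ (-(0.1742):ℝ)) ^ k := by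
  have hq0 : (0:ℝ) ≤ 0.405 := by norm_num
  have hq1 : (0.405:ℝ) ≤ 1 := by norm_num
  have hE : ∀ f ∈ Ehi k T, (1:ℝ) ≤ (2.75:ℝ) ^ (((cnt T f : ℝ)) - 0.6516*(k:ℝ)) := by
    intro f hf
    simp only [Ehi, Finset.mem_filter, Finset.mem_univ, true_and] at hf
    have h0 : (0:ℝ) ≤ ((cnt T f : ℝ) - 0.6516*(k:ℝ)) := by linarith
    calc (1:ℝ) = (2.75:ℝ) ^ (0:ℝ) := (Real.rpow_zero _).symm
      _ ≤ _ := Real.rpow_le_rpow_of_exponent_le (by norm_num) h0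
  have h := Pr_mgf (q := 0.405) (t := 2.75) (b := 0.6516*(k:ℝ)) hq0 hq1 (by norm_num)
    T (Ehi k T) hE
  rw [hT] at h
  calc Pr 0.405 (Ehi k T)
      ≤ (2.75:ℝ) ^ (-(0.6516*(k:ℝ))) * (0.405 * 2.75 + (1 - 0.405)) ^ k := h
    _ = ((2.75:ℝ) ^ (-(0.6516):ℝ) * 1.70875) ^ k := by
        rw [show -(0.6516*(k:ℝ)) = (-(0.6516):ℝ) * (k:ℕ) by push_cast; ring,
          ← LLLN.rpow_pow _ _ (by norm_num : (0:ℝ) < 2.75),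
          show (0.405 * 2.75 + (1 - 0.405) : ℝ) = 1.70875 by norm_num, mul_pow]
    _ ≤ ((2:ℝ) ^ (-(0.1742):ℝ)) ^ k := by
        apply pow_le_pow_left₀ (by positivity) LLLN.num2

lemma Pr_Ab_le (k : ℕ) (T : Finset V) (hT : T.card = k) :
    Pr 0.405 (Abad k T) ≤ 2 * ((2:ℝ) ^ (-(0.1742):ℝ)) ^ k := by
  have := Pr_union_le (by norm_num : (0:ℝ) ≤ 0.405) (by norm_num) (Elo k T) (Ehi k T)
  have h1 := Pr_Elo_le k T hT
  have h2 := Pr_Ehi_le k T hT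
  unfold Abad
  linarith

end LLL10


open LLL10 LLLN in
/-- **Existence of a good marking in the regime `Δ ≲ 2^{0.1742·k}/k²`.**
There is an absolute constant `c > 0` such that for every integer `k ≥ 2` the following holds.
`𝒞` is a family of constraints (indexed by `ι`) on a finite variable set `V`, each with
variable set of size exactly `k`, and each sharing a variable with at most `Δ` constraints in
total (including itself).  If `Δ ≤ c·2^{0.1742·k}/k²`, then there is a subset `V₁ ⊆ V` such
that every constraint `C` satisfies `|V₁ ∩ vbl(C)| ≥ 0.1742·k` and
`|vbl(C) \ V₁| ≥ 0.3484·k`. -/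
theorem stmt_10 :
    ∃ c : ℝ, 0 < c ∧
      ∀ k : ℕ, 2 ≤ k →
      ∀ (V : Type) [Fintype V] [DecidableEq V] (ι : Type) [Fintype ι]
        (vbl : ι → Finset V) (Δ : ℕ),
        (∀ C, (vbl C).card = k) →
        (∀ C : ι, ((univ : Finset ι).filter fun C' => (vbl C ∩ vbl C').Nonempty).card ≤ Δ) →
        (Δ : ℝ) ≤ c * (2 : ℝ) ^ (0.1742 * (k : ℝ)) / (k : ℝ) ^ 2 →
        ∃ V₁ : Finset V, ∀ C : ι,
          0.1742 * (k : ℝ) ≤ ((V₁ ∩ vbl C).card : ℝ) ∧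
          0.3484 * (k : ℝ) ≤ (((vbl C) \ V₁).card : ℝ) := by

  classical
  refine ⟨1/8, by norm_num, ?_⟩
  intro k hk V _ _ ι _ vbl Δ hcard hdeg hΔ
  rcases isEmpty_or_nonempty ι with hι | hι
  · exact ⟨∅, fun C => (hι.false C).elim⟩
  obtain ⟨C₀⟩ := hι
  -- Δ ≥ 1
  have hΔ1 : 1 ≤ Δ := by
    have h0 : (vbl C₀).Nonempty := Finset.card_pos.mp (by rw [hcard C₀]; omega)
    have hmem : C₀ ∈ (univ : Finset ι).filter (fun C' => (vbl C₀ ∩ vbl C').Nonempty) := by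
      simp only [Finset.mem_filter, Finset.mem_univ, true_and, Finset.inter_self]
      exact h0
    have h1 := hdeg C₀
    have h2 : 0 < ((univ : Finset ι).filter fun C' => (vbl C₀ ∩ vbl C').Nonempty).card :=
      Finset.card_pos.mpr ⟨C₀, hmem⟩
    omega
  have hq0 : (0:ℝ) ≤ 0.405 := by norm_num
  have hq1 : (0.405:ℝ) ≤ 1 := by norm_num
  -- numerics
  have hXpos : (0:ℝ) < (2:ℝ) ^ (0.1742 * (k:ℝ)) := Real.rpow_pos_of_pos (by norm_num) _
  set X : ℝ := (2:ℝ) ^ (0.1742 * (k:ℝ)) with hX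
  set p : ℝ := 2 * ((2:ℝ) ^ (-(0.1742):ℝ)) ^ k with hp
  have hβk : ((2:ℝ) ^ (-(0.1742):ℝ)) ^ k = X⁻¹ := by
    rw [rpow_pow _ _ (by norm_num : (0:ℝ) < 2),
      show (-(0.1742):ℝ) * (k:ℕ) = -(0.1742*(k:ℝ)) by push_cast; ring,
      Real.rpow_neg (by norm_num : (0:ℝ) ≤ 2), hX]
  have hpX : p = 2 * X⁻¹ := by rw [hp, hβk]
  have hk2 : (2:ℝ) ≤ (k:ℝ) := by exact_mod_cast hk
  have hk2sq : (4:ℝ) ≤ (k:ℝ)^2 := by nlinarith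
  have hΔr : (1:ℝ) ≤ (Δ:ℝ) := by exact_mod_cast hΔ1
  have hΔ' : (Δ:ℝ) * (k:ℝ)^2 ≤ 1/8 * X :=
    (le_div_iff₀ (show (0:ℝ) < (k:ℝ)^2 by positivity)).mp hΔ
  have hΔX : 8 * (k:ℝ)^2 * (Δ:ℝ) ≤ X := by linarith
  have hΔX' : 8 * (Δ:ℝ) ≤ X := by nlinarith
  have hX32 : (32:ℝ) ≤ X := by nlinarith
  have hXinv : (0:ℝ) < X⁻¹ := inv_pos.mpr hXpos
  have hp0 : 0 ≤ p := by rw [hpX]; positivity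
  have hpD : 2 * p * (Δ:ℝ) ≤ 1/2 := by
    rw [hpX, show (2:ℝ) * (2 * X⁻¹) * (Δ:ℝ) = (4*(Δ:ℝ)) / X by rw [div_eq_mul_inv]; ring,
      div_le_iff₀ hXpos]
    linarith
  have hp1 : 2 * p < 1 := by
    rw [hpX, show (2:ℝ) * (2 * X⁻¹) = 4 / X by rw [div_eq_mul_inv]; ring,
      div_lt_one hXpos]
    linarith
  -- the degree bound
  have hN : ∀ i : ι,
      (((univ : Finset ι).filter fun C' => (vbl i ∩ vbl C').Nonempty).card : ℝ) ≤ (Δ:ℝ) := by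
    intro i
    exact_mod_cast hdeg i
  -- per-event probability bound
  have hPrA : ∀ C : ι, Pr 0.405 (Abad k (vbl C)) ≤ p := by
    intro C
    rw [hp]
    exact Pr_Ab_le k (vbl C) (hcard C)
  -- conditional independence hypothesis
  have hstar : ∀ i : ι, ∀ S : Finset ι,
      Disjoint S ((univ : Finset ι).filter fun C' => (vbl i ∩ vbl C').Nonempty) →
      (∑ f ∈ (Abad k (vbl i)) ∩ LLLY.Es (fun C => Abad k (vbl C)) S, w 0.405 f)
        ≤ p * ∑ f ∈ LLLY.Es (fun C => Abad k (vbl C)) S, w 0.405 f := by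
    intro i S hdis
    have hdetF : detBy (vbl i)ᶜ (LLLY.Es (fun C => Abad k (vbl C)) S) := by
      intro f g hfg
      simp only [LLLY.Es, Finset.mem_filter, Finset.mem_univ, true_and]
      have hiff : ∀ j ∈ S, (f ∈ Abad k (vbl j) ↔ g ∈ Abad k (vbl j)) := by
        intro j hj
        apply detBy_Abad
        intro v hv
        apply hfg
        rw [Finset.mem_compl]
        intro hvi
        have hjN : j ∉ (univ : Finset ι).filter fun C' => (vbl i ∩ vbl C').Nonempty :=
          Finset.disjoint_left.mp hdis hj
        simp only [Finset.mem_filter, Finset.mem_univ, true_and] at hjN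
        exact hjN ⟨v, Finset.mem_inter.mpr ⟨hvi, hv⟩⟩
      constructor
      · intro hf j hj
        exact fun hg => hf j hj ((hiff j hj).mpr hg)
      · intro hg j hj
        exact fun hf => hg j hj ((hiff j hj).mp hf)
    have hind := Pr_inter_indep 0.405 (vbl i) (Abad k (vbl i))
      (LLLY.Es (fun C => Abad k (vbl C)) S) (detBy_Abad k (vbl i)) hdetF
    have hEs0 : 0 ≤ Pr 0.405 (LLLY.Es (fun C => Abad k (vbl C)) S) := Pr_nonneg hq0 hq1 _
    have : Pr 0.405 (Abad k (vbl i) ∩ LLLY.Es (fun C => Abad k (vbl C)) S)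
        ≤ p * Pr 0.405 (LLLY.Es (fun C => Abad k (vbl C)) S) := by
      rw [hind]
      exact mul_le_mul_of_nonneg_right (hPrA i) hEs0
    exact this
  have htot : (0:ℝ) < ∑ f : V → Bool, w 0.405 f := by rw [sum_w]; norm_num
  obtain ⟨f, hf⟩ := LLLY.lll (w 0.405) (w_nonneg hq0 hq1) (fun C => Abad k (vbl C))
    (fun C => (univ : Finset ι).filter fun C' => (vbl C ∩ vbl C').Nonempty)
    p (Δ:ℝ) hp0 hN hpD (by positivity) hp1 hstar htot
  -- extract the marking
  refine ⟨univ.filter (fun v => f v = true), fun C => ?_⟩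
  have hfC := hf C
  simp only [Abad, Elo, Ehi, Finset.mem_union, Finset.mem_filter, Finset.mem_univ, true_and,
    not_or, not_lt] at hfC
  obtain ⟨hlo, hhi⟩ := hfC
  have h1 : univ.filter (fun v => f v = true) ∩ vbl C = (vbl C).filter (fun v => f v = true) := by
    ext v
    simp only [Finset.mem_inter, Finset.mem_filter, Finset.mem_univ, true_and]
    tauto
  have h2 : vbl C \ univ.filter (fun v => f v = true)
      = (vbl C).filter (fun v => ¬ (f v = true)) := by
    ext v
    simp only [Finset.mem_sdiff, Finset.mem_filter, Finset.mem_univ, true_and]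
  have hsum : ((vbl C).filter (fun v => f v = true)).card
      + ((vbl C).filter (fun v => ¬ (f v = true))).card = k := by
    rw [Finset.card_filter_add_card_filter_not, hcard C]
  constructor
  · rw [h1]
    exact hlo
  · rw [h2]
    have : (((vbl C).filter (fun v => ¬ (f v = true))).card : ℝ)
        = (k:ℝ) - (cnt (vbl C) f : ℝ) := by
      unfold cnt
      have := hsum
      push_cast [← this]
      ring
    rw [this]
    exact hhi
end
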